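/- arXiv:2512.14966 — 6 statements merged into one kernel-verified Lean document; each statement's English description precedes it below -/
import Mathlib

section
/- Fix d ∈ ℕ with d ≥ 1 and ε > 0. Let Q = {a^(2j−1) : j ≥ 1} ⊆ ℕ, where a = ⌈32/ε + 2⌉. Then for all m_1 < m_2 < … < m_d < k with m_1,…,m_d,k ∈ Q and every step preserving map F : S⁺_{ℓ∞^k} → S⁺_{ℓ1^k} with ω_F(1/d) ≤ ε/8, one has ‖F(z(m̄)) − (1/k)·∑_{i=1}^k e_i‖_1 ≤ ε, where (e_i)_{i=1}^k is the standard basis of ℓ1^k. -/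
/-- The sup norm (`ℓ∞` norm) on `ℝ^k`. -/
noncomputable def supNorm {k : ℕ} (x : Fin k → ℝ) : ℝ := ⨆ i, |x i|

/-- The `ℓ1` norm on `ℝ^k`. -/
noncomputable def l1Norm {k : ℕ} (x : Fin k → ℝ) : ℝ := ∑ i, |x i|

/-- The vector `z(m̄) = ∑_{s=1}^d (1 - (s-1)/d)·1_{(m_{s-1}, m_s]}` in `ℝ^k`, where
coordinate `i : Fin k` corresponds to the index `i+1 ∈ {1,…,k}`. -/
noncomputable def zVec (d k : ℕ) (m : ℕ → ℕ) : Fin k → ℝ :=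
  fun i => ∑ s ∈ Finset.Icc 1 d, (1 - ((s : ℝ) - 1) / (d : ℝ)) *
    (if m (s - 1) ≤ (i : ℕ) ∧ (i : ℕ) < m s then 1 else 0)

/-- The positive part of the unit sphere of `ℓ∞^k`. -/
def SplusInf (k : ℕ) : Set (Fin k → ℝ) := {x | supNorm x = 1 ∧ ∀ i, 0 ≤ x i}

/-- The positive part of the unit sphere of `ℓ1^k`. -/
def SplusL1 (k : ℕ) : Set (Fin k → ℝ) := {x | l1Norm x = 1 ∧ ∀ i, 0 ≤ x i}

namespace Stmt2

def Mf (d k : ℕ) (m : ℕ → ℕ) (s : ℕ) : ℕ := if s ≤ d then m s else k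

def sig (d : ℕ) (m : ℕ → ℕ) (i : ℕ) : ℕ :=
  ((Finset.Icc 1 d).filter (fun s => m s ≤ i)).card + 1

noncomputable def vv (d t : ℕ) : ℝ := 1 - ((t : ℝ) - 1) / (d : ℝ)

def rOdd (t : ℕ) : ℕ := 2 * ((t - 1) / 2) + 1

def rEven (t : ℕ) : ℕ := if t ≤ 1 then 1 else 2 * (t / 2)

theorem rOdd_one : rOdd 1 = 1 := rfl

theorem rEven_one : rEven 1 = 1 := rfl

theorem rOdd_bounds (t : ℕ) (ht : 1 ≤ t) : 1 ≤ rOdd t ∧ rOdd t ≤ t ∧ t ≤ rOdd t + 1 := by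
  unfold rOdd; omega

theorem rEven_bounds (t : ℕ) (ht : 1 ≤ t) : 1 ≤ rEven t ∧ rEven t ≤ t ∧ t ≤ rEven t + 1 := by
  unfold rEven
  by_cases h : t ≤ 1
  · rw [if_pos h]; omega
  · rw [if_neg h]; omega

theorem rOdd_pair (s : ℕ) (h : s % 2 = 1) : rOdd s = s ∧ rOdd (s + 1) = s := by
  unfold rOdd; omega

theorem rEven_pair (s : ℕ) (h2 : 2 ≤ s) (h : s % 2 = 0) : rEven s = s ∧ rEven (s + 1) = s := by
  unfold rEven
  rw [if_neg (by omega), if_neg (by omega)]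
  omega

theorem mle {d : ℕ} {m : ℕ → ℕ} (hlt : ∀ s t, s < t → t ≤ d → m s < m t)
    {s t : ℕ} (hst : s ≤ t) (htd : t ≤ d) : m s ≤ m t := by
  rcases Nat.eq_or_lt_of_le hst with rfl | h
  · exact le_rfl
  · exact (hlt s t h htd).le

theorem sig_eq {d k : ℕ} {m : ℕ → ℕ} (hlt : ∀ s t, s < t → t ≤ d → m s < m t)
    {s : ℕ} (h1 : 1 ≤ s) (h2 : s ≤ d + 1) {i : ℕ}
    (hl : Mf d k m (s - 1) ≤ i) (hu : i < Mf d k m s) : sig d m i = s := by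
  have hfil : (Finset.Icc 1 d).filter (fun t => m t ≤ i) = Finset.Icc 1 (s - 1) := by
    ext t
    simp only [Finset.mem_filter, Finset.mem_Icc]
    constructor
    · rintro ⟨⟨ht1, htd⟩, hmt⟩
      refine ⟨ht1, ?_⟩
      by_contra hc
      push_neg at hc
      have hst : s ≤ t := by omega
      have hsd : s ≤ d := le_trans hst htd
      have hMs : Mf d k m s = m s := if_pos hsd
      have hms : m s ≤ m t := mle hlt hst htd
      omega
    · rintro ⟨ht1, hts⟩
      have htd : t ≤ d := by omega
      have hMl : Mf d k m (s - 1) = m (s - 1) := if_pos (by omega)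
      have hmm : m t ≤ m (s - 1) := mle hlt hts (by omega)
      exact ⟨⟨ht1, htd⟩, by omega⟩
  unfold sig
  rw [hfil, Nat.card_Icc]
  omega

theorem sig_spec {d k : ℕ} {m : ℕ → ℕ} (hm0 : m 0 = 0)
    (hlt : ∀ s t, s < t → t ≤ d → m s < m t) {i : ℕ} (hik : i < k) :
    1 ≤ sig d m i ∧ sig d m i ≤ d + 1 ∧
      Mf d k m (sig d m i - 1) ≤ i ∧ i < Mf d k m (sig d m i) := by
  classical
  set S := (Finset.Icc 1 d).filter (fun s => m s ≤ i) with hS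
  have hSsub : S ⊆ Finset.Icc 1 d := Finset.filter_subset _ _
  have hcd : S.card ≤ d := by
    have := Finset.card_le_card hSsub
    simpa [Nat.card_Icc] using this
  have hsig : sig d m i = S.card + 1 := rfl
  have hup : i < Mf d k m (S.card + 1) := by
    by_cases h : S.card + 1 ≤ d
    · have hnot : ¬ m (S.card + 1) ≤ i := by
        intro hmc
        have hsub : Finset.Icc 1 (S.card + 1) ⊆ S := by
          intro t ht
          rw [Finset.mem_Icc] at ht
          rw [hS, Finset.mem_filter, Finset.mem_Icc]
          exact ⟨⟨ht.1, by omega⟩, le_trans (mle hlt ht.2 h) hmc⟩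
        have hcard := Finset.card_le_card hsub
        rw [Nat.card_Icc] at hcard
        omega
      simp only [Mf]
      rw [if_pos h]
      omega
    · simp only [Mf]
      rw [if_neg h]
      exact hik
  have hlow : Mf d k m S.card ≤ i := by
    rcases Nat.eq_zero_or_pos S.card with h0 | hpos
    · simp only [Mf, h0]
      rw [if_pos (Nat.zero_le d)]
      omega
    · have hne : S.Nonempty := Finset.card_pos.mp hpos
      set t := S.max' hne with ht
      have htS : t ∈ S := S.max'_mem hne
      have htIcc := hSsub htS
      rw [Finset.mem_Icc] at htIcc
      have hmt : m t ≤ i := by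
        have h := htS
        rw [hS, Finset.mem_filter] at h
        exact h.2
      have hsub1 : Finset.Icc 1 t ⊆ S := by
        intro u hu
        rw [Finset.mem_Icc] at hu
        rw [hS, Finset.mem_filter, Finset.mem_Icc]
        exact ⟨⟨hu.1, le_trans hu.2 htIcc.2⟩, le_trans (mle hlt hu.2 htIcc.2) hmt⟩
      have hsub2 : S ⊆ Finset.Icc 1 t := by
        intro u hu
        have hu' := hSsub hu
        rw [Finset.mem_Icc] at hu' ⊢
        exact ⟨hu'.1, S.le_max' u hu⟩
      have hScard : S.card = t := by
        have hEq := le_antisymm hsub2 hsub1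
        rw [hEq, Nat.card_Icc]
        omega
      simp only [Mf]
      rw [if_pos (by omega : S.card ≤ d), hScard]
      exact hmt
  refine ⟨by omega, by omega, ?_, ?_⟩
  · rw [hsig]
    simpa using hlow
  · rw [hsig]
    exact hup

theorem count_lemma {d k : ℕ} {m : ℕ → ℕ} (hm0 : m 0 = 0)
    (hlt : ∀ s t, s < t → t ≤ d → m s < m t) (hdk : m d < k) (g : ℕ → ℝ) :
    ∑ i : Fin k, g (sig d m i.val)
      = ∑ s ∈ Finset.Icc 1 (d + 1), ((Mf d k m s - Mf d k m (s - 1) : ℕ) : ℝ) * g s := by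
  classical
  have hMk : ∀ s, Mf d k m s ≤ k := by
    intro s
    by_cases h : s ≤ d
    · simp only [Mf]
      rw [if_pos h]
      exact le_of_lt (lt_of_le_of_lt (mle hlt h le_rfl) hdk)
    · simp only [Mf]
      rw [if_neg h]
  have hmaps : ∀ i ∈ (Finset.univ : Finset (Fin k)), sig d m i.val ∈ Finset.Icc 1 (d + 1) := by
    intro i _
    have h := sig_spec (k := k) hm0 hlt i.isLt
    rw [Finset.mem_Icc]
    exact ⟨h.1, h.2.1⟩
  rw [← Finset.sum_fiberwise_of_maps_to hmaps (fun i : Fin k => g (sig d m i.val))]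
  refine Finset.sum_congr rfl ?_
  intro s hs
  rw [Finset.mem_Icc] at hs
  have hconst : ∀ i ∈ Finset.univ.filter (fun i : Fin k => sig d m i.val = s),
      g (sig d m i.val) = g s := by
    intro i hi
    rw [Finset.mem_filter] at hi
    rw [hi.2]
  rw [Finset.sum_congr rfl hconst, Finset.sum_const, nsmul_eq_mul]
  congr 1
  have h1 : (Finset.univ.filter fun i : Fin k => sig d m i.val = s).card
      = ((Finset.range k).filter fun i => sig d m i = s).card := by
    rw [Finset.card_filter, Finset.card_filter]
    exact Fin.sum_univ_eq_sum_range (fun i => if sig d m i = s then 1 else 0) k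
  have h2 : ((Finset.range k).filter fun i => sig d m i = s)
      = Finset.Ico (Mf d k m (s - 1)) (Mf d k m s) := by
    ext i
    simp only [Finset.mem_filter, Finset.mem_range, Finset.mem_Ico]
    constructor
    · rintro ⟨hik, rfl⟩
      have h := sig_spec (k := k) hm0 hlt hik
      exact ⟨h.2.2.1, h.2.2.2⟩
    · rintro ⟨hl, hu⟩
      have hik : i < k := lt_of_lt_of_le hu (hMk s)
      exact ⟨hik, sig_eq hlt hs.1 hs.2 hl hu⟩
  rw [h1, h2, Nat.card_Ico]

theorem supNorm_le' {k : ℕ} (hk : 0 < k) (x : Fin k → ℝ) {B : ℝ}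
    (h : ∀ i, |x i| ≤ B) : supNorm x ≤ B := by
  have : Nonempty (Fin k) := ⟨⟨0, hk⟩⟩
  exact ciSup_le h

theorem supNorm_eq_one {k : ℕ} (hk : 0 < k) (x : Fin k → ℝ)
    (h0 : ∀ i, 0 ≤ x i) (h1 : ∀ i, x i ≤ 1) (hx : x ⟨0, hk⟩ = 1) : supNorm x = 1 := by
  have hne : Nonempty (Fin k) := ⟨⟨0, hk⟩⟩
  apply le_antisymm
  · exact ciSup_le fun i => abs_le.mpr ⟨by linarith [h0 i], h1 i⟩
  · have hb : BddAbove (Set.range fun i => |x i|) := Finite.bddAbove_range _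
    calc (1 : ℝ) = |x ⟨0, hk⟩| := by rw [hx]; simp
    _ ≤ supNorm x := le_ciSup hb _

end Stmt2

set_option maxHeartbeats 2000000 in
/-- concentration inequality for step preserving maps on the positive spheres
of `ℓ∞^k` and `ℓ1^k`, along the set `Q = {a^(2j-1) : j ≥ 1}` where `a = ⌈32/ε + 2⌉`. -/
theorem stmt_2 (d : ℕ) (hd : 1 ≤ d) (ε : ℝ) (hε : 0 < ε)
    (Q : Set ℕ) (hQ : Q = {n | ∃ j : ℕ, 1 ≤ j ∧ n = (⌈(32 / ε + 2 : ℝ)⌉₊) ^ (2 * j - 1)})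
    (m : ℕ → ℕ) (hm0 : m 0 = 0)
    (hmono : ∀ s, s < d → m s < m (s + 1))
    (hmQ : ∀ s, 1 ≤ s → s ≤ d → m s ∈ Q)
    (k : ℕ) (hkQ : k ∈ Q) (hkm : m d < k)
    (F : (Fin k → ℝ) → (Fin k → ℝ))
    (hFmaps : ∀ x ∈ SplusInf k, F x ∈ SplusL1 k)
    (hstep : ∀ x ∈ SplusInf k, ∀ i j, x i = x j → F x i = F x j)
    (homega : ∀ x ∈ SplusInf k, ∀ y ∈ SplusInf k,
      supNorm (x - y) ≤ 1 / (d : ℝ) → l1Norm (F x - F y) ≤ ε / 8) :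
    l1Norm (F (zVec d k m) - fun _ => 1 / (k : ℝ)) ≤ ε := by
  classical
  set a : ℕ := ⌈(32 / ε + 2 : ℝ)⌉₊ with ha_def
  have haR : (32 / ε + 2 : ℝ) ≤ (a : ℝ) := Nat.le_ceil _
  have h32ε : (0 : ℝ) < 32 / ε := by positivity
  have ha3 : 3 ≤ a := by
    have h2 : (2 : ℝ) < 32 / ε + 2 := by linarith
    have h2' : 2 < a := by
      rw [ha_def]
      exact Nat.lt_ceil.mpr (by exact_mod_cast h2)
    omega
  have hεa : (32 : ℝ) ≤ ε * a := by
    have h1 : (32 : ℝ) / ε ≤ a := by linarith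
    calc (32 : ℝ) = ε * (32 / ε) := by field_simp
    _ ≤ ε * a := mul_le_mul_of_nonneg_left h1 (le_of_lt hε)
  -- Q facts
  have hQpos : ∀ x ∈ Q, 0 < x := by
    intro x hx
    rw [hQ] at hx
    obtain ⟨j, hj, rfl⟩ := hx
    exact pow_pos (by omega) _
  have hQrat : ∀ x y, x ∈ Q → y ∈ Q → x < y → a ^ 2 * x ≤ y := by
    intro x y hx hy hxy
    rw [hQ] at hx hy
    obtain ⟨i, hi, rfl⟩ := hx
    obtain ⟨j, hj, rfl⟩ := hy
    have hij : 2 * i - 1 < 2 * j - 1 := by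
      by_contra hcon
      push_neg at hcon
      exact absurd (Nat.pow_le_pow_right (by omega) hcon) (not_le.mpr hxy)
    have hpe : a ^ 2 * a ^ (2 * i - 1) = a ^ (2 * i - 1 + 2) := by
      rw [pow_add, mul_comm]
    rw [hpe]
    exact Nat.pow_le_pow_right (by omega) (by omega)
  have hk0 : 0 < k := hQpos k hkQ
  have hk0' : (0 : ℝ) < k := by exact_mod_cast hk0
  have hd0 : (0 : ℝ) < d := by exact_mod_cast hd
  -- strict monotonicity of m
  have hlt : ∀ s t, s < t → t ≤ d → m s < m t := by
    intro s t
    induction t with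
    | zero => omega
    | succ t ih =>
      intro hst htd
      rcases Nat.lt_or_ge s t with h | h
      · exact lt_trans (ih h (by omega)) (hmono t (by omega))
      · have hseq : s = t := by omega
        subst hseq
        exact hmono s (by omega)
  -- M facts
  have hMk : ∀ s, Stmt2.Mf d k m s ≤ k := by
    intro s
    by_cases h : s ≤ d
    · simp only [Stmt2.Mf]
      rw [if_pos h]
      exact le_of_lt (lt_of_le_of_lt (Stmt2.mle hlt h le_rfl) hkm)
    · simp only [Stmt2.Mf]
      rw [if_neg h]
  have hMlt : ∀ s, s ≤ d → Stmt2.Mf d k m s < Stmt2.Mf d k m (s + 1) := by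
    intro s hs
    by_cases h : s + 1 ≤ d
    · simp only [Stmt2.Mf]
      rw [if_pos hs, if_pos h]
      exact hlt s (s + 1) (by omega) h
    · have hsd : s = d := by omega
      subst hsd
      simp only [Stmt2.Mf]
      rw [if_pos le_rfl, if_neg h]
      exact hkm
  have hMrat : ∀ s, 1 ≤ s → s ≤ d → a ^ 2 * Stmt2.Mf d k m s ≤ Stmt2.Mf d k m (s + 1) := by
    intro s h1 h2
    have hsQ : m s ∈ Q := hmQ s h1 h2
    by_cases h : s + 1 ≤ d
    · have hs1Q : m (s + 1) ∈ Q := hmQ (s + 1) (by omega) h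
      simp only [Stmt2.Mf]
      rw [if_pos h2, if_pos h]
      exact hQrat _ _ hsQ hs1Q (hlt s (s + 1) (by omega) h)
    · have hsd : s = d := by omega
      subst hsd
      simp only [Stmt2.Mf]
      rw [if_pos le_rfl, if_neg h]
      exact hQrat _ _ hsQ hkQ hkm
  -- block sizes
  have ha2pos : 0 < a ^ 2 := pow_pos (by omega) 2
  have ha2ge : 9 ≤ a ^ 2 := by
    calc 9 = 3 ^ 2 := rfl
    _ ≤ a ^ 2 := Nat.pow_le_pow_left ha3 2
  have hnrat : ∀ s, 1 ≤ s → s ≤ d →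
      (a ^ 2 - 1) * (Stmt2.Mf d k m s - Stmt2.Mf d k m (s - 1))
        ≤ Stmt2.Mf d k m (s + 1) - Stmt2.Mf d k m (s + 1 - 1) := by
    intro s h1 h2
    have hr := hMrat s h1 h2
    have hb : (a ^ 2 - 1) * (Stmt2.Mf d k m s - Stmt2.Mf d k m (s - 1))
        ≤ (a ^ 2 - 1) * Stmt2.Mf d k m s :=
      Nat.mul_le_mul_left _ (Nat.sub_le _ _)
    refine le_trans hb ?_
    have h3 : (a ^ 2 - 1) * Stmt2.Mf d k m s = a ^ 2 * Stmt2.Mf d k m s - Stmt2.Mf d k m s := by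
      rw [Nat.sub_mul, one_mul]
    rw [h3, Nat.add_sub_cancel]
    exact Nat.sub_le_sub_right hr _
  have hnmono : ∀ s, 1 ≤ s → s ≤ d →
      (Stmt2.Mf d k m s - Stmt2.Mf d k m (s - 1))
        ≤ Stmt2.Mf d k m (s + 1) - Stmt2.Mf d k m (s + 1 - 1) := by
    intro s h1 h2
    refine le_trans ?_ (hnrat s h1 h2)
    calc Stmt2.Mf d k m s - Stmt2.Mf d k m (s - 1)
        = 1 * (Stmt2.Mf d k m s - Stmt2.Mf d k m (s - 1)) := (one_mul _).symm
    _ ≤ (a ^ 2 - 1) * (Stmt2.Mf d k m s - Stmt2.Mf d k m (s - 1)) :=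
        Nat.mul_le_mul_right _ (by omega)
  -- sig basics
  have hsigb : ∀ i : Fin k, 1 ≤ Stmt2.sig d m i.val ∧ Stmt2.sig d m i.val ≤ d + 1 := by
    intro i
    have h := Stmt2.sig_spec (k := k) hm0 hlt i.isLt
    exact ⟨h.1, h.2.1⟩
  have hsig0 : Stmt2.sig d m 0 = 1 := by
    unfold Stmt2.sig
    rw [Finset.filter_false_of_mem, Finset.card_empty]
    intro s hs
    rw [Finset.mem_Icc] at hs
    have := hlt 0 s (by omega) hs.2
    omega
  -- v basics
  have hv1 : Stmt2.vv d 1 = 1 := by simp [Stmt2.vv]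
  have hv_nonneg : ∀ t, t ≤ d + 1 → 0 ≤ Stmt2.vv d t := by
    intro t ht
    have hc : (t : ℝ) ≤ (d : ℝ) + 1 := by exact_mod_cast ht
    have hdiv : ((t : ℝ) - 1) / d ≤ 1 := (div_le_one hd0).mpr (by linarith)
    simp only [Stmt2.vv]
    linarith
  have hv_le1 : ∀ t, 1 ≤ t → Stmt2.vv d t ≤ 1 := by
    intro t ht
    have hc : (1 : ℝ) ≤ (t : ℝ) := by exact_mod_cast ht
    have hdiv : 0 ≤ ((t : ℝ) - 1) / d := div_nonneg (by linarith) hd0.le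
    simp only [Stmt2.vv]
    linarith
  -- z equals v ∘ sig
  have hz_eq : ∀ i : Fin k, zVec d k m i = Stmt2.vv d (Stmt2.sig d m i.val) := by
    intro i
    have hspec := Stmt2.sig_spec (k := k) hm0 hlt i.isLt
    obtain ⟨h1, h2, h3, h4⟩ := hspec
    show (∑ s ∈ Finset.Icc 1 d, (1 - ((s : ℝ) - 1) / (d : ℝ)) *
      (if m (s - 1) ≤ (i : ℕ) ∧ (i : ℕ) < m s then 1 else 0)) = Stmt2.vv d (Stmt2.sig d m i.val)
    have hzero : ∀ s ∈ Finset.Icc 1 d, s ≠ Stmt2.sig d m i.val →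
        (1 - ((s : ℝ) - 1) / (d : ℝ)) *
          (if m (s - 1) ≤ (i : ℕ) ∧ (i : ℕ) < m s then 1 else 0) = 0 := by
      intro s hs hne
      rw [Finset.mem_Icc] at hs
      rw [if_neg, mul_zero]
      rintro ⟨hl, hu⟩
      have hl' : Stmt2.Mf d k m (s - 1) ≤ (i : ℕ) := by
        have : Stmt2.Mf d k m (s - 1) = m (s - 1) := if_pos (by omega)
        omega
      have hu' : (i : ℕ) < Stmt2.Mf d k m s := by
        have : Stmt2.Mf d k m s = m s := if_pos hs.2
        omega
      exact hne (Stmt2.sig_eq hlt hs.1 (by omega) hl' hu').symm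
    rcases Nat.lt_or_ge (Stmt2.sig d m i.val) (d + 1) with hcase | hcase
    · have hsd : Stmt2.sig d m i.val ≤ d := by omega
      rw [Finset.sum_eq_single_of_mem (Stmt2.sig d m i.val)
        (by rw [Finset.mem_Icc]; omega) hzero]
      have hl' : m (Stmt2.sig d m i.val - 1) ≤ (i : ℕ) := by
        have : Stmt2.Mf d k m (Stmt2.sig d m i.val - 1) = m (Stmt2.sig d m i.val - 1) :=
          if_pos (by omega)
        omega
      have hu' : (i : ℕ) < m (Stmt2.sig d m i.val) := by
        have : Stmt2.Mf d k m (Stmt2.sig d m i.val) = m (Stmt2.sig d m i.val) := if_pos hsd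
        omega
      rw [if_pos ⟨hl', hu'⟩, mul_one]
      rfl
    · have hsd : Stmt2.sig d m i.val = d + 1 := by omega
      have hall : ∀ s ∈ Finset.Icc 1 d, (1 - ((s : ℝ) - 1) / (d : ℝ)) *
          (if m (s - 1) ≤ (i : ℕ) ∧ (i : ℕ) < m s then 1 else 0) = 0 := by
        intro s hs
        have hs' := Finset.mem_Icc.mp hs
        exact hzero s hs (by omega)
      have hvz : Stmt2.vv d (d + 1) = 0 := by
        simp only [Stmt2.vv]
        push_cast
        field_simp
        ring
      rw [Finset.sum_eq_zero hall, hsd, hvz]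
  -- generic membership
  have hmem : ∀ ρ : ℕ → ℕ, ρ 1 = 1 → (∀ t, 1 ≤ t → 1 ≤ ρ t ∧ ρ t ≤ t) →
      (fun i : Fin k => Stmt2.vv d (ρ (Stmt2.sig d m i.val))) ∈ SplusInf k := by
    intro ρ hρ1 hρ
    have hb : ∀ i : Fin k,
        0 ≤ Stmt2.vv d (ρ (Stmt2.sig d m i.val)) ∧ Stmt2.vv d (ρ (Stmt2.sig d m i.val)) ≤ 1 := by
      intro i
      have hs := hsigb i
      have h := hρ _ hs.1
      exact ⟨hv_nonneg _ (by omega), hv_le1 _ (by omega)⟩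
    refine ⟨Stmt2.supNorm_eq_one hk0 _ (fun i => (hb i).1) (fun i => (hb i).2) ?_,
      fun i => (hb i).1⟩
    show Stmt2.vv d (ρ (Stmt2.sig d m ((⟨0, hk0⟩ : Fin k) : ℕ))) = 1
    rw [show ((⟨0, hk0⟩ : Fin k) : ℕ) = 0 from rfl, hsig0, hρ1, hv1]
  have hzfun : zVec d k m = fun i : Fin k => Stmt2.vv d (Stmt2.sig d m i.val) := funext hz_eq
  have hzmem : zVec d k m ∈ SplusInf k := by
    rw [hzfun]
    exact hmem (fun t => t) rfl (fun t ht => ⟨ht, le_rfl⟩)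
  -- generic closeness
  have hdiffsup : ∀ ρ : ℕ → ℕ, (∀ t, 1 ≤ t → ρ t ≤ t ∧ t ≤ ρ t + 1) →
      supNorm (zVec d k m - fun i : Fin k => Stmt2.vv d (ρ (Stmt2.sig d m i.val))) ≤ 1 / d := by
    intro ρ hρ
    apply Stmt2.supNorm_le' hk0
    intro i
    have hs := hsigb i
    have hbb := hρ _ hs.1
    rw [Pi.sub_apply, hz_eq i]
    have hcast1 : ((ρ (Stmt2.sig d m i.val)) : ℝ) ≤ ((Stmt2.sig d m i.val) : ℝ) := by
      exact_mod_cast hbb.1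
    have hcast2 : ((Stmt2.sig d m i.val) : ℝ) ≤ ((ρ (Stmt2.sig d m i.val)) : ℝ) + 1 := by
      exact_mod_cast hbb.2
    have hveq : Stmt2.vv d (ρ (Stmt2.sig d m i.val)) - Stmt2.vv d (Stmt2.sig d m i.val)
        = (((Stmt2.sig d m i.val) : ℝ) - ((ρ (Stmt2.sig d m i.val)) : ℝ)) / d := by
      simp only [Stmt2.vv]
      field_simp
      ring
    have h0 : 0 ≤ Stmt2.vv d (ρ (Stmt2.sig d m i.val)) - Stmt2.vv d (Stmt2.sig d m i.val) := by
      rw [hveq]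
      apply div_nonneg (by linarith) hd0.le
    have h1 : Stmt2.vv d (ρ (Stmt2.sig d m i.val)) - Stmt2.vv d (Stmt2.sig d m i.val) ≤ 1 / d := by
      rw [hveq]
      have hle1 : ((Stmt2.sig d m i.val) : ℝ) - ((ρ (Stmt2.sig d m i.val)) : ℝ) ≤ 1 := by
        linarith
      gcongr
    have habs : |Stmt2.vv d (Stmt2.sig d m i.val) - Stmt2.vv d (ρ (Stmt2.sig d m i.val))|
        = Stmt2.vv d (ρ (Stmt2.sig d m i.val)) - Stmt2.vv d (Stmt2.sig d m i.val) := by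
      rw [abs_sub_comm, abs_of_nonneg h0]
    rw [habs]
    exact h1
  -- the two comparison vectors
  set w1 : Fin k → ℝ := fun i => Stmt2.vv d (Stmt2.rOdd (Stmt2.sig d m i.val)) with hw1def
  set w2 : Fin k → ℝ := fun i => Stmt2.vv d (Stmt2.rEven (Stmt2.sig d m i.val)) with hw2def
  have hw1mem : w1 ∈ SplusInf k :=
    hmem Stmt2.rOdd Stmt2.rOdd_one
      (fun t ht => ⟨(Stmt2.rOdd_bounds t ht).1, (Stmt2.rOdd_bounds t ht).2.1⟩)
  have hw2mem : w2 ∈ SplusInf k :=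
    hmem Stmt2.rEven Stmt2.rEven_one
      (fun t ht => ⟨(Stmt2.rEven_bounds t ht).1, (Stmt2.rEven_bounds t ht).2.1⟩)
  have hcomp1 : l1Norm (F (zVec d k m) - F w1) ≤ ε / 8 :=
    homega _ hzmem w1 hw1mem
      (hdiffsup Stmt2.rOdd
        (fun t ht => ⟨(Stmt2.rOdd_bounds t ht).2.1, (Stmt2.rOdd_bounds t ht).2.2⟩))
  have hcomp2 : l1Norm (F (zVec d k m) - F w2) ≤ ε / 8 :=
    homega _ hzmem w2 hw2mem
      (hdiffsup Stmt2.rEven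
        (fun t ht => ⟨(Stmt2.rEven_bounds t ht).2.1, (Stmt2.rEven_bounds t ht).2.2⟩))
  -- representatives
  have hrepk : ∀ s, 1 ≤ s → s ≤ d + 1 → Stmt2.Mf d k m (s - 1) < k := by
    intro s h1 h2
    have h3 := hMlt (s - 1) (by omega)
    rw [show s - 1 + 1 = s by omega] at h3
    exact lt_of_lt_of_le h3 (hMk s)
  set rep : ℕ → Fin k := fun s => ⟨Stmt2.Mf d k m (s - 1) % k, Nat.mod_lt _ hk0⟩ with hrepdef
  have hrepval : ∀ s, 1 ≤ s → s ≤ d + 1 → ((rep s : Fin k) : ℕ) = Stmt2.Mf d k m (s - 1) := by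
    intro s h1 h2
    show Stmt2.Mf d k m (s - 1) % k = Stmt2.Mf d k m (s - 1)
    exact Nat.mod_eq_of_lt (hrepk s h1 h2)
  have hsigrep : ∀ s, 1 ≤ s → s ≤ d + 1 → Stmt2.sig d m ((rep s : Fin k) : ℕ) = s := by
    intro s h1 h2
    rw [hrepval s h1 h2]
    refine Stmt2.sig_eq hlt h1 h2 le_rfl ?_
    have h3 := hMlt (s - 1) (by omega)
    rwa [show s - 1 + 1 = s by omega] at h3
  -- block values
  set cB : ℕ → ℝ := fun s => F (zVec d k m) (rep s) with hcBdef
  set b1 : ℕ → ℝ := fun s => F w1 (rep s) with hb1def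
  set b2 : ℕ → ℝ := fun s => F w2 (rep s) with hb2def
  have hzSp := hFmaps _ hzmem
  have hcnn : ∀ s, 0 ≤ cB s := fun s => hzSp.2 _
  have hφ : ∀ i : Fin k, F (zVec d k m) i = cB (Stmt2.sig d m i.val) := by
    intro i
    have hs := hsigb i
    apply hstep _ hzmem
    rw [hz_eq i, hz_eq (rep _)]
    rw [hsigrep _ hs.1 hs.2]
  have hψ1 : ∀ i : Fin k, F w1 i = b1 (Stmt2.sig d m i.val) := by
    intro i
    have hs := hsigb i
    apply hstep _ hw1mem
    show Stmt2.vv d (Stmt2.rOdd (Stmt2.sig d m i.val))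
      = Stmt2.vv d (Stmt2.rOdd (Stmt2.sig d m ((rep (Stmt2.sig d m i.val) : Fin k) : ℕ)))
    rw [hsigrep _ hs.1 hs.2]
  have hψ2 : ∀ i : Fin k, F w2 i = b2 (Stmt2.sig d m i.val) := by
    intro i
    have hs := hsigb i
    apply hstep _ hw2mem
    show Stmt2.vv d (Stmt2.rEven (Stmt2.sig d m i.val))
      = Stmt2.vv d (Stmt2.rEven (Stmt2.sig d m ((rep (Stmt2.sig d m i.val) : Fin k) : ℕ)))
    rw [hsigrep _ hs.1 hs.2]
  -- counting lemma
  set N : ℕ → ℝ := fun s => ((Stmt2.Mf d k m s - Stmt2.Mf d k m (s - 1) : ℕ) : ℝ) with hNdef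
  have hcount : ∀ g : ℕ → ℝ, ∑ i : Fin k, g (Stmt2.sig d m i.val)
      = ∑ s ∈ Finset.Icc 1 (d + 1), N s * g s :=
    fun g => Stmt2.count_lemma hm0 hlt hkm g
  have hNnn : ∀ s, (0 : ℝ) ≤ N s := fun s => Nat.cast_nonneg _
  -- total mass of F z
  have hmass : ∑ s ∈ Finset.Icc 1 (d + 1), N s * cB s = 1 := by
    have h1 : l1Norm (F (zVec d k m)) = 1 := hzSp.1
    have h2 : l1Norm (F (zVec d k m)) = ∑ i : Fin k, cB (Stmt2.sig d m i.val) := by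
      refine Finset.sum_congr rfl fun i _ => ?_
      rw [hφ i, abs_of_nonneg (hcnn _)]
    rw [← hcount cB, ← h2, h1]
  -- comparison sums in block form
  have hcmpB1 : ∑ s ∈ Finset.Icc 1 (d + 1), N s * |cB s - b1 s| ≤ ε / 8 := by
    have h2 : l1Norm (F (zVec d k m) - F w1)
        = ∑ i : Fin k, |cB (Stmt2.sig d m i.val) - b1 (Stmt2.sig d m i.val)| := by
      refine Finset.sum_congr rfl fun i _ => ?_
      rw [Pi.sub_apply, hφ i, hψ1 i]
    have h3 := hcount (fun t => |cB t - b1 t|)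
    rw [← h3, ← h2]
    exact hcomp1
  have hcmpB2 : ∑ s ∈ Finset.Icc 1 (d + 1), N s * |cB s - b2 s| ≤ ε / 8 := by
    have h2 : l1Norm (F (zVec d k m) - F w2)
        = ∑ i : Fin k, |cB (Stmt2.sig d m i.val) - b2 (Stmt2.sig d m i.val)| := by
      refine Finset.sum_congr rfl fun i _ => ?_
      rw [Pi.sub_apply, hφ i, hψ2 i]
    have h3 := hcount (fun t => |cB t - b2 t|)
    rw [← h3, ← h2]
    exact hcomp2
  -- cast of block-size monotonicity
  have hNmono : ∀ s, 1 ≤ s → s ≤ d → N s ≤ N (s + 1) := by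
    intro s h1 h2
    have := hnmono s h1 h2
    simp only [hNdef]
    rw [Nat.add_sub_cancel] at this ⊢
    exact_mod_cast this
  -- link bounds (odd)
  have hlink1 : ∀ s ∈ (Finset.Icc 1 d).filter (fun s => s % 2 = 1),
      N s * |cB s - cB (s + 1)|
        ≤ N s * |cB s - b1 s| + N (s + 1) * |cB (s + 1) - b1 (s + 1)| := by
    intro s hs
    rw [Finset.mem_filter, Finset.mem_Icc] at hs
    obtain ⟨⟨hs1, hsd⟩, hodd⟩ := hs
    have hpair := Stmt2.rOdd_pair s hodd
    have hbeq : b1 s = b1 (s + 1) := by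
      apply hstep _ hw1mem
      show Stmt2.vv d (Stmt2.rOdd (Stmt2.sig d m ((rep s : Fin k) : ℕ)))
        = Stmt2.vv d (Stmt2.rOdd (Stmt2.sig d m ((rep (s + 1) : Fin k) : ℕ)))
      rw [hsigrep s hs1 (by omega), hsigrep (s + 1) (by omega) (by omega), hpair.1, hpair.2]
    have htri : |cB s - cB (s + 1)| ≤ |cB s - b1 s| + |cB (s + 1) - b1 (s + 1)| := by
      have hflip : |b1 s - cB (s + 1)| = |cB (s + 1) - b1 (s + 1)| := by
        rw [← hbeq, abs_sub_comm]
      calc |cB s - cB (s + 1)| ≤ |cB s - b1 s| + |b1 s - cB (s + 1)| := abs_sub_le _ _ _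
      _ = |cB s - b1 s| + |cB (s + 1) - b1 (s + 1)| := by rw [hflip]
    calc N s * |cB s - cB (s + 1)|
        ≤ N s * (|cB s - b1 s| + |cB (s + 1) - b1 (s + 1)|) :=
          mul_le_mul_of_nonneg_left htri (hNnn s)
    _ = N s * |cB s - b1 s| + N s * |cB (s + 1) - b1 (s + 1)| := by ring
    _ ≤ N s * |cB s - b1 s| + N (s + 1) * |cB (s + 1) - b1 (s + 1)| := by
        have h5 := hNmono s hs1 hsd
        have h6 := abs_nonneg (cB (s + 1) - b1 (s + 1))
        nlinarith
  -- link bounds (even)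
  have hlink2 : ∀ s ∈ (Finset.Icc 1 d).filter (fun s => ¬ s % 2 = 1),
      N s * |cB s - cB (s + 1)|
        ≤ N s * |cB s - b2 s| + N (s + 1) * |cB (s + 1) - b2 (s + 1)| := by
    intro s hs
    rw [Finset.mem_filter, Finset.mem_Icc] at hs
    obtain ⟨⟨hs1, hsd⟩, hodd⟩ := hs
    have hpair := Stmt2.rEven_pair s (by omega) (by omega)
    have hbeq : b2 s = b2 (s + 1) := by
      apply hstep _ hw2mem
      show Stmt2.vv d (Stmt2.rEven (Stmt2.sig d m ((rep s : Fin k) : ℕ)))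
        = Stmt2.vv d (Stmt2.rEven (Stmt2.sig d m ((rep (s + 1) : Fin k) : ℕ)))
      rw [hsigrep s hs1 (by omega), hsigrep (s + 1) (by omega) (by omega), hpair.1, hpair.2]
    have htri : |cB s - cB (s + 1)| ≤ |cB s - b2 s| + |cB (s + 1) - b2 (s + 1)| := by
      have hflip : |b2 s - cB (s + 1)| = |cB (s + 1) - b2 (s + 1)| := by
        rw [← hbeq, abs_sub_comm]
      calc |cB s - cB (s + 1)| ≤ |cB s - b2 s| + |b2 s - cB (s + 1)| := abs_sub_le _ _ _
      _ = |cB s - b2 s| + |cB (s + 1) - b2 (s + 1)| := by rw [hflip]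
    calc N s * |cB s - cB (s + 1)|
        ≤ N s * (|cB s - b2 s| + |cB (s + 1) - b2 (s + 1)|) :=
          mul_le_mul_of_nonneg_left htri (hNnn s)
    _ = N s * |cB s - b2 s| + N s * |cB (s + 1) - b2 (s + 1)| := by ring
    _ ≤ N s * |cB s - b2 s| + N (s + 1) * |cB (s + 1) - b2 (s + 1)| := by
        have h5 := hNmono s hs1 hsd
        have h6 := abs_nonneg (cB (s + 1) - b2 (s + 1))
        nlinarith
  -- parity pairing sum
  have hparity : ∀ (hf : ℕ → ℝ), (∀ t, 0 ≤ hf t) → ∀ S : Finset ℕ, S ⊆ Finset.Icc 1 d →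
      (∀ x ∈ S, x + 1 ∉ S) →
      ∑ s ∈ S, (hf s + hf (s + 1)) ≤ ∑ t ∈ Finset.Icc 1 (d + 1), hf t := by
    intro hf hf0 S hS hdisj
    rw [Finset.sum_add_distrib]
    have himg : ∑ s ∈ S, hf (s + 1) = ∑ t ∈ S.image (· + 1), hf t := by
      rw [Finset.sum_image]
      intro x _ y _ h
      have h' : x + 1 = y + 1 := h
      omega
    rw [himg, ← Finset.sum_union ?hdis]
    case hdis =>
      rw [Finset.disjoint_left]
      intro t ht hti
      rw [Finset.mem_image] at hti
      obtain ⟨x, hx, hxe⟩ := hti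
      subst hxe
      exact hdisj x hx ht
    apply Finset.sum_le_sum_of_subset_of_nonneg
    · intro t ht
      rw [Finset.mem_union] at ht
      rcases ht with h | h
      · have := hS h
        rw [Finset.mem_Icc] at this ⊢
        omega
      · rw [Finset.mem_image] at h
        obtain ⟨x, hx, rfl⟩ := h
        have := hS hx
        rw [Finset.mem_Icc] at this ⊢
        omega
    · intro t _ _
      exact hf0 t
  -- total link bound
  have hL : ∑ s ∈ Finset.Icc 1 d, N s * |cB s - cB (s + 1)| ≤ ε / 8 + ε / 8 := by
    rw [← Finset.sum_filter_add_sum_filter_not (Finset.Icc 1 d) (fun s => s % 2 = 1)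
      (fun s => N s * |cB s - cB (s + 1)|)]
    have hodd : ∑ s ∈ (Finset.Icc 1 d).filter (fun s => s % 2 = 1),
        N s * |cB s - cB (s + 1)| ≤ ε / 8 := by
      calc ∑ s ∈ (Finset.Icc 1 d).filter (fun s => s % 2 = 1), N s * |cB s - cB (s + 1)|
          ≤ ∑ s ∈ (Finset.Icc 1 d).filter (fun s => s % 2 = 1),
            (N s * |cB s - b1 s| + N (s + 1) * |cB (s + 1) - b1 (s + 1)|) :=
            Finset.sum_le_sum hlink1
      _ ≤ ∑ t ∈ Finset.Icc 1 (d + 1), N t * |cB t - b1 t| := by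
          apply hparity (fun t => N t * |cB t - b1 t|)
            (fun t => mul_nonneg (hNnn t) (abs_nonneg _)) _ (Finset.filter_subset _ _)
          intro x hx hx1
          rw [Finset.mem_filter] at hx hx1
          omega
      _ ≤ ε / 8 := hcmpB1
    have heven : ∑ s ∈ (Finset.Icc 1 d).filter (fun s => ¬ s % 2 = 1),
        N s * |cB s - cB (s + 1)| ≤ ε / 8 := by
      calc ∑ s ∈ (Finset.Icc 1 d).filter (fun s => ¬ s % 2 = 1), N s * |cB s - cB (s + 1)|
          ≤ ∑ s ∈ (Finset.Icc 1 d).filter (fun s => ¬ s % 2 = 1),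
            (N s * |cB s - b2 s| + N (s + 1) * |cB (s + 1) - b2 (s + 1)|) :=
            Finset.sum_le_sum hlink2
      _ ≤ ∑ t ∈ Finset.Icc 1 (d + 1), N t * |cB t - b2 t| := by
          apply hparity (fun t => N t * |cB t - b2 t|)
            (fun t => mul_nonneg (hNnn t) (abs_nonneg _)) _ (Finset.filter_subset _ _)
          intro x hx hx1
          rw [Finset.mem_filter] at hx hx1
          omega
      _ ≤ ε / 8 := hcmpB2
    linarith
  -- geometric recursion bound on the mass of the small blocks
  have hx3 : (3 : ℝ) ≤ (a : ℝ) := by exact_mod_cast ha3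
  have hA2 : (0 : ℝ) < (a : ℝ) ^ 2 - 1 := by nlinarith
  have hNrat' : ∀ s, 1 ≤ s → s ≤ d → ((a : ℝ) ^ 2 - 1) * N s ≤ N (s + 1) := by
    intro s h1 h2
    have h3 := hnrat s h1 h2
    have hcast : (((a ^ 2 - 1) * (Stmt2.Mf d k m s - Stmt2.Mf d k m (s - 1)) : ℕ) : ℝ)
        ≤ ((Stmt2.Mf d k m (s + 1) - Stmt2.Mf d k m (s + 1 - 1) : ℕ) : ℝ) :=
      Nat.cast_le.mpr h3
    have hc2 : (((a ^ 2 - 1) : ℕ) : ℝ) = (a : ℝ) ^ 2 - 1 := by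
      rw [Nat.cast_sub (by omega : 1 ≤ a ^ 2)]
      push_cast
      ring
    rw [Nat.cast_mul, hc2] at hcast
    simpa only [hNdef] using hcast
  have hstep1 : ∀ s ∈ Finset.Icc 1 d, N s * cB s
      ≤ (1 / ((a : ℝ) ^ 2 - 1)) * (N (s + 1) * cB (s + 1)) + N s * |cB s - cB (s + 1)| := by
    intro s hs
    rw [Finset.mem_Icc] at hs
    have h1 : cB s ≤ cB (s + 1) + |cB s - cB (s + 1)| := by
      have := le_abs_self (cB s - cB (s + 1))
      linarith
    have h2 : N s * cB s ≤ N s * cB (s + 1) + N s * |cB s - cB (s + 1)| := by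
      have := mul_le_mul_of_nonneg_left h1 (hNnn s)
      linarith [this, mul_add (N s) (cB (s + 1)) (|cB s - cB (s + 1)|)]
    have h3 : N s * cB (s + 1) ≤ (1 / ((a : ℝ) ^ 2 - 1)) * (N (s + 1) * cB (s + 1)) := by
      have hr := hNrat' s hs.1 hs.2
      have hNle : N s ≤ (1 / ((a : ℝ) ^ 2 - 1)) * N (s + 1) := by
        rw [one_div, inv_mul_eq_div, le_div_iff₀ hA2]
        linarith [hr]
      have := mul_le_mul_of_nonneg_right hNle (hcnn (s + 1))
      calc N s * cB (s + 1) ≤ (1 / ((a : ℝ) ^ 2 - 1)) * N (s + 1) * cB (s + 1) := this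
      _ = (1 / ((a : ℝ) ^ 2 - 1)) * (N (s + 1) * cB (s + 1)) := by ring
    linarith
  have hshift : ∑ s ∈ Finset.Icc 1 d, N (s + 1) * cB (s + 1) ≤ 1 := by
    have himg : ∑ s ∈ Finset.Icc 1 d, N (s + 1) * cB (s + 1)
        = ∑ t ∈ (Finset.Icc 1 d).image (· + 1), N t * cB t := by
      rw [Finset.sum_image]
      intro x _ y _ h
      have h' : x + 1 = y + 1 := h
      omega
    rw [himg, ← hmass]
    apply Finset.sum_le_sum_of_subset_of_nonneg
    · intro t ht
      rw [Finset.mem_image] at ht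
      obtain ⟨x, hx, rfl⟩ := ht
      rw [Finset.mem_Icc] at hx ⊢
      omega
    · intro t _ _
      exact mul_nonneg (hNnn t) (hcnn t)
  have hfrac : (0 : ℝ) ≤ 1 / ((a : ℝ) ^ 2 - 1) := by positivity
  have hArec : ∑ s ∈ Finset.Icc 1 d, N s * cB s
      ≤ 1 / ((a : ℝ) ^ 2 - 1) + (ε / 8 + ε / 8) := by
    calc ∑ s ∈ Finset.Icc 1 d, N s * cB s
        ≤ ∑ s ∈ Finset.Icc 1 d, ((1 / ((a : ℝ) ^ 2 - 1)) * (N (s + 1) * cB (s + 1))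
            + N s * |cB s - cB (s + 1)|) := Finset.sum_le_sum hstep1
    _ = (1 / ((a : ℝ) ^ 2 - 1)) * (∑ s ∈ Finset.Icc 1 d, N (s + 1) * cB (s + 1))
          + ∑ s ∈ Finset.Icc 1 d, N s * |cB s - cB (s + 1)| := by
        rw [Finset.sum_add_distrib, Finset.mul_sum]
    _ ≤ (1 / ((a : ℝ) ^ 2 - 1)) * 1 + (ε / 8 + ε / 8) := by
        have := mul_le_mul_of_nonneg_left hshift hfrac
        linarith [hL]
    _ = 1 / ((a : ℝ) ^ 2 - 1) + (ε / 8 + ε / 8) := by ring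
  -- rewrite the goal in block form
  have hgoal : l1Norm (F (zVec d k m) - fun _ => 1 / (k : ℝ))
      = ∑ s ∈ Finset.Icc 1 (d + 1), N s * |cB s - 1 / (k : ℝ)| := by
    have h2 : l1Norm (F (zVec d k m) - fun _ => 1 / (k : ℝ))
        = ∑ i : Fin k, |cB (Stmt2.sig d m i.val) - 1 / (k : ℝ)| := by
      refine Finset.sum_congr rfl fun i _ => ?_
      rw [Pi.sub_apply, hφ i]
    rw [h2]
    exact hcount (fun t => |cB t - 1 / (k : ℝ)|)
  rw [hgoal, Finset.sum_Icc_succ_top (by omega : 1 ≤ d + 1)]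
  -- sum of small block sizes
  have hNsumNat : ∀ t, t ≤ d + 1 →
      ∑ s ∈ Finset.Icc 1 t, (Stmt2.Mf d k m s - Stmt2.Mf d k m (s - 1)) = Stmt2.Mf d k m t := by
    intro t
    induction t with
    | zero =>
      intro _
      simp only [Stmt2.Mf]
      rw [if_pos (Nat.zero_le d), hm0]
      simp
    | succ t ih =>
      intro ht
      rw [Finset.sum_Icc_succ_top (by omega : 1 ≤ t + 1), ih (by omega)]
      have h1 : Stmt2.Mf d k m t ≤ Stmt2.Mf d k m (t + 1) := (hMlt t (by omega)).le
      rw [Nat.add_sub_cancel]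
      omega
  have hNd : ∑ s ∈ Finset.Icc 1 d, N s = ((m d : ℕ) : ℝ) := by
    have h1 := hNsumNat d (by omega)
    have hMd : Stmt2.Mf d k m d = m d := if_pos le_rfl
    rw [hMd] at h1
    calc ∑ s ∈ Finset.Icc 1 d, N s
        = ((∑ s ∈ Finset.Icc 1 d, (Stmt2.Mf d k m s - Stmt2.Mf d k m (s - 1)) : ℕ) : ℝ) := by
          rw [Nat.cast_sum]
    _ = ((m d : ℕ) : ℝ) := by rw [h1]
  -- bound on the small blocks part
  have hbound1 : ∑ s ∈ Finset.Icc 1 d, N s * |cB s - 1 / (k : ℝ)|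
      ≤ (∑ s ∈ Finset.Icc 1 d, N s * cB s) + (m d : ℝ) / k := by
    calc ∑ s ∈ Finset.Icc 1 d, N s * |cB s - 1 / (k : ℝ)|
        ≤ ∑ s ∈ Finset.Icc 1 d, (N s * cB s + N s * (1 / k)) := by
          apply Finset.sum_le_sum
          intro s _
          have hknn : (0 : ℝ) ≤ 1 / k := by positivity
          have h1 : |cB s - 1 / (k : ℝ)| ≤ cB s + 1 / k := by
            rw [abs_sub_le_iff]
            constructor
            · linarith
            · linarith [hcnn s]
          have := mul_le_mul_of_nonneg_left h1 (hNnn s)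
          linarith [mul_add (N s) (cB s) ((1 : ℝ) / k)]
    _ = (∑ s ∈ Finset.Icc 1 d, N s * cB s) + (∑ s ∈ Finset.Icc 1 d, N s) * (1 / k) := by
        rw [Finset.sum_add_distrib, ← Finset.sum_mul]
    _ = (∑ s ∈ Finset.Icc 1 d, N s * cB s) + (m d : ℝ) / k := by
        rw [hNd]
        ring
  -- bound on the big block part
  have hNtop : N (d + 1) = (k : ℝ) - (m d : ℝ) := by
    have h1 : Stmt2.Mf d k m (d + 1) - Stmt2.Mf d k m (d + 1 - 1) = k - m d := by
      rw [Nat.add_sub_cancel]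
      rw [show Stmt2.Mf d k m (d + 1) = k from if_neg (by omega),
        show Stmt2.Mf d k m d = m d from if_pos le_rfl]
    show ((Stmt2.Mf d k m (d + 1) - Stmt2.Mf d k m (d + 1 - 1) : ℕ) : ℝ) = (k : ℝ) - (m d : ℝ)
    rw [h1, Nat.cast_sub (le_of_lt hkm)]
  have hmass' : N (d + 1) * cB (d + 1) = 1 - ∑ s ∈ Finset.Icc 1 d, N s * cB s := by
    have h1 := hmass
    rw [Finset.sum_Icc_succ_top (by omega : 1 ≤ d + 1)] at h1
    linarith
  have hAnn : 0 ≤ ∑ s ∈ Finset.Icc 1 d, N s * cB s :=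
    Finset.sum_nonneg fun s _ => mul_nonneg (hNnn s) (hcnn s)
  have hmdnn : (0 : ℝ) ≤ (m d : ℝ) / k := by positivity
  have hbound2 : N (d + 1) * |cB (d + 1) - 1 / (k : ℝ)|
      ≤ (∑ s ∈ Finset.Icc 1 d, N s * cB s) + (m d : ℝ) / k := by
    have h1 : N (d + 1) * |cB (d + 1) - 1 / (k : ℝ)|
        = |N (d + 1) * cB (d + 1) - N (d + 1) / k| := by
      calc N (d + 1) * |cB (d + 1) - 1 / (k : ℝ)|
          = |N (d + 1)| * |cB (d + 1) - 1 / k| := by rw [abs_of_nonneg (hNnn _)]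
      _ = |N (d + 1) * (cB (d + 1) - 1 / k)| := (abs_mul _ _).symm
      _ = |N (d + 1) * cB (d + 1) - N (d + 1) / k| := by
          rw [mul_sub]
          ring_nf
    rw [h1, hmass', hNtop]
    have h2 : ((k : ℝ) - m d) / k = 1 - (m d : ℝ) / k := by
      field_simp
    rw [h2]
    have h3 : (1 - ∑ s ∈ Finset.Icc 1 d, N s * cB s) - (1 - (m d : ℝ) / k)
        = (m d : ℝ) / k - ∑ s ∈ Finset.Icc 1 d, N s * cB s := by ring
    rw [h3]
    calc |(m d : ℝ) / k - ∑ s ∈ Finset.Icc 1 d, N s * cB s|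
        ≤ |(m d : ℝ) / k| + |∑ s ∈ Finset.Icc 1 d, N s * cB s| := abs_sub _ _
    _ = (∑ s ∈ Finset.Icc 1 d, N s * cB s) + (m d : ℝ) / k := by
        rw [abs_of_nonneg hmdnn, abs_of_nonneg hAnn]
        ring
  -- size comparison of m d and k
  have hmdQ : m d ∈ Q := hmQ d hd le_rfl
  have hmk2 : a ^ 2 * m d ≤ k := hQrat _ _ hmdQ hkQ hkm
  have hmdk : (m d : ℝ) / k ≤ 1 / ((a : ℝ) ^ 2) := by
    rw [div_le_div_iff₀ hk0' (by positivity)]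
    have hcast : ((a ^ 2 * m d : ℕ) : ℝ) ≤ (k : ℝ) := by exact_mod_cast hmk2
    push_cast at hcast
    nlinarith
  -- final numeric estimate
  have hfrac1 : 1 / ((a : ℝ) ^ 2 - 1) ≤ 2 * (1 / ((a : ℝ) ^ 2)) := by
    rw [mul_one_div, div_le_div_iff₀ hA2 (by positivity)]
    nlinarith
  have hfrac2 : 8 * (1 / ((a : ℝ) ^ 2)) ≤ ε / 2 := by
    rw [mul_one_div, div_le_div_iff₀ (by positivity) (by norm_num : (0 : ℝ) < 2)]
    have haux := mul_le_mul_of_nonneg_right hεa (by linarith : (0 : ℝ) ≤ (a : ℝ))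
    nlinarith
  generalize hg1 : (∑ s ∈ Finset.Icc 1 d, N s * |cB s - 1 / (k : ℝ)|) = AA at hbound1 ⊢
  generalize hg2 : (N (d + 1) * |cB (d + 1) - 1 / (k : ℝ)|) = TT at hbound2 ⊢
  generalize hg3 : (∑ s ∈ Finset.Icc 1 d, N s * cB s) = BB at hbound1 hbound2 hArec ⊢
  generalize hg4 : ((m d : ℝ) / k) = MM at hbound1 hbound2 hmdk ⊢
  linarith [hbound1, hbound2, hArec, hmdk, hfrac1, hfrac2]
end

section
/- Let X be a real normed space and (e_i)_{i≥1} a normalized 1-unconditional sequence in X. Then there exists a subset P ⊆ ℕ such that for all k ≥ 1, ψ_P(k) ≥ (ψ(k) − 1)/2. -/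
/-- `ψ(k) = ‖∑_{i=1}^k e_i‖`. -/
noncomputable def psi {X : Type*} [NormedAddCommGroup X] (e : ℕ → X) (k : ℕ) : ℝ :=
  ‖∑ i ∈ Finset.Icc 1 k, e i‖

/-- `ψ_P(k) = min(‖∑_{i ≤ k, i ∈ P} e_i‖, ‖∑_{i ≤ k, i ∉ P} e_i‖)`. -/
noncomputable def psiP {X : Type*} [NormedAddCommGroup X] (e : ℕ → X) (P : Set ℕ)
    (k : ℕ) : ℝ :=
  min ‖∑ i ∈ Finset.Icc 1 k, Set.indicator P e i‖
      ‖∑ i ∈ Finset.Icc 1 k, Set.indicator Pᶜ e i‖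

/-- Greedy finite sets: at each step, add the new index to the side with smaller norm. -/
noncomputable def Pset {X : Type*} [NormedAddCommGroup X] (e : ℕ → X) : ℕ → Finset ℕ
  | 0 => ∅
  | k+1 =>
    if ‖∑ i ∈ Pset e k, e i‖ ≤ ‖∑ i ∈ Finset.Icc 1 k \ Pset e k, e i‖
    then insert (k+1) (Pset e k) else Pset e k

lemma Pset_subset {X : Type*} [NormedAddCommGroup X] (e : ℕ → X) :
    ∀ k, Pset e k ⊆ Finset.Icc 1 k := by
  intro k
  induction k with
  | zero => simp [Pset]
  | succ k ih =>
    rw [Pset]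
    split
    · intro i hi
      rcases Finset.mem_insert.mp hi with h | h
      · simp [h]
      · have := ih h
        simp only [Finset.mem_Icc] at this ⊢
        omega
    · intro i hi
      have := ih hi
      simp only [Finset.mem_Icc] at this ⊢
      omega

lemma Pset_mem_iff {X : Type*} [NormedAddCommGroup X] (e : ℕ → X) :
    ∀ k i, i ∈ Pset e k ↔ (i ≤ k ∧ i ∈ Pset e i) := by
  intro k
  induction k with
  | zero =>
    intro i
    simp only [Pset, Finset.notMem_empty, false_iff, Nat.le_zero]
    rintro ⟨rfl, h⟩
    simp [Pset] at h
  | succ k ih =>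
    intro i
    constructor
    · intro hi
      have hle : i ≤ k + 1 := by
        have := Pset_subset e (k+1) hi
        simp only [Finset.mem_Icc] at this; omega
      refine ⟨hle, ?_⟩
      rcases Nat.lt_or_ge i (k+1) with h | h
      · -- i ≤ k, so i ∈ Pset e k
        have hik : i ∈ Pset e k := by
          rw [Pset] at hi
          split at hi
          · rcases Finset.mem_insert.mp hi with h' | h'
            · omega
            · exact h'
          · exact hi
        exact ((ih i).mp hik).2
      · have : i = k + 1 := by omega
        rwa [this] at hi ⊢
    · rintro ⟨hle, hi⟩
      rcases Nat.lt_or_ge i (k+1) with h | h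
      · have hik : i ∈ Pset e k := (ih i).mpr ⟨by omega, hi⟩
        rw [Pset]
        split
        · exact Finset.mem_insert_of_mem hik
        · exact hik
      · have : i = k + 1 := by omega
        subst this
        exact hi

section Main

variable {X : Type*} [NormedAddCommGroup X] [NormedSpace ℝ X] (e : ℕ → X)

/-- Monotonicity of norms of partial sums, from 1-unconditionality. -/
lemma norm_sum_mono
    (huncond : ∀ (s : Finset ℕ) (a b : ℕ → ℝ), (∀ i ∈ s, |a i| ≤ |b i|) →
      ‖∑ i ∈ s, a i • e i‖ ≤ ‖∑ i ∈ s, b i • e i‖)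
    {s t : Finset ℕ} (hst : s ⊆ t) :
    ‖∑ i ∈ s, e i‖ ≤ ‖∑ i ∈ t, e i‖ := by
  classical
  have hab : ∀ i ∈ t, |if i ∈ s then (1:ℝ) else 0| ≤ |(1:ℝ)| := by
    intro i _
    split <;> norm_num
  have h := huncond t (fun i => if i ∈ s then (1:ℝ) else 0) (fun _ => 1) hab
  have h1 : ∑ i ∈ t, (if i ∈ s then (1:ℝ) else 0) • e i = ∑ i ∈ s, e i := by
    simp only [ite_smul, one_smul, zero_smul]
    rw [← Finset.sum_filter, Finset.filter_mem_eq_inter, Finset.inter_eq_right.mpr hst]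
  have h2 : ∑ i ∈ t, (1:ℝ) • e i = ∑ i ∈ t, e i := by simp
  simp only [h1, h2] at h
  exact h

lemma main_invariant
    (hnorm : ∀ i, 1 ≤ i → ‖e i‖ = 1)
    (huncond : ∀ (s : Finset ℕ) (a b : ℕ → ℝ), (∀ i ∈ s, |a i| ≤ |b i|) →
      ‖∑ i ∈ s, a i • e i‖ ≤ ‖∑ i ∈ s, b i • e i‖) :
    ∀ k, |‖∑ i ∈ Pset e k, e i‖ - ‖∑ i ∈ Finset.Icc 1 k \ Pset e k, e i‖| ≤ 1 := by
  intro k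
  induction k with
  | zero => simp [Pset]
  | succ k ih =>
    set A := ‖∑ i ∈ Pset e k, e i‖ with hA
    set B := ‖∑ i ∈ Finset.Icc 1 k \ Pset e k, e i‖ with hB
    have hnot : k + 1 ∉ Pset e k := by
      intro h
      have := Pset_subset e k h
      simp only [Finset.mem_Icc] at this; omega
    have hnotd : k + 1 ∉ Finset.Icc 1 k \ Pset e k := by
      simp only [Finset.mem_sdiff, Finset.mem_Icc]; omega
    have hek : ‖e (k+1)‖ = 1 := hnorm _ (by omega)
    rw [Pset]
    split
    · -- condition: A ≤ B, add k+1 to P side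
      rename_i hcond
      rw [← hA, ← hB] at hcond
      have hdiff : Finset.Icc 1 (k+1) \ insert (k+1) (Pset e k)
          = Finset.Icc 1 k \ Pset e k := by
        ext i
        simp only [Finset.mem_sdiff, Finset.mem_Icc, Finset.mem_insert]
        constructor
        · rintro ⟨⟨h1, h2⟩, h3⟩
          push_neg at h3
          exact ⟨⟨h1, by omega⟩, h3.2⟩
        · rintro ⟨⟨h1, h2⟩, h3⟩
          refine ⟨⟨h1, by omega⟩, ?_⟩
          push_neg
          exact ⟨by omega, h3⟩
      rw [hdiff, ← hB]
      have hup : ‖∑ i ∈ insert (k+1) (Pset e k), e i‖ ≤ A + 1 := by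
        rw [Finset.sum_insert hnot]
        calc ‖e (k+1) + ∑ i ∈ Pset e k, e i‖ ≤ ‖e (k+1)‖ + A := norm_add_le _ _
          _ = A + 1 := by rw [hek]; ring
      have hdown : A ≤ ‖∑ i ∈ insert (k+1) (Pset e k), e i‖ :=
        norm_sum_mono e huncond (Finset.subset_insert _ _)
      rw [abs_le] at ih ⊢
      constructor
      · linarith
      · linarith
    · -- condition fails: B < A, add k+1 to complement side
      rename_i hcond
      rw [← hA, ← hB] at hcond
      push_neg at hcond
      have hdiff : Finset.Icc 1 (k+1) \ Pset e k
          = insert (k+1) (Finset.Icc 1 k \ Pset e k) := by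
        ext i
        simp only [Finset.mem_sdiff, Finset.mem_Icc, Finset.mem_insert]
        constructor
        · rintro ⟨⟨h1, h2⟩, h3⟩
          rcases Nat.lt_or_ge i (k+1) with h | h
          · exact Or.inr ⟨⟨h1, by omega⟩, h3⟩
          · exact Or.inl (by omega)
        · rintro (h | ⟨⟨h1, h2⟩, h3⟩)
          · subst h; exact ⟨⟨by omega, le_refl _⟩, hnot⟩
          · exact ⟨⟨h1, by omega⟩, h3⟩
      rw [hdiff, ← hA]
      have hup : ‖∑ i ∈ insert (k+1) (Finset.Icc 1 k \ Pset e k), e i‖ ≤ B + 1 := by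
        rw [Finset.sum_insert hnotd]
        calc ‖e (k+1) + ∑ i ∈ Finset.Icc 1 k \ Pset e k, e i‖
            ≤ ‖e (k+1)‖ + B := norm_add_le _ _
          _ = B + 1 := by rw [hek]; ring
      have hdown : B ≤ ‖∑ i ∈ insert (k+1) (Finset.Icc 1 k \ Pset e k), e i‖ :=
        norm_sum_mono e huncond (Finset.subset_insert _ _)
      rw [abs_le] at ih ⊢
      constructor
      · linarith
      · linarith

end Main

/-- for every normalized `1`-unconditional sequence `(e_i)_{i ≥ 1}` there is a
set `P ⊆ ℕ` such that `ψ_P(k) ≥ (ψ(k) - 1)/2` for all `k ≥ 1`. -/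
theorem stmt_3 {X : Type*} [NormedAddCommGroup X] [NormedSpace ℝ X] (e : ℕ → X)
    (hnorm : ∀ i, 1 ≤ i → ‖e i‖ = 1)
    (huncond : ∀ (s : Finset ℕ) (a b : ℕ → ℝ), (∀ i ∈ s, |a i| ≤ |b i|) →
      ‖∑ i ∈ s, a i • e i‖ ≤ ‖∑ i ∈ s, b i • e i‖) :
    ∃ P : Set ℕ, ∀ k, 1 ≤ k → (psi e k - 1) / 2 ≤ psiP e P k := by
  classical
  refine ⟨{n | n ∈ Pset e n}, fun k _ => ?_⟩
  set P : Set ℕ := {n | n ∈ Pset e n} with hP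
  -- indicator sums equal sums over Pset e k and its complement in Icc 1 k
  have hmemP : ∀ i, i ∈ P ↔ i ∈ Pset e i := fun i => Iff.rfl
  have hfilter : (Finset.Icc 1 k).filter (fun i => i ∈ P) = Pset e k := by
    ext i
    constructor
    · intro h
      rw [Finset.mem_filter, Finset.mem_Icc] at h
      have h2 : i ∈ Pset e i := (hmemP i).mp h.2
      exact (Pset_mem_iff e k i).mpr ⟨h.1.2, h2⟩
    · intro h
      obtain ⟨h1, h2⟩ := (Pset_mem_iff e k i).mp h
      have hpos : 1 ≤ i := by
        by_contra hcon
        have : i = 0 := by omega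
        subst this
        simp [Pset] at h2
      rw [Finset.mem_filter, Finset.mem_Icc]
      exact ⟨⟨hpos, h1⟩, (hmemP i).mpr h2⟩
  have hsum1 : ∑ i ∈ Finset.Icc 1 k, Set.indicator P e i = ∑ i ∈ Pset e k, e i := by
    rw [← hfilter, Finset.sum_filter]
    apply Finset.sum_congr rfl
    intro i _
    by_cases h : i ∈ P <;> simp [Set.indicator_apply, h]
  have hsum2 : ∑ i ∈ Finset.Icc 1 k, Set.indicator Pᶜ e i
      = ∑ i ∈ Finset.Icc 1 k \ Pset e k, e i := by
    have : Finset.Icc 1 k \ Pset e k = (Finset.Icc 1 k).filter (fun i => i ∉ P) := by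
      rw [← hfilter]
      ext i
      simp only [Finset.mem_sdiff, Finset.mem_filter]
      tauto
    rw [this, Finset.sum_filter]
    apply Finset.sum_congr rfl
    intro i _
    by_cases h : i ∈ P <;> simp [Set.indicator_apply, h]
  set A := ‖∑ i ∈ Pset e k, e i‖ with hA
  set B := ‖∑ i ∈ Finset.Icc 1 k \ Pset e k, e i‖ with hB
  have hinv := main_invariant e hnorm huncond k
  rw [← hA, ← hB] at hinv
  have htri : psi e k ≤ A + B := by
    rw [psi]
    have hsplit : ∑ i ∈ Finset.Icc 1 k, e i
        = (∑ i ∈ Pset e k, e i) + ∑ i ∈ Finset.Icc 1 k \ Pset e k, e i := by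
      rw [← Finset.sum_union (Finset.disjoint_sdiff)]
      congr 1
      rw [Finset.union_sdiff_of_subset (Pset_subset e k)]
    rw [hsplit]
    exact norm_add_le _ _
  have hmin : psiP e P k = min A B := by
    rw [psiP, hsum1, hsum2]
  rw [hmin]
  rw [abs_le] at hinv
  rcases le_total A B with h | h
  · rw [min_eq_left h]; linarith
  · rw [min_eq_right h]; linarith
end

section
/- Let ε > 0, d ∈ ℕ with d ≥ 1, and 1 ≤ q ≤ p < ∞. Let X be a real normed space and (e_i)_{i≥1} a normalized 1-unconditional sequence in X satisfying lower p and upper q estimates on block sequences with constant one. Let P ⊆ ℕ satisfy ψ_P(k) ≥ (ψ(k) − 1)/2 for all k, and let M = {k_1 < k_2 < …} ⊆ ℕ satisfy ψ(k_{j+1}) ≥ (8·d^(1/q−1/p)/ε + 2)·ψ(k_j) + 1 for all j ≥ 1. Then for all m̄, n̄ ∈ [M]^d with m_1 < n_1 < … < m_d < n_d (with m_0 = n_0 = 0), all real scalars (λ_s)_{s=1}^d, and each Q ∈ {P, P^c}: (i) if ‖∑_{s=1}^d λ_s·1_{(n_{s−1},n_s]∩Q}‖ ≤ 1 then ‖∑_{s=1}^d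 λ_s·1_{(n_{s−1},m_s]}‖ ≤ ε/4; and (ii) if ‖∑_{s=1}^d λ_s·1_{(m_{s−1},m_s]∩Q}‖ ≤ 1 then ‖∑_{s=1}^d λ_s·1_{(m_{s−1},n_{s−1}]}‖ ≤ ε/4. -/
set_option linter.unusedSectionVars false


lemma holder_aux (d : ℕ) (hd : 1 ≤ d) (q p : ℝ) (hq : 1 ≤ q) (hqp : q ≤ p)
    (c : ℕ → ℝ) (hc : ∀ i ∈ Finset.range d, 0 ≤ c i)
    (hsum : ∑ i ∈ Finset.range d, c i ^ p ≤ 1) :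
    (∑ i ∈ Finset.range d, c i ^ q) ^ ((1:ℝ)/q) ≤ (d:ℝ) ^ ((1:ℝ)/q - 1/p) := by
  have hq0 : (0:ℝ) < q := lt_of_lt_of_le one_pos hq
  have hp0 : (0:ℝ) < p := lt_of_lt_of_le one_pos (hq.trans hqp)
  have hd0 : (0:ℝ) < d := by exact_mod_cast hd
  set r : ℝ := p / q with hr
  have hr1 : 1 ≤ r := (one_le_div hq0).2 hqp
  have hr0 : (0:ℝ) < r := lt_of_lt_of_le one_pos hr1
  have hzq : ∀ i ∈ Finset.range d, (0:ℝ) ≤ c i ^ q := fun i hi =>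
    Real.rpow_nonneg (hc i hi) q
  have key := Real.rpow_arith_mean_le_arith_mean_rpow (Finset.range d)
    (fun _ => 1 / (d:ℝ)) (fun i => c i ^ q)
    (fun i _ => by positivity)
    (by simp [Finset.sum_const, Finset.card_range]; field_simp)
    hzq hr1
  have hqr : ∀ i ∈ Finset.range d, (c i ^ q) ^ r = c i ^ p := by
    intro i hi
    rw [← Real.rpow_mul (hc i hi)]
    congr 1
    rw [hr, mul_comm, div_mul_cancel₀ p (ne_of_gt hq0)]
  set S : ℝ := ∑ i ∈ Finset.range d, c i ^ q with hS
  have hS0 : 0 ≤ S := Finset.sum_nonneg hzq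
  have keyR : ∑ x ∈ Finset.range d, 1/(d:ℝ) * ((fun i => c i ^ q) x) ^ r
      = 1/(d:ℝ) * ∑ x ∈ Finset.range d, c x ^ p := by
    rw [Finset.mul_sum]
    exact Finset.sum_congr rfl (fun i hi => by rw [hqr i hi])
  have keyL : ∑ x ∈ Finset.range d, 1/(d:ℝ) * ((fun i => c i ^ q) x) = 1/(d:ℝ) * S := by
    rw [Finset.mul_sum]
  simp only [keyR, keyL] at key
  have key2 : (1 / (d:ℝ) * S) ^ r ≤ 1 / (d:ℝ) := by
    refine key.trans ?_
    have : 1 / (d:ℝ) * ∑ i ∈ Finset.range d, c i ^ p ≤ 1 / (d:ℝ) * 1 :=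
      mul_le_mul_of_nonneg_left hsum (by positivity)
    simpa using this
  have key3 : 1 / (d:ℝ) * S ≤ (1 / (d:ℝ)) ^ (1 / r) := by
    have h1 : ((1 / (d:ℝ) * S) ^ r) ^ (1/r) ≤ (1 / (d:ℝ)) ^ (1/r) :=
      Real.rpow_le_rpow (by positivity) key2 (by positivity)
    rwa [← Real.rpow_mul (by positivity), mul_one_div, div_self (ne_of_gt hr0),
      Real.rpow_one] at h1
  have key4 : S ≤ (d:ℝ) ^ (1 - q / p) := by
    have h2 : S ≤ (d:ℝ) * (1 / (d:ℝ)) ^ (1/r) := by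
      have := mul_le_mul_of_nonneg_left key3 (le_of_lt hd0)
      rwa [← mul_assoc, mul_one_div, div_self (ne_of_gt hd0), one_mul] at this
    refine h2.trans_eq ?_
    rw [one_div (d:ℝ), Real.inv_rpow (le_of_lt hd0), ← Real.rpow_neg (le_of_lt hd0)]
    nth_rewrite 1 [← Real.rpow_one (d:ℝ)]
    rw [← Real.rpow_add hd0]
    congr 1
    rw [hr, one_div_div]
    ring
  have h3 : S ^ ((1:ℝ)/q) ≤ ((d:ℝ) ^ (1 - q/p)) ^ ((1:ℝ)/q) :=
    Real.rpow_le_rpow hS0 key4 (by positivity)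
  refine h3.trans_eq ?_
  rw [← Real.rpow_mul (le_of_lt hd0)]
  congr 1
  rw [sub_mul, one_mul, div_mul_div_comm, mul_one, mul_comm p q, ← div_div,
    div_self (ne_of_gt hq0)]




section helpers
variable {X : Type*} [NormedAddCommGroup X] [NormedSpace ℝ X] {e : ℕ → X}

lemma ind_smul (Q : Set ℕ) (e : ℕ → X) (i : ℕ) :
    Set.indicator Q e i = (Set.indicator Q (fun _ => (1:ℝ)) i) • e i := by
  by_cases h : i ∈ Q <;> simp [Set.indicator_apply, h]

lemma uncond_dom
    (huncond : ∀ (s : Finset ℕ) (a b : ℕ → ℝ), (∀ i ∈ s, |a i| ≤ |b i|) →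
      ‖∑ i ∈ s, a i • e i‖ ≤ ‖∑ i ∈ s, b i • e i‖)
    (A B : Finset ℕ) (c : ℕ → ℝ) (hAB : A ⊆ B) (hc : ∀ i ∈ A, |c i| ≤ 1) :
    ‖∑ i ∈ A, c i • e i‖ ≤ ‖∑ i ∈ B, e i‖ := by
  have h1 : ∑ i ∈ A, c i • e i = ∑ i ∈ B, (if i ∈ A then c i else 0) • e i := by
    rw [← Finset.sum_subset hAB (fun i _ hi => by simp [hi])]
    exact Finset.sum_congr rfl (fun i hi => by simp [hi])
  have h2 := huncond B (fun i => if i ∈ A then c i else 0) (fun _ => 1)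
    (by intro i _; by_cases h : i ∈ A <;> simp [h]; exact hc i h)
  simp only [one_smul] at h2
  rw [h1]
  exact h2

lemma psi_Ioc (e : ℕ → X) (k : ℕ) : psi e k = ‖∑ i ∈ Finset.Ioc 0 k, e i‖ := by
  rw [psi, ← Finset.Icc_add_one_left_eq_Ioc, zero_add]

lemma uncond_dom_ind
    (huncond : ∀ (s : Finset ℕ) (a b : ℕ → ℝ), (∀ i ∈ s, |a i| ≤ |b i|) →
      ‖∑ i ∈ s, a i • e i‖ ≤ ‖∑ i ∈ s, b i • e i‖)
    (Q : Set ℕ) (A B : Finset ℕ) (hAB : A ⊆ B) :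
    ‖∑ i ∈ A, Set.indicator Q e i‖ ≤ ‖∑ i ∈ B, e i‖ := by
  have h1 : ∑ i ∈ A, Set.indicator Q e i
      = ∑ i ∈ A, (Set.indicator Q (fun _ => (1:ℝ)) i) • e i :=
    Finset.sum_congr rfl (fun i _ => ind_smul Q e i)
  rw [h1]
  refine uncond_dom huncond A B _ hAB (fun i _ => ?_)
  by_cases h : i ∈ Q <;> simp [Set.indicator_apply, h]

lemma psi_mono
    (huncond : ∀ (s : Finset ℕ) (a b : ℕ → ℝ), (∀ i ∈ s, |a i| ≤ |b i|) →
      ‖∑ i ∈ s, a i • e i‖ ≤ ‖∑ i ∈ s, b i • e i‖)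
    {k k' : ℕ} (h : k ≤ k') : psi e k ≤ psi e k' := by
  rw [psi_Ioc, psi_Ioc]
  have h1 : ∑ i ∈ Finset.Ioc 0 k, e i = ∑ i ∈ Finset.Ioc 0 k, (1:ℝ) • e i := by
    simp
  rw [h1]
  exact uncond_dom huncond _ _ _ (Finset.Ioc_subset_Ioc le_rfl h) (fun i _ => by simp)

end helpers


section core
variable {X : Type*} [NormedAddCommGroup X] [NormedSpace ℝ X]

lemma core_lemma
    (ε : ℝ) (hε : 0 < ε) (d : ℕ) (hd : 1 ≤ d)
    (q p : ℝ) (hq : 1 ≤ q) (hqp : q ≤ p)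
    (e : ℕ → X)
    (huncond : ∀ (s : Finset ℕ) (a b : ℕ → ℝ), (∀ i ∈ s, |a i| ≤ |b i|) →
      ‖∑ i ∈ s, a i • e i‖ ≤ ‖∑ i ∈ s, b i • e i‖)
    (hblock : ∀ (N : ℕ) (x : ℕ → X) (s : ℕ → ℕ),
      (∀ i, i < N → s i < s (i + 1)) →
      (∀ i, i < N → x i ∈ Submodule.span ℝ (e '' {j | s i ≤ j ∧ j < s (i + 1)})) →
      (∑ i ∈ Finset.range N, ‖x i‖ ^ p) ^ (1 / p) ≤ ‖∑ i ∈ Finset.range N, x i‖ ∧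
        ‖∑ i ∈ Finset.range N, x i‖ ≤ (∑ i ∈ Finset.range N, ‖x i‖ ^ q) ^ (1 / q))
    (lam : ℕ → ℝ) (Q : Set ℕ) (α β : ℕ → ℕ)
    (hαmono : ∀ s, 1 ≤ s → s < d → α s < α (s + 1))
    (hβ : ∀ s, 1 ≤ s → s ≤ d → β s ≤ α s)
    (hkey : ∀ s, 1 ≤ s → s ≤ d →
      (8 * (d : ℝ) ^ ((1 : ℝ) / q - 1 / p) / ε / 2) * psi e (β s) ≤
        ‖∑ i ∈ Finset.Ioc (α (s - 1)) (α s), Set.indicator Q e i‖)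
    (h1 : ‖∑ s ∈ Finset.Icc 1 d, lam s • ∑ i ∈ Finset.Ioc (α (s - 1)) (α s),
        Set.indicator Q e i‖ ≤ 1) :
    ‖∑ s ∈ Finset.Icc 1 d, lam s • ∑ i ∈ Finset.Ioc (α (s - 1)) (β s), e i‖ ≤ ε / 4 := by
  have hq0 : (0:ℝ) < q := lt_of_lt_of_le one_pos hq
  have hp0 : (0:ℝ) < p := lt_of_lt_of_le one_pos (hq.trans hqp)
  have hd0 : (0:ℝ) < d := by exact_mod_cast hd
  set δ : ℝ := (1:ℝ)/q - 1/p with hδ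
  have hdd : (0:ℝ) < (d:ℝ) ^ δ := Real.rpow_pos_of_pos hd0 δ
  set C : ℝ := 8 * (d:ℝ) ^ δ / ε with hC
  have hC0 : 0 < C := by positivity
  -- block definitions
  set x : ℕ → X := fun i => lam (i+1) • ∑ j ∈ Finset.Ioc (α i) (α (i+1)),
    Set.indicator Q e j with hx
  set y : ℕ → X := fun i => lam (i+1) • ∑ j ∈ Finset.Ioc (α i) (β (i+1)), e j with hy
  set sfun : ℕ → ℕ := fun i => if i = 0 then 0 else α i + 1 with hsfun
  have hsmono : ∀ i, i < d → sfun i < sfun (i+1) := by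
    intro i hi
    rcases Nat.eq_zero_or_pos i with h0 | h0
    · subst h0; simp [hsfun]
    · have := hαmono i h0 hi
      simp only [hsfun]
      rw [if_neg (Nat.pos_iff_ne_zero.mp h0), if_neg (Nat.succ_ne_zero i)]
      omega
  have hIocsub : ∀ i, i < d → ∀ j ∈ Finset.Ioc (α i) (α (i+1)),
      sfun i ≤ j ∧ j < sfun (i+1) := by
    intro i hi j hj
    rw [Finset.mem_Ioc] at hj
    constructor
    · rcases Nat.eq_zero_or_pos i with h0 | h0
      · subst h0; simp [hsfun]
      · simp only [hsfun]; rw [if_neg (Nat.pos_iff_ne_zero.mp h0)]; omega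
    · simp only [hsfun]; rw [if_neg (Nat.succ_ne_zero i)]; omega
  have hspan : ∀ i, i < d → ∀ (c : ℕ → ℝ) (g : ℕ → X),
      (∀ j ∈ Finset.Ioc (α i) (α (i+1)), g j = e j ∨ g j = 0) →
      ∀ (A : Finset ℕ), A ⊆ Finset.Ioc (α i) (α (i+1)) →
      (c (i+1)) • ∑ j ∈ A, g j ∈
        Submodule.span ℝ (e '' {j | sfun i ≤ j ∧ j < sfun (i+1)}) := by
    intro i hi c g hg A hA
    refine Submodule.smul_mem _ _ (Submodule.sum_mem _ (fun j hj => ?_))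
    rcases hg j (hA hj) with h | h
    · rw [h]
      exact Submodule.subset_span ⟨j, hIocsub i hi j (hA hj), rfl⟩
    · rw [h]; exact Submodule.zero_mem _
  have hspanx : ∀ i, i < d → x i ∈
      Submodule.span ℝ (e '' {j | sfun i ≤ j ∧ j < sfun (i+1)}) := by
    intro i hi
    exact hspan i hi lam _ (fun j _ => by
        by_cases h : j ∈ Q <;> simp [Set.indicator_apply, h]) _ (subset_refl _)
  have hspany : ∀ i, i < d → y i ∈
      Submodule.span ℝ (e '' {j | sfun i ≤ j ∧ j < sfun (i+1)}) := by
    intro i hi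
    exact hspan i hi lam _ (fun j _ => Or.inl rfl) _
      (Finset.Ioc_subset_Ioc le_rfl (hβ (i+1) (Nat.le_add_left 1 i) hi))
  have hbx := hblock d x sfun hsmono hspanx
  have hby := hblock d y sfun hsmono hspany
  -- reindexing
  have reindex : ∀ (f : ℕ → X), ∑ s ∈ Finset.Icc 1 d, f s
      = ∑ i ∈ Finset.range d, f (i+1) := by
    intro f
    rw [← Finset.Ico_add_one_right_eq_Icc, Finset.sum_Ico_eq_sum_range]
    simp [add_comm]
  have hxsum : ∑ s ∈ Finset.Icc 1 d, lam s • ∑ i ∈ Finset.Ioc (α (s - 1)) (α s),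
      Set.indicator Q e i = ∑ i ∈ Finset.range d, x i := by
    rw [reindex]
    simp only [Nat.add_sub_cancel]
    rfl
  have hysum : ∑ s ∈ Finset.Icc 1 d, lam s • ∑ i ∈ Finset.Ioc (α (s - 1)) (β s), e i
      = ∑ i ∈ Finset.range d, y i := by
    rw [reindex]
    simp only [Nat.add_sub_cancel]
    rfl
  rw [hxsum] at h1
  rw [hysum]
  -- lower p estimate gives sum of p-th powers ≤ 1
  have hSp0 : (0:ℝ) ≤ ∑ i ∈ Finset.range d, ‖x i‖ ^ p :=
    Finset.sum_nonneg (fun i _ => Real.rpow_nonneg (norm_nonneg _) p)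
  have hsum_p : ∑ i ∈ Finset.range d, ‖x i‖ ^ p ≤ 1 := by
    have h2 : (∑ i ∈ Finset.range d, ‖x i‖ ^ p) ^ ((1:ℝ)/p) ≤ 1 := hbx.1.trans h1
    have h3 := Real.rpow_le_rpow (Real.rpow_nonneg hSp0 _) h2 (le_of_lt hp0)
    rwa [← Real.rpow_mul hSp0, one_div_mul_cancel (ne_of_gt hp0), Real.rpow_one,
      Real.one_rpow] at h3
  -- pointwise bound on ‖y i‖
  have hyx : ∀ i ∈ Finset.range d, ‖y i‖ ≤ (2 / C) * ‖x i‖ := by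
    intro i hi
    rw [Finset.mem_range] at hi
    have hs1 : 1 ≤ i + 1 := Nat.le_add_left 1 i
    have hsd : i + 1 ≤ d := hi
    have hnorm_e : ‖∑ j ∈ Finset.Ioc (α i) (β (i+1)), e j‖ ≤ psi e (β (i+1)) := by
      rw [psi_Ioc]
      have h4 : ∑ j ∈ Finset.Ioc (α i) (β (i+1)), e j
          = ∑ j ∈ Finset.Ioc (α i) (β (i+1)), (1:ℝ) • e j := by simp
      rw [h4]
      exact uncond_dom huncond _ _ _ (Finset.Ioc_subset_Ioc (Nat.zero_le _) le_rfl)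
        (fun j _ => by simp)
    have hkey' := hkey (i+1) hs1 hsd
    have hψb : psi e (β (i+1)) ≤ (2 / C) *
        ‖∑ j ∈ Finset.Ioc (α i) (α (i+1)), Set.indicator Q e j‖ := by
      have h5 : (C/2) * psi e (β (i+1)) ≤
          ‖∑ j ∈ Finset.Ioc (α i) (α (i+1)), Set.indicator Q e j‖ := by
        simpa using hkey'
      have h6 := mul_le_mul_of_nonneg_left h5 (le_of_lt (by positivity : (0:ℝ) < 2/C))
      calc psi e (β (i+1)) = (2/C) * ((C/2) * psi e (β (i+1))) := by
              field_simp
        _ ≤ _ := h6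
    calc ‖y i‖ = |lam (i+1)| * ‖∑ j ∈ Finset.Ioc (α i) (β (i+1)), e j‖ := by
          rw [hy]; simp [norm_smul]
      _ ≤ |lam (i+1)| * ((2/C) * ‖∑ j ∈ Finset.Ioc (α i) (α (i+1)),
            Set.indicator Q e j‖) :=
          mul_le_mul_of_nonneg_left (hnorm_e.trans hψb) (abs_nonneg _)
      _ = (2/C) * ‖x i‖ := by rw [hx]; simp [norm_smul]; ring
  -- upper q estimate and Hölder
  have h2C0 : (0:ℝ) < 2 / C := by positivity
  have hq_sum : ∑ i ∈ Finset.range d, ‖y i‖ ^ q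
      ≤ (2/C) ^ q * ∑ i ∈ Finset.range d, ‖x i‖ ^ q := by
    rw [Finset.mul_sum]
    refine Finset.sum_le_sum (fun i hi => ?_)
    calc ‖y i‖ ^ q ≤ ((2/C) * ‖x i‖) ^ q :=
          Real.rpow_le_rpow (norm_nonneg _) (hyx i hi) (le_of_lt hq0)
      _ = (2/C) ^ q * ‖x i‖ ^ q :=
          Real.mul_rpow (le_of_lt h2C0) (norm_nonneg _)
  have hSxq0 : (0:ℝ) ≤ ∑ i ∈ Finset.range d, ‖x i‖ ^ q :=
    Finset.sum_nonneg (fun i _ => Real.rpow_nonneg (norm_nonneg _) q)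
  have hSyq0 : (0:ℝ) ≤ ∑ i ∈ Finset.range d, ‖y i‖ ^ q :=
    Finset.sum_nonneg (fun i _ => Real.rpow_nonneg (norm_nonneg _) q)
  have hfinal : (∑ i ∈ Finset.range d, ‖y i‖ ^ q) ^ ((1:ℝ)/q)
      ≤ (2/C) * (d:ℝ) ^ δ := by
    calc (∑ i ∈ Finset.range d, ‖y i‖ ^ q) ^ ((1:ℝ)/q)
        ≤ ((2/C) ^ q * ∑ i ∈ Finset.range d, ‖x i‖ ^ q) ^ ((1:ℝ)/q) :=
          Real.rpow_le_rpow hSyq0 hq_sum (by positivity)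
      _ = (2/C) * (∑ i ∈ Finset.range d, ‖x i‖ ^ q) ^ ((1:ℝ)/q) := by
          rw [Real.mul_rpow (by positivity) hSxq0, ← Real.rpow_mul (le_of_lt h2C0),
            mul_one_div, div_self (ne_of_gt hq0), Real.rpow_one]
      _ ≤ (2/C) * (d:ℝ) ^ δ := by
          refine mul_le_mul_of_nonneg_left ?_ (le_of_lt h2C0)
          exact holder_aux d hd q p hq hqp (fun i => ‖x i‖)
            (fun i _ => norm_nonneg _) hsum_p
  have heq : (2/C) * (d:ℝ) ^ δ = ε / 4 := by
    rw [hC]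
    field_simp
    ring
  calc ‖∑ i ∈ Finset.range d, y i‖ ≤ (∑ i ∈ Finset.range d, ‖y i‖ ^ q) ^ ((1:ℝ)/q) := by
        simpa using hby.2
    _ ≤ (2/C) * (d:ℝ) ^ δ := hfinal
    _ = ε / 4 := heq

end core

/-- Lemma 3.2 of the paper: estimates obtained from lower `p` and upper `q`
estimates on block sequences and the growth of `ψ` along `M = {k_1 < k_2 < …}`. -/
theorem stmt_4 {X : Type*} [NormedAddCommGroup X] [NormedSpace ℝ X]
    (ε : ℝ) (hε : 0 < ε) (d : ℕ) (hd : 1 ≤ d)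
    (q p : ℝ) (hq : 1 ≤ q) (hqp : q ≤ p)
    (e : ℕ → X)
    (hnorm : ∀ i, 1 ≤ i → ‖e i‖ = 1)
    (huncond : ∀ (s : Finset ℕ) (a b : ℕ → ℝ), (∀ i ∈ s, |a i| ≤ |b i|) →
      ‖∑ i ∈ s, a i • e i‖ ≤ ‖∑ i ∈ s, b i • e i‖)
    (hblock : ∀ (N : ℕ) (x : ℕ → X) (s : ℕ → ℕ),
      (∀ i, i < N → s i < s (i + 1)) →
      (∀ i, i < N → x i ∈ Submodule.span ℝ (e '' {j | s i ≤ j ∧ j < s (i + 1)})) →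
      (∑ i ∈ Finset.range N, ‖x i‖ ^ p) ^ (1 / p) ≤ ‖∑ i ∈ Finset.range N, x i‖ ∧
        ‖∑ i ∈ Finset.range N, x i‖ ≤ (∑ i ∈ Finset.range N, ‖x i‖ ^ q) ^ (1 / q))
    (P : Set ℕ)
    (hP : ∀ k, (psi e k - 1) / 2 ≤ psiP e P k)
    (kseq : ℕ → ℕ)
    (hkmono : ∀ j, 1 ≤ j → kseq j < kseq (j + 1))
    (hgrowth : ∀ j, 1 ≤ j →
      (8 * (d : ℝ) ^ ((1 : ℝ) / q - 1 / p) / ε + 2) * psi e (kseq j) + 1 ≤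
        psi e (kseq (j + 1)))
    (m n : ℕ → ℕ) (hm0 : m 0 = 0) (hn0 : n 0 = 0)
    (hmM : ∀ s, 1 ≤ s → s ≤ d → ∃ j, 1 ≤ j ∧ m s = kseq j)
    (hnM : ∀ s, 1 ≤ s → s ≤ d → ∃ j, 1 ≤ j ∧ n s = kseq j)
    (hint1 : ∀ s, 1 ≤ s → s ≤ d → m s < n s)
    (hint2 : ∀ s, 1 ≤ s → s < d → n s < m (s + 1))
    (lam : ℕ → ℝ) (Q : Set ℕ) (hQ : Q = P ∨ Q = Pᶜ) :
    (‖∑ s ∈ Finset.Icc 1 d, lam s • ∑ i ∈ Finset.Ioc (n (s - 1)) (n s),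
          Set.indicator Q e i‖ ≤ 1 →
      ‖∑ s ∈ Finset.Icc 1 d, lam s • ∑ i ∈ Finset.Ioc (n (s - 1)) (m s), e i‖ ≤ ε / 4) ∧
    (‖∑ s ∈ Finset.Icc 1 d, lam s • ∑ i ∈ Finset.Ioc (m (s - 1)) (m s),
          Set.indicator Q e i‖ ≤ 1 →
      ‖∑ s ∈ Finset.Icc 1 d, lam s • ∑ i ∈ Finset.Ioc (m (s - 1)) (n (s - 1)), e i‖ ≤ ε / 4) := by
  set c : ℝ := 8 * (d : ℝ) ^ ((1 : ℝ) / q - 1 / p) / ε with hc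
  -- monotonicity of kseq
  have kmon : ∀ l j, 1 ≤ j → j ≤ l → kseq j ≤ kseq l := by
    intro l
    induction l with
    | zero => intro j hj hjl; omega
    | succ l ih =>
      intro j hj hjl
      rcases Nat.eq_or_lt_of_le hjl with h | h
      · rw [h]
      · exact (ih j hj (by omega)).trans (le_of_lt (hkmono l (by omega)))
  -- growth along M
  have hgrow2 : ∀ a b : ℕ, (∃ j, 1 ≤ j ∧ a = kseq j) → (∃ l, 1 ≤ l ∧ b = kseq l) →
      a < b → (c + 2) * psi e a + 1 ≤ psi e b := by
    rintro a b ⟨j, hj, rfl⟩ ⟨l, hl, rfl⟩ hab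
    have hjl : j < l := by
      by_contra h
      exact absurd (kmon j l hl (by omega)) (by omega)
    calc (c + 2) * psi e (kseq j) + 1 ≤ psi e (kseq (j + 1)) := hgrowth j hj
      _ ≤ psi e (kseq l) := psi_mono huncond (kmon l (j+1) (by omega) (by omega))
  -- lower bound for interval indicator sums
  have psiP_Ioc : ∀ k, psiP e P k =
      min ‖∑ i ∈ Finset.Ioc 0 k, Set.indicator P e i‖
          ‖∑ i ∈ Finset.Ioc 0 k, Set.indicator Pᶜ e i‖ := by
    intro k
    rw [psiP, ← Finset.Icc_add_one_left_eq_Ioc, zero_add]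
  have blow : ∀ a k : ℕ, a ≤ k →
      (psi e k - 1) / 2 - psi e a ≤ ‖∑ i ∈ Finset.Ioc a k, Set.indicator Q e i‖ := by
    intro a k hak
    have hsplit : ∑ i ∈ Finset.Ioc 0 a, Set.indicator Q e i
        + ∑ i ∈ Finset.Ioc a k, Set.indicator Q e i
        = ∑ i ∈ Finset.Ioc 0 k, Set.indicator Q e i :=
      Finset.sum_Ioc_consecutive _ (Nat.zero_le a) hak
    have h1 : (psi e k - 1) / 2 ≤ ‖∑ i ∈ Finset.Ioc 0 k, Set.indicator Q e i‖ := by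
      refine (hP k).trans ?_
      rcases hQ with h | h <;> rw [h, psiP_Ioc]
      · exact min_le_left _ _
      · exact min_le_right _ _
    have h2 : ‖∑ i ∈ Finset.Ioc 0 k, Set.indicator Q e i‖
        ≤ ‖∑ i ∈ Finset.Ioc 0 a, Set.indicator Q e i‖
          + ‖∑ i ∈ Finset.Ioc a k, Set.indicator Q e i‖ := by
      rw [← hsplit]; exact norm_add_le _ _
    have h3 : ‖∑ i ∈ Finset.Ioc 0 a, Set.indicator Q e i‖ ≤ psi e a := by
      rw [psi_Ioc]
      exact uncond_dom_ind huncond Q _ _ (subset_refl _)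
    linarith
  have hpsi0 : psi e 0 = 0 := by
    rw [psi]
    simp
  constructor
  · -- part (i)
    intro h1
    refine core_lemma ε hε d hd q p hq hqp e huncond hblock lam Q n (fun s => m s)
      ?_ ?_ ?_ h1
    · intro s hs1 hsd
      exact lt_trans (hint2 s hs1 hsd) (hint1 (s+1) (by omega) (by omega))
    · intro s hs1 hsd
      exact le_of_lt (hint1 s hs1 hsd)
    · intro s hs1 hsd
      show 8 * (d : ℝ) ^ ((1 : ℝ) / q - 1 / p) / ε / 2 * psi e (m s) ≤ _
      have hns : n (s - 1) ≤ m s := by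
        rcases Nat.eq_or_lt_of_le hs1 with h | h
        · rw [← h]; simp [hn0]
        · have := hint2 (s-1) (by omega) (by omega)
          rw [Nat.sub_add_cancel (by omega : 1 ≤ s)] at this
          omega
      have hb := blow (n (s-1)) (n s) (le_of_lt (lt_of_le_of_lt hns (hint1 s hs1 hsd)))
      have hg := hgrow2 (m s) (n s) (hmM s hs1 hsd) (hnM s hs1 hsd) (hint1 s hs1 hsd)
      have hmono := psi_mono (e := e) huncond hns
      have hexp1 : (c + 2) * psi e (m s) = c * psi e (m s) + 2 * psi e (m s) := by ring
      have hexp2 : c / 2 * psi e (m s) = (c * psi e (m s)) / 2 := by ring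
      have goal : c / 2 * psi e (m s) ≤ ‖∑ i ∈ Finset.Ioc (n (s-1)) (n s),
          Set.indicator Q e i‖ := by
        rw [hexp2]
        rw [hexp1] at hg
        linarith
      simpa [hc] using goal
  · -- part (ii)
    intro h1
    refine core_lemma ε hε d hd q p hq hqp e huncond hblock lam Q m (fun s => n (s-1))
      ?_ ?_ ?_ h1
    · intro s hs1 hsd
      exact lt_trans (hint1 s hs1 (by omega)) (hint2 s hs1 hsd)
    · intro s hs1 hsd
      show n (s - 1) ≤ m s
      rcases Nat.eq_or_lt_of_le hs1 with h | h
      · rw [← h]; simp [hn0]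
      · have := hint2 (s-1) (by omega) (by omega)
        rw [Nat.sub_add_cancel (by omega : 1 ≤ s)] at this
        omega
    · intro s hs1 hsd
      show 8 * (d : ℝ) ^ ((1 : ℝ) / q - 1 / p) / ε / 2 * psi e (n (s - 1)) ≤ _
      rcases Nat.eq_or_lt_of_le hs1 with h | h
      · rw [← h]
        simp [hn0, hpsi0]
      · have hmn : m (s-1) < n (s-1) := hint1 (s-1) (by omega) (by omega)
        have hnm : n (s-1) < m s := by
          have := hint2 (s-1) (by omega) (by omega)
          rw [Nat.sub_add_cancel (by omega : 1 ≤ s)] at this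
          omega
        have hb := blow (m (s-1)) (m s) (by omega)
        have hg := hgrow2 (n (s-1)) (m s) (hnM (s-1) (by omega) (by omega))
          (hmM s hs1 hsd) hnm
        have hmono := psi_mono (e := e) huncond (le_of_lt hmn)
        have hexp1 : (c + 2) * psi e (n (s-1)) = c * psi e (n (s-1))
            + 2 * psi e (n (s-1)) := by ring
        have hexp2 : c / 2 * psi e (n (s-1)) = (c * psi e (n (s-1))) / 2 := by ring
        have goal : c / 2 * psi e (n (s-1)) ≤ ‖∑ i ∈ Finset.Ioc (m (s-1)) (m s),
            Set.indicator Q e i‖ := by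
          rw [hexp2]
          rw [hexp1] at hg
          linarith
        simpa [hc] using goal
end

section
/- Let d ∈ ℕ with d ≥ 1, ε > 0, and 1 ≤ r < ∞. Let M = {a^(j−1) : j ≥ 1} ⊆ ℕ where a = ⌈(8/ε + 3)^r⌉. Let m̄, n̄ ∈ [M]^d with m_1 < n_1 < … < m_d < n_d and let k > n_d. Let F : S_{ℓ∞^k} → S_{ℓ_r^k} be a map that is both support preserving and step preserving. Then ‖F(z(m̄)) − F(z(n̄))‖_r > 1 − ε. -/
/-- The `ℓ_r` norm on `ℝ^k`. -/
noncomputable def lrNorm (r : ℝ) {k : ℕ} (x : Fin k → ℝ) : ℝ :=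
  (∑ i, |x i| ^ r) ^ (1 / r)

lemma aux_mono (f : ℕ → ℕ) (d : ℕ) (h : ∀ s, s < d → f s < f (s+1)) :
    ∀ s t, s ≤ t → t ≤ d → f s ≤ f t := by
  intro s t
  induction t with
  | zero => intro hst _; simp [Nat.le_zero.mp hst]
  | succ u ih =>
    intro hst htd
    rcases Nat.lt_or_ge s (u+1) with h1 | h1
    · exact le_trans (ih (by omega) (by omega)) (le_of_lt (h u (by omega)))
    · have : s = u + 1 := by omega
      simp [this]

lemma aux_find (f : ℕ → ℕ) (h0 : f 0 = 0) :
    ∀ t i, i < f t → ∃ s, 1 ≤ s ∧ s ≤ t ∧ f (s-1) ≤ i ∧ i < f s := by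
  intro t
  induction t with
  | zero => intro i hi; omega
  | succ u ih =>
    intro i hi
    rcases Nat.lt_or_ge i (f u) with h1 | h1
    · obtain ⟨s, hs⟩ := ih i h1
      exact ⟨s, hs.1, by omega, hs.2.2⟩
    · exact ⟨u+1, by omega, le_refl _, by simpa using h1, hi⟩

lemma sum_partition (G : ℕ → ℝ) (f : ℕ → ℕ) (h0 : f 0 = 0) :
    ∀ d, (∀ s, s < d → f s ≤ f (s+1)) →
      ∑ i ∈ Finset.range (f d), G i
        = ∑ s ∈ Finset.Icc 1 d, ∑ i ∈ Finset.Ico (f (s-1)) (f s), G i := by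
  intro d
  induction d with
  | zero => simp [h0]
  | succ t ih =>
    intro h
    have hmono : ∀ s, s < t → f s ≤ f (s+1) := fun s hs => h s (by omega)
    have h1 : f t ≤ f (t+1) := h t (by omega)
    rw [Finset.sum_Icc_succ_top (by omega : 1 ≤ t + 1), ← ih hmono, Nat.add_sub_cancel,
      Finset.range_eq_Ico, Finset.range_eq_Ico, Finset.sum_Ico_consecutive G (Nat.zero_le _) h1]

lemma sum_block_const (G : ℕ → ℝ) (aa bb p q : ℕ)
    (hconst : ∀ i, aa ≤ i → i < bb → G i = G aa)
    (hpa : aa ≤ p) (hqb : q ≤ bb) :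
    ∑ i ∈ Finset.Ico p q, G i = ((q - p : ℕ) : ℝ) * G aa := by
  rcases Nat.lt_or_ge p q with hpq | hpq
  · have hcg : ∀ i ∈ Finset.Ico p q, G i = G aa := by
      intro i hi; rw [Finset.mem_Ico] at hi; exact hconst i (by omega) (by omega)
    rw [Finset.sum_congr rfl hcg, Finset.sum_const, Nat.card_Ico, nsmul_eq_mul]
  · rw [Finset.Ico_eq_empty (by omega), (by omega : q - p = 0)]
    simp

lemma zVec_eq (d k : ℕ) (m : ℕ → ℕ) (hmono : ∀ s t, s ≤ t → t ≤ d → m s ≤ m t)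
    (s : ℕ) (hs1 : 1 ≤ s) (hsd : s ≤ d) (i : Fin k)
    (h1 : m (s-1) ≤ (i:ℕ)) (h2 : (i:ℕ) < m s) :
    zVec d k m i = 1 - ((s:ℝ)-1)/d := by
  unfold zVec
  rw [Finset.sum_eq_single s]
  · simp [h1, h2]
  · intro t ht hts
    rw [Finset.mem_Icc] at ht
    rcases Nat.lt_or_ge t s with hlt | hge
    · have hmt : m t ≤ m (s-1) := hmono t (s-1) (by omega) (by omega)
      have hni : ¬ ((i:ℕ) < m t) := by omega
      simp [hni]
    · have hms : m s ≤ m (t-1) := hmono s (t-1) (by omega) (by omega)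
      have hni : ¬ (m (t-1) ≤ (i:ℕ)) := by omega
      simp [hni]
  · intro hs; exact absurd (Finset.mem_Icc.mpr ⟨hs1, hsd⟩) hs

lemma zVec_zero' (d k : ℕ) (m : ℕ → ℕ) (hmono : ∀ s t, s ≤ t → t ≤ d → m s ≤ m t)
    (i : Fin k) (h : m d ≤ (i:ℕ)) : zVec d k m i = 0 := by
  unfold zVec
  apply Finset.sum_eq_zero
  intro t ht
  rw [Finset.mem_Icc] at ht
  have hmt : m t ≤ m d := hmono t d ht.2 le_rfl
  have hni : ¬ ((i:ℕ) < m t) := by omega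
  simp [hni]

lemma step_bounds (d s : ℕ) (hd : 1 ≤ d) (hs1 : 1 ≤ s) (hsd : s ≤ d) :
    0 < 1 - ((s:ℝ)-1)/d ∧ 1 - ((s:ℝ)-1)/d ≤ 1 := by
  have hdpos : (0:ℝ) < d := by positivity
  constructor
  · have : ((s:ℝ)-1)/d < 1 := by
      rw [div_lt_one hdpos]
      have : (s:ℝ) ≤ d := by exact_mod_cast hsd
      linarith
    linarith
  · have h1 : (0:ℝ) ≤ ((s:ℝ)-1)/d := by
      apply div_nonneg _ (le_of_lt hdpos)
      have : (1:ℝ) ≤ s := by exact_mod_cast hs1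
      linarith
    linarith

lemma supNorm_z (d k : ℕ) (hd : 1 ≤ d) (m : ℕ → ℕ) (hm0 : m 0 = 0) (hm1 : 1 ≤ m 1)
    (hmono : ∀ s t, s ≤ t → t ≤ d → m s ≤ m t) (hkpos : 0 < k) :
    supNorm (zVec d k m) = 1 := by
  have hbd : ∀ i : Fin k, |zVec d k m i| ≤ 1 := by
    intro i
    rcases Nat.lt_or_ge (i:ℕ) (m d) with hlt | hge
    · obtain ⟨s, hs1, hsd, hl, hu⟩ := aux_find m hm0 d i hlt
      rw [zVec_eq d k m hmono s hs1 hsd i hl hu]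
      obtain ⟨hb1, hb2⟩ := step_bounds d s hd hs1 hsd
      rw [abs_of_pos hb1]; exact hb2
    · rw [zVec_zero' d k m hmono i hge]; simp
  have h0 : zVec d k m ⟨0, hkpos⟩ = 1 := by
    have := zVec_eq d k m hmono 1 le_rfl hd ⟨0, hkpos⟩ (by simp [hm0]) (by simp; omega)
    simpa using this
  haveI : Nonempty (Fin k) := ⟨⟨0, hkpos⟩⟩
  unfold supNorm
  apply le_antisymm
  · exact ciSup_le hbd
  · have := le_ciSup (f := fun i : Fin k => |zVec d k m i|)
      (Set.Finite.bddAbove (Set.finite_range _)) ⟨0, hkpos⟩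
    rw [h0] at this
    simpa using this

set_option maxHeartbeats 2000000 in
/-- Lemma 4.1 of the paper: separation of the values of a support and step
preserving map `F : S_{ℓ∞^k} → S_{ℓ_r^k}` at interlacing staircase vectors built over
`M = {a^(j-1) : j ≥ 1}` with `a = ⌈(8/ε + 3)^r⌉`. -/
theorem stmt_8 (d : ℕ) (hd : 1 ≤ d) (ε : ℝ) (hε : 0 < ε) (r : ℝ) (hr : 1 ≤ r)
    (m n : ℕ → ℕ) (hm0 : m 0 = 0) (hn0 : n 0 = 0)
    (hmM : ∀ s, 1 ≤ s → s ≤ d → ∃ j : ℕ, m s = (⌈(8 / ε + 3 : ℝ) ^ r⌉₊) ^ j)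
    (hnM : ∀ s, 1 ≤ s → s ≤ d → ∃ j : ℕ, n s = (⌈(8 / ε + 3 : ℝ) ^ r⌉₊) ^ j)
    (hint1 : ∀ s, 1 ≤ s → s ≤ d → m s < n s)
    (hint2 : ∀ s, 1 ≤ s → s < d → n s < m (s + 1))
    (k : ℕ) (hk : n d < k)
    (F : (Fin k → ℝ) → (Fin k → ℝ))
    (hFmaps : ∀ x, supNorm x = 1 → lrNorm r (F x) = 1)
    (hsupp : ∀ x, supNorm x = 1 → ∀ i, (F x i ≠ 0 ↔ x i ≠ 0))
    (hstep : ∀ x, supNorm x = 1 → ∀ i j, x i = x j → F x i = F x j) :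
    1 - ε < lrNorm r (F (zVec d k m) - F (zVec d k n)) := by
  have hr0 : (0:ℝ) < r := lt_of_lt_of_le one_pos hr
  set a : ℕ := ⌈(8 / ε + 3 : ℝ) ^ r⌉₊ with ha_def
  set P : ℝ := (8 / ε + 3 : ℝ) ^ r with hP_def
  have hbase : (3:ℝ) ≤ 8/ε + 3 := by
    have : (0:ℝ) < 8/ε := by positivity
    linarith
  have hpow_ge : (8/ε + 3 : ℝ) ≤ P := by
    calc (8/ε + 3 : ℝ) = (8/ε + 3) ^ (1:ℝ) := (Real.rpow_one _).symm
    _ ≤ P := Real.rpow_le_rpow_of_exponent_le (by linarith) hr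
  have haR : P ≤ (a:ℝ) := Nat.le_ceil _
  have ha3 : 3 ≤ a := by
    have h3 : (3:ℝ) ≤ (a:ℝ) := le_trans (le_trans hbase hpow_ge) haR
    exact_mod_cast h3
  -- power gap lemma
  have hpow : ∀ x y : ℕ, (∃ j, x = a^j) → (∃ j, y = a^j) → x < y → a * x ≤ y := by
    rintro x y ⟨i, rfl⟩ ⟨j, rfl⟩ hxy
    have hij : i < j := (Nat.pow_lt_pow_iff_right (by omega : 1 < a)).mp hxy
    calc a * a ^ i = a ^ (i+1) := by ring
    _ ≤ a ^ j := Nat.pow_le_pow_right (by omega) (by omega)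
  have hm1pos : 1 ≤ m 1 := by
    obtain ⟨j, hj⟩ := hmM 1 le_rfl hd
    rw [hj]; exact Nat.one_le_pow _ _ (by omega)
  have hn1pos : 1 ≤ n 1 := by
    obtain ⟨j, hj⟩ := hnM 1 le_rfl hd
    rw [hj]; exact Nat.one_le_pow _ _ (by omega)
  have hstep_m : ∀ s, s < d → m s < m (s+1) := by
    intro s hs
    rcases Nat.eq_zero_or_pos s with rfl | hs1
    · simp [hm0]; omega
    · exact lt_trans (hint1 s hs1 (by omega)) (hint2 s hs1 hs)
  have hstep_n : ∀ s, s < d → n s < n (s+1) := by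
    intro s hs
    rcases Nat.eq_zero_or_pos s with rfl | hs1
    · simp [hn0]; omega
    · exact lt_trans (hint2 s hs1 hs) (hint1 (s+1) (by omega) (by omega))
  have hmono_m : ∀ s t, s ≤ t → t ≤ d → m s ≤ m t := aux_mono m d hstep_m
  have hmono_n : ∀ s t, s ≤ t → t ≤ d → n s ≤ n t := aux_mono n d hstep_n
  have hmn : ∀ s, s ≤ d → m s ≤ n s := by
    intro s hs
    rcases Nat.eq_zero_or_pos s with rfl | hs1
    · omega
    · exact le_of_lt (hint1 s hs1 hs)
  have hanm : ∀ s, 1 ≤ s → s ≤ d → a * n (s-1) ≤ m s := by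
    intro s hs1 hsd
    rcases Nat.eq_or_lt_of_le hs1 with h | h
    · rw [← h]; simp [hn0]
    · have h2 : 2 ≤ s := h
      have := hint2 (s-1) (by omega) (by omega)
      rw [(by omega : s - 1 + 1 = s)] at this
      exact hpow _ _ (hnM (s-1) (by omega) (by omega)) (hmM s hs1 hsd) this
  have hamn : ∀ s, 1 ≤ s → s ≤ d → a * m s ≤ n s := fun s hs1 hsd =>
    hpow _ _ (hmM s hs1 hsd) (hnM s hs1 hsd) (hint1 s hs1 hsd)
  have hmdk : m d < k := lt_of_le_of_lt (hmn d le_rfl) hk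
  have hkpos : 0 < k := by omega
  -- z vectors are on the sphere
  have hsm : supNorm (zVec d k m) = 1 := supNorm_z d k hd m hm0 hm1pos hmono_m hkpos
  have hsn : supNorm (zVec d k n) = 1 := supNorm_z d k hd n hn0 hn1pos hmono_n hkpos
  set u : Fin k → ℝ := F (zVec d k m) with hu_def
  set v : Fin k → ℝ := F (zVec d k n) with hv_def
  set rawU : ℕ → ℝ := fun i => if h : i < k then u ⟨i, h⟩ else 0 with hrawU
  set rawV : ℕ → ℝ := fun i => if h : i < k then v ⟨i, h⟩ else 0 with hrawV
  set G : ℕ → ℝ := fun i => |rawU i| ^ r with hG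
  set H : ℕ → ℝ := fun i => |rawV i| ^ r with hH
  have hGnn : ∀ i, 0 ≤ G i := fun i => Real.rpow_nonneg (abs_nonneg _) r
  have hHnn : ∀ i, 0 ≤ H i := fun i => Real.rpow_nonneg (abs_nonneg _) r
  -- conversion between range sums and Fin sums
  have hconv : ∀ (W : ℕ → ℝ) (w : Fin k → ℝ), (∀ i : Fin k, W i = w i) →
      ∑ i ∈ Finset.range k, W i = ∑ i : Fin k, w i := by
    intro W w hWw
    rw [← Fin.sum_univ_eq_sum_range]
    exact Finset.sum_congr rfl (fun i _ => hWw i)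
  -- norm-one conversion
  have hnorm_one : ∀ w : Fin k → ℝ, lrNorm r w = 1 → ∑ i : Fin k, |w i| ^ r = 1 := by
    intro w hw
    unfold lrNorm at hw
    have hS : (0:ℝ) ≤ ∑ i : Fin k, |w i| ^ r :=
      Finset.sum_nonneg fun i _ => Real.rpow_nonneg (abs_nonneg _) r
    have := congrArg (fun t : ℝ => t ^ r) hw
    simp only [Real.one_rpow] at this
    rw [← Real.rpow_mul hS, one_div, inv_mul_cancel₀ (ne_of_gt hr0), Real.rpow_one] at this
    exact this
  have hUsum : ∑ i ∈ Finset.range k, G i = 1 := by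
    rw [hconv G (fun i => |u i| ^ r) (fun i => by simp [hG, hrawU, i.isLt])]
    exact hnorm_one u (hFmaps _ hsm)
  have hVsum : ∑ i ∈ Finset.range k, H i = 1 := by
    rw [hconv H (fun i => |v i| ^ r) (fun i => by simp [hH, hrawV, i.isLt])]
    exact hnorm_one v (hFmaps _ hsn)
  -- constancy on blocks
  have hconstU : ∀ s, 1 ≤ s → s ≤ d → ∀ i, m (s-1) ≤ i → i < m s → G i = G (m (s-1)) := by
    intro s hs1 hsd i hl hu'
    have hik : i < k := lt_of_lt_of_le hu' (le_trans (hmono_m s d hsd le_rfl) (le_of_lt hmdk))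
    have hbk : m (s-1) < k := lt_of_le_of_lt hl hik
    have hz1 : zVec d k m ⟨i, hik⟩ = 1 - ((s:ℝ)-1)/d := zVec_eq d k m hmono_m s hs1 hsd _ hl hu'
    have hz2 : zVec d k m ⟨m (s-1), hbk⟩ = 1 - ((s:ℝ)-1)/d :=
      zVec_eq d k m hmono_m s hs1 hsd _ le_rfl (by
        simpa using hmono_m (s-1) s (by omega) hsd |>.lt_of_ne (by
          have := hstep_m (s-1) (by omega)
          rw [(by omega : s - 1 + 1 = s)] at this
          omega))
    have := hstep (zVec d k m) hsm ⟨i, hik⟩ ⟨m (s-1), hbk⟩ (hz1.trans hz2.symm)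
    simp only [hG, hrawU, dif_pos hik, dif_pos hbk]
    rw [← hu_def] at this
    rw [this]
  have hconstV : ∀ s, 1 ≤ s → s ≤ d → ∀ i, n (s-1) ≤ i → i < n s → H i = H (n (s-1)) := by
    intro s hs1 hsd i hl hu'
    have hik : i < k := lt_of_lt_of_le hu' (le_trans (hmono_n s d hsd le_rfl) (le_of_lt hk))
    have hbk : n (s-1) < k := lt_of_le_of_lt hl hik
    have hz1 : zVec d k n ⟨i, hik⟩ = 1 - ((s:ℝ)-1)/d := zVec_eq d k n hmono_n s hs1 hsd _ hl hu'
    have hz2 : zVec d k n ⟨n (s-1), hbk⟩ = 1 - ((s:ℝ)-1)/d :=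
      zVec_eq d k n hmono_n s hs1 hsd _ le_rfl (by
        have := hstep_n (s-1) (by omega)
        rw [(by omega : s - 1 + 1 = s)] at this
        simpa using this)
    have := hstep (zVec d k n) hsn ⟨i, hik⟩ ⟨n (s-1), hbk⟩ (hz1.trans hz2.symm)
    simp only [hH, hrawV, dif_pos hik, dif_pos hbk]
    rw [← hv_def] at this
    rw [this]
  -- tails vanish
  have hGtail : ∀ i, m d ≤ i → G i = 0 := by
    intro i hi
    simp only [hG, hrawU]
    by_cases hik : i < k
    · rw [dif_pos hik]
      have hz : zVec d k m ⟨i, hik⟩ = 0 := zVec_zero' d k m hmono_m _ hi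
      have hu0 : u ⟨i, hik⟩ = 0 := by
        by_contra h
        exact (not_not.mpr hz) ((hsupp _ hsm ⟨i, hik⟩).mp h)
      rw [hu0]
      simp [Real.zero_rpow (ne_of_gt hr0)]
    · rw [dif_neg hik]
      simp [Real.zero_rpow (ne_of_gt hr0)]
  have hHtail : ∀ i, n d ≤ i → H i = 0 := by
    intro i hi
    simp only [hH, hrawV]
    by_cases hik : i < k
    · rw [dif_pos hik]
      have hz : zVec d k n ⟨i, hik⟩ = 0 := zVec_zero' d k n hmono_n _ hi
      have hv0 : v ⟨i, hik⟩ = 0 := by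
        by_contra h
        exact (not_not.mpr hz) ((hsupp _ hsn ⟨i, hik⟩).mp h)
      rw [hv0]
      simp [Real.zero_rpow (ne_of_gt hr0)]
    · rw [dif_neg hik]
      simp [Real.zero_rpow (ne_of_gt hr0)]
  -- full block sums equal 1
  have hUfull : ∑ s ∈ Finset.Icc 1 d, ((m s - m (s-1) : ℕ) : ℝ) * G (m (s-1)) = 1 := by
    have h1 : ∑ i ∈ Finset.range (m d), G i
        = ∑ s ∈ Finset.Icc 1 d, ∑ i ∈ Finset.Ico (m (s-1)) (m s), G i :=
      sum_partition G m hm0 d (fun s hs => le_of_lt (hstep_m s hs))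
    have h2 : ∑ i ∈ Finset.range k, G i = ∑ i ∈ Finset.range (m d), G i := by
      rw [Finset.range_eq_Ico,
        ← Finset.sum_Ico_consecutive G (Nat.zero_le (m d)) (le_of_lt hmdk)]
      have ht0 : ∑ i ∈ Finset.Ico (m d) k, G i = 0 :=
        Finset.sum_eq_zero fun i hi => hGtail i (Finset.mem_Ico.mp hi).1
      rw [ht0, add_zero, Finset.range_eq_Ico]
    have h3 : ∀ s ∈ Finset.Icc 1 d, ∑ i ∈ Finset.Ico (m (s-1)) (m s), G i
        = ((m s - m (s-1) : ℕ) : ℝ) * G (m (s-1)) := by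
      intro s hs
      rw [Finset.mem_Icc] at hs
      exact sum_block_const G (m (s-1)) (m s) (m (s-1)) (m s)
        (hconstU s hs.1 hs.2) le_rfl le_rfl
    rw [← Finset.sum_congr rfl h3, ← h1, ← h2, hUsum]
  have hVfull : ∑ s ∈ Finset.Icc 1 d, ((n s - n (s-1) : ℕ) : ℝ) * H (n (s-1)) = 1 := by
    have h1 : ∑ i ∈ Finset.range (n d), H i
        = ∑ s ∈ Finset.Icc 1 d, ∑ i ∈ Finset.Ico (n (s-1)) (n s), H i :=
      sum_partition H n hn0 d (fun s hs => le_of_lt (hstep_n s hs))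
    have h2 : ∑ i ∈ Finset.range k, H i = ∑ i ∈ Finset.range (n d), H i := by
      rw [Finset.range_eq_Ico,
        ← Finset.sum_Ico_consecutive H (Nat.zero_le (n d)) (le_of_lt hk)]
      have ht0 : ∑ i ∈ Finset.Ico (n d) k, H i = 0 :=
        Finset.sum_eq_zero fun i hi => hHtail i (Finset.mem_Ico.mp hi).1
      rw [ht0, add_zero, Finset.range_eq_Ico]
    have h3 : ∀ s ∈ Finset.Icc 1 d, ∑ i ∈ Finset.Ico (n (s-1)) (n s), H i
        = ((n s - n (s-1) : ℕ) : ℝ) * H (n (s-1)) := by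
      intro s hs
      rw [Finset.mem_Icc] at hs
      exact sum_block_const H (n (s-1)) (n s) (n (s-1)) (n s)
        (hconstV s hs.1 hs.2) le_rfl le_rfl
    rw [← Finset.sum_congr rfl h3, ← h1, ← h2, hVsum]
  -- sums over the separating region
  set SAu : ℝ := ∑ s ∈ Finset.Icc 1 d, ((m s - n (s-1) : ℕ) : ℝ) * G (m (s-1)) with hSAu_def
  set SAv : ℝ := ∑ s ∈ Finset.Icc 1 d, ((m s - n (s-1) : ℕ) : ℝ) * H (n (s-1)) with hSAv_def
  have hSAu_eq : ∑ s ∈ Finset.Icc 1 d, ∑ i ∈ Finset.Ico (n (s-1)) (m s), G i = SAu :=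
    Finset.sum_congr rfl fun s hs => by
      rw [Finset.mem_Icc] at hs
      exact sum_block_const G (m (s-1)) (m s) (n (s-1)) (m s) (hconstU s hs.1 hs.2)
        (hmn (s-1) (by omega)) le_rfl
  have hSAv_eq : ∑ s ∈ Finset.Icc 1 d, ∑ i ∈ Finset.Ico (n (s-1)) (m s), H i = SAv :=
    Finset.sum_congr rfl fun s hs => by
      rw [Finset.mem_Icc] at hs
      exact sum_block_const H (n (s-1)) (n s) (n (s-1)) (m s) (hconstV s hs.1 hs.2)
        le_rfl (le_of_lt (hint1 s hs.1 hs.2))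
  have haRpos : (0:ℝ) < (a:ℝ) := by
    have : (0:ℕ) < a := by omega
    exact_mod_cast this
  have ha3R : (3:ℝ) ≤ (a:ℝ) := by exact_mod_cast ha3
  have h1a_nn : (0:ℝ) ≤ 1 - 1/(a:ℝ) := by
    have : 1/(a:ℝ) ≤ 1 := by
      rw [div_le_one haRpos]; linarith
    linarith
  -- lower bound for SAu
  have hSAu_lb : 1 - 1/(a:ℝ) ≤ SAu := by
    have hterm : ∀ s ∈ Finset.Icc 1 d,
        (1 - 1/(a:ℝ)) * (((m s - m (s-1) : ℕ) : ℝ) * G (m (s-1)))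
          ≤ ((m s - n (s-1) : ℕ) : ℝ) * G (m (s-1)) := by
      intro s hs
      rw [Finset.mem_Icc] at hs
      have h1 : a * n (s-1) ≤ m s := hanm s hs.1 hs.2
      have h2 : n (s-1) ≤ m s := le_trans (Nat.le_mul_of_pos_left _ (by omega)) h1
      have h3 : m (s-1) ≤ m s := hmono_m (s-1) s (by omega) hs.2
      have hcoef : (1 - 1/(a:ℝ)) * ((m s - m (s-1) : ℕ) : ℝ) ≤ ((m s - n (s-1) : ℕ) : ℝ) := by
        rw [Nat.cast_sub h2, Nat.cast_sub h3]
        have hc1 : (a:ℝ) * (n (s-1):ℝ) ≤ (m s:ℝ) := by exact_mod_cast h1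
        have hn_le : (n (s-1):ℝ) ≤ (m s:ℝ) * (1/(a:ℝ)) := by
          rw [mul_one_div, le_div_iff₀ haRpos, mul_comm]
          exact hc1
        have f1 : (0:ℝ) ≤ (m (s-1):ℝ) * (1 - 1/(a:ℝ)) :=
          mul_nonneg (Nat.cast_nonneg _) h1a_nn
        nlinarith [f1, hn_le]
      calc (1 - 1/(a:ℝ)) * (((m s - m (s-1) : ℕ) : ℝ) * G (m (s-1)))
          = ((1 - 1/(a:ℝ)) * ((m s - m (s-1) : ℕ) : ℝ)) * G (m (s-1)) := by ring
      _ ≤ ((m s - n (s-1) : ℕ) : ℝ) * G (m (s-1)) :=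
          mul_le_mul_of_nonneg_right hcoef (hGnn _)
    calc 1 - 1/(a:ℝ)
        = (1 - 1/(a:ℝ)) * ∑ s ∈ Finset.Icc 1 d, ((m s - m (s-1) : ℕ) : ℝ) * G (m (s-1)) := by
          rw [hUfull, mul_one]
    _ = ∑ s ∈ Finset.Icc 1 d,
          (1 - 1/(a:ℝ)) * (((m s - m (s-1) : ℕ) : ℝ) * G (m (s-1))) := Finset.mul_sum _ _ _
    _ ≤ SAu := Finset.sum_le_sum hterm
  -- upper bound for SAv
  have ha1pos : (0:ℝ) < (a:ℝ) - 1 := by linarith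
  have hSAv_ub : SAv ≤ 1/((a:ℝ)-1) := by
    have hterm : ∀ s ∈ Finset.Icc 1 d,
        ((m s - n (s-1) : ℕ) : ℝ) * H (n (s-1))
          ≤ (1/((a:ℝ)-1)) * (((n s - n (s-1) : ℕ) : ℝ) * H (n (s-1))) := by
      intro s hs
      rw [Finset.mem_Icc] at hs
      have h1 : a * m s ≤ n s := hamn s hs.1 hs.2
      have h1' : a * n (s-1) ≤ m s := hanm s hs.1 hs.2
      have h2 : n (s-1) ≤ m s := le_trans (Nat.le_mul_of_pos_left _ (by omega)) h1'
      have h4 : n (s-1) ≤ n s := hmono_n (s-1) s (by omega) hs.2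
      have hcoef : ((m s - n (s-1) : ℕ) : ℝ)
          ≤ ((n s - n (s-1) : ℕ) : ℝ) * (1/((a:ℝ)-1)) := by
        rw [Nat.cast_sub h2, Nat.cast_sub h4, mul_one_div, le_div_iff₀ ha1pos]
        have hc1 : (a:ℝ) * (m s:ℝ) ≤ (n s:ℝ) := by exact_mod_cast h1
        have hc2 : (n (s-1):ℝ) ≤ (m s:ℝ) := by exact_mod_cast h2
        have hc3 : (0:ℝ) ≤ (n (s-1):ℝ) := Nat.cast_nonneg _
        nlinarith [hc1, hc2, hc3, mul_nonneg (by linarith : (0:ℝ) ≤ (a:ℝ) - 1) hc3]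
      calc ((m s - n (s-1) : ℕ) : ℝ) * H (n (s-1))
          ≤ (((n s - n (s-1) : ℕ) : ℝ) * (1/((a:ℝ)-1))) * H (n (s-1)) :=
            mul_le_mul_of_nonneg_right hcoef (hHnn _)
      _ = (1/((a:ℝ)-1)) * (((n s - n (s-1) : ℕ) : ℝ) * H (n (s-1))) := by ring
    calc SAv ≤ ∑ s ∈ Finset.Icc 1 d,
          (1/((a:ℝ)-1)) * (((n s - n (s-1) : ℕ) : ℝ) * H (n (s-1))) := Finset.sum_le_sum hterm
    _ = (1/((a:ℝ)-1)) * ∑ s ∈ Finset.Icc 1 d, ((n s - n (s-1) : ℕ) : ℝ) * H (n (s-1)) :=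
          (Finset.mul_sum _ _ _).symm
    _ = 1/((a:ℝ)-1) := by rw [hVfull, mul_one]
  -- the separating region as a single finset
  set T : Finset ℕ := (Finset.Icc 1 d).biUnion (fun s => Finset.Ico (n (s-1)) (m s)) with hT
  have hdisj : (↑(Finset.Icc 1 d) : Set ℕ).PairwiseDisjoint
      (fun s => Finset.Ico (n (s-1)) (m s)) := by
    have key : ∀ s' t', 1 ≤ s' → s' ≤ d → 1 ≤ t' → t' ≤ d → s' < t' →
        Disjoint (Finset.Ico (n (s'-1)) (m s')) (Finset.Ico (n (t'-1)) (m t')) := by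
      intro s' t' h1 h2 h3 h4 h5
      rw [Finset.disjoint_left]
      intro i hi1 hi2
      rw [Finset.mem_Ico] at hi1 hi2
      have c1 : m s' ≤ n s' := hmn s' h2
      have c2 : n s' ≤ n (t'-1) := hmono_n s' (t'-1) (by omega) (by omega)
      omega
    intro s hs t ht hst
    simp only [Finset.coe_Icc, Set.mem_Icc] at hs ht
    rcases lt_or_gt_of_ne hst with h | h
    · exact key s t hs.1 hs.2 ht.1 ht.2 h
    · exact (key t s ht.1 ht.2 hs.1 hs.2 h).symm
  have hTsub : T ⊆ Finset.range k := by
    intro i hi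
    rw [hT, Finset.mem_biUnion] at hi
    obtain ⟨s, hs, hi2⟩ := hi
    rw [Finset.mem_Icc] at hs
    rw [Finset.mem_Ico] at hi2
    rw [Finset.mem_range]
    exact lt_of_lt_of_le hi2.2 (le_trans (hmono_m s d hs.2 le_rfl) (le_of_lt hmdk))
  have hTU : ∑ i ∈ T, G i = SAu := by rw [hT, Finset.sum_biUnion hdisj]; exact hSAu_eq
  have hTV : ∑ i ∈ T, H i = SAv := by rw [hT, Finset.sum_biUnion hdisj]; exact hSAv_eq
  -- Minkowski
  have hmink := Real.Lp_add_le T (fun i => rawU i - rawV i) rawV hr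
  simp only [sub_add_cancel] at hmink
  have h1r_nn : (0:ℝ) ≤ 1/r := by positivity
  have h1r_le1 : 1/r ≤ 1 := by rw [div_le_one hr0]; exact hr
  have hSAu_nn : (0:ℝ) ≤ SAu := by
    rw [hSAu_def]
    exact Finset.sum_nonneg fun s _ => mul_nonneg (Nat.cast_nonneg _) (hGnn _)
  have hSAv_nn : (0:ℝ) ≤ SAv := by
    rw [hSAv_def]
    exact Finset.sum_nonneg fun s _ => mul_nonneg (Nat.cast_nonneg _) (hHnn _)
  have hTD_le : ∑ i ∈ T, |rawU i - rawV i| ^ r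
      ≤ ∑ i ∈ Finset.range k, |rawU i - rawV i| ^ r :=
    Finset.sum_le_sum_of_subset_of_nonneg hTsub
      (fun i _ _ => Real.rpow_nonneg (abs_nonneg _) r)
  have hDconv : ∑ i ∈ Finset.range k, |rawU i - rawV i| ^ r
      = ∑ i : Fin k, |(u - v) i| ^ r :=
    hconv _ _ (fun i => by simp [hrawU, hrawV, i.isLt])
  have hmid : (∑ i ∈ T, |rawU i - rawV i| ^ r) ^ (1/r) ≤ lrNorm r (u - v) := by
    have hle : ∑ i ∈ T, |rawU i - rawV i| ^ r ≤ ∑ i : Fin k, |(u - v) i| ^ r := by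
      rw [← hDconv]; exact hTD_le
    have := Real.rpow_le_rpow
      (Finset.sum_nonneg fun i _ => Real.rpow_nonneg (abs_nonneg _) r) hle h1r_nn
    exact this
  have hfinal1 : SAu ^ (1/r) ≤ lrNorm r (u - v) + SAv ^ (1/r) := by
    have e1 : ∑ i ∈ T, |rawU i| ^ r = SAu := hTU
    have e2 : ∑ i ∈ T, |rawV i| ^ r = SAv := hTV
    rw [← e1, ← e2]
    calc (∑ i ∈ T, |rawU i| ^ r) ^ (1/r)
        ≤ (∑ i ∈ T, |rawU i - rawV i| ^ r) ^ (1/r) + (∑ i ∈ T, |rawV i| ^ r) ^ (1/r) := hmink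
    _ ≤ lrNorm r (u - v) + (∑ i ∈ T, |rawV i| ^ r) ^ (1/r) := by
        exact add_le_add_left hmid _
  -- numerical estimates
  have haε : 8/ε ≤ (a:ℝ) := by linarith
  have hA1 : 1 - ε/8 ≤ SAu ^ (1/r) := by
    have hi1 : 1/(a:ℝ) ≤ ε/8 := by
      have := one_div_le_one_div_of_le (by positivity : (0:ℝ) < 8/ε) haε
      rwa [one_div_div] at this
    have hi2 : 1 - 1/(a:ℝ) ≤ (1 - 1/(a:ℝ)) ^ (1/r) := by
      have hx1 : 1 - 1/(a:ℝ) ≤ 1 := by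
        have : (0:ℝ) < 1/(a:ℝ) := by positivity
        linarith
      have hx0 : (0:ℝ) < 1 - 1/(a:ℝ) := by
        have : 1/(a:ℝ) ≤ 1/3 := by
          apply one_div_le_one_div_of_le (by norm_num) ha3R
        linarith
      calc 1 - 1/(a:ℝ) = (1 - 1/(a:ℝ)) ^ (1:ℝ) := (Real.rpow_one _).symm
      _ ≤ (1 - 1/(a:ℝ)) ^ (1/r) := Real.rpow_le_rpow_of_exponent_ge hx0 hx1 h1r_le1
    have hi3 : (1 - 1/(a:ℝ)) ^ (1/r) ≤ SAu ^ (1/r) :=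
      Real.rpow_le_rpow h1a_nn hSAu_lb h1r_nn
    linarith
  have hA2 : SAv ^ (1/r) ≤ ε/4 := by
    have hi1 : SAv ^ (1/r) ≤ (1/((a:ℝ)-1)) ^ (1/r) :=
      Real.rpow_le_rpow hSAv_nn hSAv_ub h1r_nn
    have hPnn : (0:ℝ) ≤ 8/ε + 3 := by positivity
    have hPr : (P/2) ^ (1/r) = (8/ε+3) / 2 ^ (1/r) := by
      rw [hP_def, Real.div_rpow (Real.rpow_nonneg hPnn r) (by norm_num : (0:ℝ) ≤ 2),
        ← Real.rpow_mul hPnn, mul_one_div_cancel (ne_of_gt hr0), Real.rpow_one]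
    have h2r : (2:ℝ) ^ (1/r) ≤ 2 := by
      calc (2:ℝ) ^ (1/r) ≤ 2 ^ (1:ℝ) :=
        Real.rpow_le_rpow_of_exponent_le (by norm_num) h1r_le1
      _ = 2 := Real.rpow_one 2
    have h2rpos : (0:ℝ) < 2 ^ (1/r) := Real.rpow_pos_of_pos (by norm_num) _
    have hstep1 : (8/ε+3)/2 ≤ (P/2) ^ (1/r) := by
      rw [hPr, div_eq_mul_one_div, div_eq_mul_one_div (8/ε+3)]
      apply mul_le_mul_of_nonneg_left _ hPnn
      exact one_div_le_one_div_of_le h2rpos h2r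
    have hstep2 : (P/2) ^ (1/r) ≤ ((a:ℝ)-1) ^ (1/r) := by
      apply Real.rpow_le_rpow (by positivity) _ h1r_nn
      linarith
    have ha1r : 4/ε ≤ ((a:ℝ)-1) ^ (1/r) := by
      have h4 : 4/ε ≤ (8/ε+3)/2 := by
        have : 8/ε = 2 * (4/ε) := by ring
        linarith
      linarith
    have hrw : (1/((a:ℝ)-1)) ^ (1/r) = 1 / ((a:ℝ)-1) ^ (1/r) := by
      rw [Real.div_rpow (by norm_num) (le_of_lt ha1pos), Real.one_rpow]
    have hi2 : (1/((a:ℝ)-1)) ^ (1/r) ≤ ε/4 := by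
      rw [hrw]
      calc 1 / ((a:ℝ)-1) ^ (1/r) ≤ 1/(4/ε) :=
        one_div_le_one_div_of_le (by positivity) ha1r
      _ = ε/4 := one_div_div _ _
    linarith
  show 1 - ε < lrNorm r (u - v)
  linarith [hfinal1, hA1, hA2]
end

section
/- Let k ∈ ℕ and let F : S_{ℓ∞^k} → S⁺_{ℓ1^k} be any map. Then the map G = (1/k!)·∑_{π ∈ Per_k} P_{π^{-1}} ∘ F ∘ P_π, where the sum is over all permutations π of {1,…,k}, is a well-defined map from S_{ℓ∞^k} into S⁺_{ℓ1^k}, is equivariant with respect to basis permutations, and satisfies ω_G(t) ≤ ω_F(t) for all t ≥ 0. Furthermore, if F is support preserving then so is G. -/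
/-- The modulus of uniform continuity of `F : S_{ℓ∞^k} → ℓ1^k` at `t`. -/
noncomputable def modCont {k : ℕ} (F : (Fin k → ℝ) → (Fin k → ℝ)) (t : ℝ) : ℝ :=
  sSup {u : ℝ | ∃ x y : Fin k → ℝ, supNorm x = 1 ∧ supNorm y = 1 ∧
    supNorm (x - y) ≤ t ∧ u = l1Norm (F x - F y)}

lemma supNorm_comp_perm {k : ℕ} (x : Fin k → ℝ) (π : Equiv.Perm (Fin k)) :
    supNorm (x ∘ π) = supNorm x := by
  simp only [supNorm, Function.comp_apply]
  exact Equiv.iSup_comp (g := fun i => |x i|) π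

/-- Lemma 4.3 of the paper: the average
`G = (1/k!)·∑_{π} P_{π⁻¹} ∘ F ∘ P_π` of a map `F : S_{ℓ∞^k} → S⁺_{ℓ1^k}` maps into
`S⁺_{ℓ1^k}`, is equivariant with respect to basis permutations, satisfies `ω_G ≤ ω_F`, and
is support preserving whenever `F` is. -/
theorem stmt_10 (k : ℕ)
    (F : (Fin k → ℝ) → (Fin k → ℝ))
    (hFmaps : ∀ x, supNorm x = 1 → l1Norm (F x) = 1 ∧ ∀ i, 0 ≤ F x i)
    (G : (Fin k → ℝ) → (Fin k → ℝ))
    (hG : ∀ x j, G x j = (k.factorial : ℝ)⁻¹ *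
      ∑ π : Equiv.Perm (Fin k), F (x ∘ π) (π.symm j)) :
    (∀ x, supNorm x = 1 → l1Norm (G x) = 1 ∧ ∀ i, 0 ≤ G x i) ∧
    (∀ x, supNorm x = 1 → ∀ π : Equiv.Perm (Fin k), G (x ∘ π) = (G x) ∘ π) ∧
    (∀ t : ℝ, 0 ≤ t → modCont G t ≤ modCont F t) ∧
    ((∀ x, supNorm x = 1 → ∀ i, (F x i ≠ 0 ↔ x i ≠ 0)) →
      ∀ x, supNorm x = 1 → ∀ i, (G x i ≠ 0 ↔ x i ≠ 0)) := by
  have hfact : (0:ℝ) < (k.factorial : ℝ) := by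
    exact_mod_cast k.factorial_pos
  have hsphere : ∀ x : Fin k → ℝ, supNorm x = 1 → ∀ π : Equiv.Perm (Fin k),
      supNorm (x ∘ π) = 1 := fun x hx π => by rw [supNorm_comp_perm]; exact hx
  have hGnn : ∀ x, supNorm x = 1 → ∀ i, 0 ≤ G x i := by
    intro x hx i
    rw [hG]
    exact mul_nonneg (inv_nonneg.2 hfact.le)
      (Finset.sum_nonneg fun π _ => (hFmaps _ (hsphere x hx π)).2 _)
  refine ⟨?_, ?_, ?_, ?_⟩
  · -- maps into S⁺
    intro x hx
    refine ⟨?_, hGnn x hx⟩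
    have h1 : ∀ π : Equiv.Perm (Fin k), ∑ j, F (x ∘ ⇑π) (π.symm j) = 1 := by
      intro π
      rw [Equiv.sum_comp π.symm (fun i => F (x ∘ ⇑π) i)]
      have h := (hFmaps _ (hsphere x hx π)).1
      unfold l1Norm at h
      rw [← h]
      exact Finset.sum_congr rfl fun i _ =>
        (abs_of_nonneg ((hFmaps _ (hsphere x hx π)).2 i)).symm
    unfold l1Norm
    have habs : ∀ j, |G x j| = G x j := fun j => abs_of_nonneg (hGnn x hx j)
    simp_rw [habs, hG, ← Finset.mul_sum]
    rw [Finset.sum_comm]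
    simp_rw [h1]
    rw [Finset.sum_const, Finset.card_univ, Fintype.card_perm, Fintype.card_fin, nsmul_eq_mul, mul_one]
    exact inv_mul_cancel₀ hfact.ne'
  · -- equivariance
    intro x _ π
    funext j
    rw [Function.comp_apply, hG, hG]
    congr 1
    rw [← Equiv.sum_comp (Equiv.mulLeft π) (fun τ : Equiv.Perm (Fin k) => F (x ∘ ⇑τ) (τ.symm (π j)))]
    refine Finset.sum_congr rfl fun σ _ => ?_
    have h1 : x ∘ ⇑(Equiv.mulLeft π σ) = (x ∘ ⇑π) ∘ ⇑σ := by
      funext i; simp [Equiv.Perm.mul_apply]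
    have h2 : (Equiv.mulLeft π σ).symm (π j) = σ.symm j := by
      rw [Equiv.symm_apply_eq]; simp [Equiv.Perm.mul_apply]
    rw [h1, h2]
  · -- modulus of continuity
    intro t ht
    set SF := {u : ℝ | ∃ x y : Fin k → ℝ, supNorm x = 1 ∧ supNorm y = 1 ∧
      supNorm (x - y) ≤ t ∧ u = l1Norm (F x - F y)} with hSF
    set SG := {u : ℝ | ∃ x y : Fin k → ℝ, supNorm x = 1 ∧ supNorm y = 1 ∧
      supNorm (x - y) ≤ t ∧ u = l1Norm (G x - G y)} with hSG
    have hbdd : BddAbove SF := by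
      refine ⟨2, ?_⟩
      rintro u ⟨x, y, hx, hy, -, rfl⟩
      have hx1 := (hFmaps x hx).1
      have hy1 := (hFmaps y hy).1
      have : l1Norm (F x - F y) ≤ l1Norm (F x) + l1Norm (F y) := by
        unfold l1Norm
        rw [← Finset.sum_add_distrib]
        exact Finset.sum_le_sum fun i _ => by
          simpa using abs_sub_le (F x i) 0 (F y i)
      linarith
    have hmc : modCont G t = sSup SG := rfl
    have hmcF : modCont F t = sSup SF := rfl
    rw [hmc, hmcF]
    rcases Set.eq_empty_or_nonempty SG with hemp | hne
    · have hFemp : SF = ∅ := by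
        rw [Set.eq_empty_iff_forall_notMem]
        rintro u ⟨x, y, hx, hy, hxy, -⟩
        exact Set.eq_empty_iff_forall_notMem.1 hemp (l1Norm (G x - G y))
          ⟨x, y, hx, hy, hxy, rfl⟩
      rw [hemp, hFemp]
    · obtain ⟨u0, x0, y0, hx0, hy0, hxy0, -⟩ := hne
      have hSnn : 0 ≤ sSup SF := by
        refine le_trans ?_ (le_csSup hbdd ⟨x0, y0, hx0, hy0, hxy0, rfl⟩)
        exact Finset.sum_nonneg fun i _ => abs_nonneg _
      apply Real.sSup_le _ hSnn
      rintro u ⟨x, y, hx, hy, hxy, rfl⟩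
      have key : ∀ π : Equiv.Perm (Fin k),
          l1Norm (F (x ∘ ⇑π) - F (y ∘ ⇑π)) ≤ sSup SF := by
        intro π
        refine le_csSup hbdd ⟨x ∘ ⇑π, y ∘ ⇑π, hsphere x hx π, hsphere y hy π, ?_, rfl⟩
        have : x ∘ ⇑π - y ∘ ⇑π = (x - y) ∘ ⇑π := rfl
        rw [this, supNorm_comp_perm]
        exact hxy
      have step : ∀ j, |G x j - G y j| ≤ (k.factorial : ℝ)⁻¹ *
          ∑ π : Equiv.Perm (Fin k),
            |F (x ∘ ⇑π) (π.symm j) - F (y ∘ ⇑π) (π.symm j)| := by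
        intro j
        rw [hG, hG, ← mul_sub, ← Finset.sum_sub_distrib, abs_mul,
          abs_of_nonneg (inv_nonneg.2 hfact.le)]
        exact mul_le_mul_of_nonneg_left (Finset.abs_sum_le_sum_abs _ _)
          (inv_nonneg.2 hfact.le)
      calc l1Norm (G x - G y)
          = ∑ j, |G x j - G y j| := rfl
        _ ≤ ∑ j, ((k.factorial : ℝ)⁻¹ * ∑ π : Equiv.Perm (Fin k),
              |F (x ∘ ⇑π) (π.symm j) - F (y ∘ ⇑π) (π.symm j)|) :=
            Finset.sum_le_sum fun j _ => step j
        _ = (k.factorial : ℝ)⁻¹ * ∑ π : Equiv.Perm (Fin k), ∑ j,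
              |F (x ∘ ⇑π) (π.symm j) - F (y ∘ ⇑π) (π.symm j)| := by
            rw [← Finset.mul_sum, Finset.sum_comm]
        _ = (k.factorial : ℝ)⁻¹ * ∑ π : Equiv.Perm (Fin k),
              l1Norm (F (x ∘ ⇑π) - F (y ∘ ⇑π)) := by
            congr 1
            refine Finset.sum_congr rfl fun π _ => ?_
            unfold l1Norm
            simp only [Pi.sub_apply]
            rw [← Equiv.sum_comp π.symm
              (fun i => |F (x ∘ ⇑π) i - F (y ∘ ⇑π) i|)]
        _ ≤ (k.factorial : ℝ)⁻¹ * ∑ _π : Equiv.Perm (Fin k), sSup SF := by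
            refine mul_le_mul_of_nonneg_left ?_ (inv_nonneg.2 hfact.le)
            exact Finset.sum_le_sum fun π _ => key π
        _ = sSup SF := by
            rw [Finset.sum_const, Finset.card_univ, Fintype.card_perm, Fintype.card_fin, nsmul_eq_mul]
            exact inv_mul_cancel_left₀ hfact.ne' _
  · -- support preserving
    intro hsupp x hx i
    have hterm : ∀ π : Equiv.Perm (Fin k),
        (F (x ∘ ⇑π) (π.symm i) ≠ 0 ↔ x i ≠ 0) := by
      intro π
      rw [hsupp _ (hsphere x hx π) (π.symm i)]
      simp
    rw [hG]
    constructor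
    · intro h
      intro hxi
      apply h
      rw [Finset.sum_eq_zero fun π _ => by
        by_contra hne
        exact (hterm π).1 hne hxi, mul_zero]
    · intro hxi
      have hpos : 0 < ∑ π : Equiv.Perm (Fin k), F (x ∘ ⇑π) (π.symm i) := by
        refine Finset.sum_pos (fun π _ => ?_) Finset.univ_nonempty
        exact lt_of_le_of_ne ((hFmaps _ (hsphere x hx π)).2 _)
          (Ne.symm ((hterm π).2 hxi))
      exact (mul_pos (inv_pos.2 hfact) hpos).ne'
end

section
/- Let d ∈ ℕ with d ≥ 1 and 1 ≤ r < ∞. Then for every k ≥ ⌈19^r⌉^(2d−1) + 1 and every step preserving continuous map F : S_{ℓ∞^k} → S_{ℓ_r^k} such that F(1,…,1) ≠ F(−1,…,−1), one has ω_F(1/d) ≥ 1/2, i.e., there exist x, y ∈ S_{ℓ∞^k} with ‖x − y‖_∞ ≤ 1/d and ‖F(x) − F(y)‖_r ≥ 1/2. -/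
open Finset

/-! ### clamp -/

noncomputable def cl (x : ℝ) : ℝ := max (-1) (min 1 x)

lemma cl_le_one (x : ℝ) : cl x ≤ 1 := by
  unfold cl; simp [max_le_iff, min_le_iff]

lemma neg_one_le_cl (x : ℝ) : -1 ≤ cl x := le_max_left _ _

lemma abs_cl_le_one (x : ℝ) : |cl x| ≤ 1 :=
  abs_le.2 ⟨neg_one_le_cl x, cl_le_one x⟩

lemma cl_of_one_le (x : ℝ) (h : 1 ≤ x) : cl x = 1 := by
  unfold cl
  rw [min_eq_left h, max_eq_right (by norm_num)]

lemma cl_of_le_neg_one (x : ℝ) (h : x ≤ -1) : cl x = -1 := by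
  unfold cl
  rw [min_eq_right (by linarith), max_eq_left h]

lemma cl_lipschitz (a b : ℝ) : |cl a - cl b| ≤ |a - b| := by
  have h1 : |cl a - cl b| ≤ |min 1 a - min 1 b| := by
    unfold cl
    rw [max_comm (-1) (min 1 a), max_comm (-1) (min 1 b)]
    exact abs_max_sub_max_le_abs _ _ _
  have h2 : |min 1 a - min 1 b| ≤ max |(1:ℝ) - 1| |a - b| := abs_min_sub_min_le_max _ _ _ _
  simp only [sub_self, abs_zero] at h2
  exact h1.trans (h2.trans (by simp [abs_nonneg]))

/-! ### norm lemmas -/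

section Norms

variable {k : ℕ} {r : ℝ}

lemma supNorm_le [NeZero k] {x : Fin k → ℝ} {c : ℝ} (h : ∀ i, |x i| ≤ c) : supNorm x ≤ c :=
  ciSup_le h

lemma supNorm_eq_one [NeZero k] {x : Fin k → ℝ} (h : ∀ i, |x i| ≤ 1) (i₀ : Fin k)
    (h0 : |x i₀| = 1) : supNorm x = 1 := by
  refine le_antisymm (ciSup_le h) ?_
  rw [← h0]
  exact le_ciSup (f := fun i => |x i|) (Set.Finite.bddAbove (Set.finite_range _)) i₀

lemma sum_rpow_nonneg (x : Fin k → ℝ) : 0 ≤ ∑ i, |x i| ^ r :=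
  Finset.sum_nonneg fun i _ => Real.rpow_nonneg (abs_nonneg _) _

lemma lrNorm_eq_one_sum (hr : 1 ≤ r) {x : Fin k → ℝ} (h : lrNorm r x = 1) :
    ∑ i, |x i| ^ r = 1 := by
  have hr0 : r ≠ 0 := by positivity
  have h0 : 0 ≤ ∑ i, |x i| ^ r := sum_rpow_nonneg x
  have := congrArg (fun t : ℝ => t ^ r) h
  simp only [lrNorm] at this
  rw [← Real.rpow_mul h0, one_div, inv_mul_cancel₀ hr0, Real.rpow_one, Real.one_rpow] at this
  exact this

lemma lrNorm_lt_sum (hr : 1 ≤ r) {x : Fin k → ℝ} {c : ℝ} (h : lrNorm r x < c) :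
    ∑ i, |x i| ^ r < c ^ r := by
  have hr0 : r ≠ 0 := by positivity
  have h0 : 0 ≤ ∑ i, |x i| ^ r := sum_rpow_nonneg x
  have hln : 0 ≤ lrNorm r x := Real.rpow_nonneg h0 _
  have h1 : (lrNorm r x) ^ r < c ^ r :=
    Real.rpow_lt_rpow hln h (by positivity)
  calc ∑ i, |x i| ^ r = ((∑ i, |x i| ^ r) ^ (1/r)) ^ r := by
        rw [← Real.rpow_mul h0, one_div, inv_mul_cancel₀ hr0, Real.rpow_one]
    _ < c ^ r := h1

lemma minkowski_sub (hr : 1 ≤ r) (s : Finset (Fin k)) (f g : Fin k → ℝ) :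
    (∑ i ∈ s, |f i| ^ r) ^ (1/r) ≤
      (∑ i ∈ s, |f i - g i| ^ r) ^ (1/r) + (∑ i ∈ s, |g i| ^ r) ^ (1/r) := by
  have := Real.Lp_add_le s (fun i => f i - g i) g hr
  simpa using this

lemma lrNorm_triangle (hr : 1 ≤ r) (f g : Fin k → ℝ) :
    lrNorm r (f + g) ≤ lrNorm r f + lrNorm r g := by
  have := Real.Lp_add_le (univ : Finset (Fin k)) f g hr
  simpa [lrNorm] using this

end Norms

/-! ### numeric endgame -/

lemma sqrt_half_bounds : 0.7 ≤ Real.sqrt (1/2) ∧ Real.sqrt (1/2) ≤ 0.71 := by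
  have h0 : (0:ℝ) ≤ Real.sqrt (1/2) := Real.sqrt_nonneg _
  have h1 : Real.sqrt (1/2) ^ 2 = 1/2 := Real.sq_sqrt (by norm_num)
  constructor <;> nlinarith [h0, h1]

lemma numeric_endgame {r τ α β βc : ℝ} (hr : 1 ≤ r) (hτ0 : 0 < τ) (hτ : τ ≤ 1/7)
    (hα0 : 0 ≤ α) (hαr : 1/2 ≤ α ^ r) (hα1 : α ^ r ≤ 1)
    (hβ0 : 0 ≤ β) (hβc0 : 0 ≤ βc)
    (h1 : α ≤ β ^ (1/r) + τ)
    (h2 : (1 - τ ^ r) ^ (1/r) ≤ βc ^ (1/r) + (1 - α ^ r) ^ (1/r))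
    (hlt : β + βc < (1/2) ^ r) : False := by
  have hrpos : (0:ℝ) < r := by linarith
  have hrne : r ≠ 0 := ne_of_gt hrpos
  have hrinv : (0:ℝ) < 1/r := by positivity
  set s := Real.sqrt (1/2) with hs
  obtain ⟨hs1, hs2⟩ := sqrt_half_bounds
  have hsrpow : s = (1/2 : ℝ) ^ ((1:ℝ)/2) := by
    rw [hs, Real.sqrt_eq_rpow]
  have hA : (1/2 : ℝ) ^ ((1:ℝ)/r) ≤ α := by
    have := Real.rpow_le_rpow (by norm_num : (0:ℝ) ≤ 1/2) hαr (le_of_lt hrinv)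
    rwa [← Real.rpow_mul hα0, mul_one_div, div_self hrne, Real.rpow_one] at this
  have haeq : (β ^ ((1:ℝ)/r)) ^ r = β := by
    rw [← Real.rpow_mul hβ0, one_div, inv_mul_cancel₀ hrne, Real.rpow_one]
  rcases le_total 2 r with hr2 | hr2
  · have hA2 : (1/2 : ℝ) ^ ((1:ℝ)/2) ≤ (1/2 : ℝ) ^ ((1:ℝ)/r) := by
      apply Real.rpow_le_rpow_of_exponent_ge (by norm_num) (by norm_num)
      rw [div_le_div_iff₀ hrpos (by norm_num)]
      linarith
    have hαge : 0.7 ≤ α := by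
      calc (0.7 : ℝ) ≤ s := hs1
        _ = (1/2 : ℝ) ^ ((1:ℝ)/2) := hsrpow
        _ ≤ (1/2 : ℝ) ^ ((1:ℝ)/r) := hA2
        _ ≤ α := hA
    have hb : (1/2 : ℝ) < β ^ ((1:ℝ)/r) := by
      have h6 : α - τ ≤ β ^ ((1:ℝ)/r) := by linarith
      have h7 : (1/2 : ℝ) < α - τ := by linarith
      linarith
    have : (1/2 : ℝ) ^ r < β := by
      have := Real.rpow_lt_rpow (by norm_num : (0:ℝ) ≤ 1/2) hb hrpos
      rwa [haeq] at this
    linarith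
  · set a := β ^ ((1:ℝ)/r) with ha
    set b := βc ^ ((1:ℝ)/r) with hb
    have ha0 : 0 ≤ a := Real.rpow_nonneg hβ0 _
    have hb0 : 0 ≤ b := Real.rpow_nonneg hβc0 _
    have hbeq : b ^ r = βc := by
      rw [hb, ← Real.rpow_mul hβc0, one_div, inv_mul_cancel₀ hrne, Real.rpow_one]
    have hτ1 : τ ≤ 1 := by linarith
    have hτr : τ ^ r ≤ τ := by
      have := Real.rpow_le_rpow_of_exponent_ge hτ0 hτ1 hr
      rwa [Real.rpow_one] at this
    have h1mτ : (1 - τ) ^ r ≤ 1 - τ := by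
      have h01 : (0:ℝ) < 1 - τ := by linarith
      have := Real.rpow_le_rpow_of_exponent_ge h01 (by linarith) hr
      rwa [Real.rpow_one] at this
    have key1 : 1 - τ ≤ (1 - τ ^ r) ^ ((1:ℝ)/r) := by
      have hle : (1 - τ) ^ r ≤ 1 - τ ^ r := by linarith
      have := Real.rpow_le_rpow (Real.rpow_nonneg (by linarith) _) hle (le_of_lt hrinv)
      rwa [← Real.rpow_mul (by linarith : (0:ℝ) ≤ 1 - τ), mul_one_div, div_self hrne,
        Real.rpow_one] at this
    have key2 : (1 - α ^ r) ^ ((1:ℝ)/r) ≤ (1/2 : ℝ) ^ ((1:ℝ)/r) := by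
      apply Real.rpow_le_rpow (by linarith) (by linarith) (le_of_lt hrinv)
    have hA2' : (1/2 : ℝ) ^ ((1:ℝ)/r) ≤ s := by
      rw [hsrpow]
      apply Real.rpow_le_rpow_of_exponent_ge (by norm_num) (by norm_num)
      rw [div_le_div_iff₀ (by norm_num) hrpos]
      linarith
    have hab : 1 - 2*τ ≤ a + b := by
      have hbge : (1 - τ) - (1/2 : ℝ) ^ ((1:ℝ)/r) ≤ b := by
        have k2 : (1 - α ^ r) ^ ((1:ℝ)/r) ≤ (1/2 : ℝ) ^ ((1:ℝ)/r) := key2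
        linarith
      have hage : (1/2 : ℝ) ^ ((1:ℝ)/r) - τ ≤ a := by linarith
      linarith
    have hab57 : (5/7 : ℝ) ≤ a + b := by linarith
    have hpm : ((a + b)/2) ^ r ≤ (a ^ r + b ^ r)/2 := by
      have hc := (convexOn_rpow (p := r) hr).2 (Set.mem_Ici.2 ha0) (Set.mem_Ici.2 hb0)
        (by norm_num : (0:ℝ) ≤ 1/2) (by norm_num : (0:ℝ) ≤ 1/2) (by norm_num)
      simp only [smul_eq_mul] at hc
      calc ((a + b)/2) ^ r = ((1/2)*a + (1/2)*b) ^ r := by ring_nf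
        _ ≤ (1/2)*a^r + (1/2)*b^r := hc
        _ = (a ^ r + b ^ r)/2 := by ring
    have h514 : ((5/14 : ℝ)) ^ r ≤ ((a+b)/2) ^ r := by
      apply Real.rpow_le_rpow (by norm_num) (by linarith) (le_of_lt hrpos)
    have hfin : (1/2 : ℝ) ^ r ≤ 2 * (5/14 : ℝ) ^ r := by
      have hmul : (1/2 : ℝ) ^ r = (7/5 : ℝ) ^ r * (5/14 : ℝ) ^ r := by
        rw [← Real.mul_rpow (by norm_num) (by norm_num)]
        norm_num
      have h75 : (7/5 : ℝ) ^ r ≤ (7/5 : ℝ) ^ (2:ℝ) :=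
        Real.rpow_le_rpow_of_exponent_le (by norm_num) hr2
      have h752 : (7/5 : ℝ) ^ (2:ℝ) = 49/25 := by
        rw [show (2:ℝ) = ((2:ℕ):ℝ) by norm_num, Real.rpow_natCast]
        norm_num
      have hpos : (0:ℝ) ≤ (5/14 : ℝ) ^ r := Real.rpow_nonneg (by norm_num) _
      rw [hmul]
      have h2' : (7/5 : ℝ) ^ r ≤ 2 := by rw [h752] at h75; linarith
      exact mul_le_mul_of_nonneg_right h2' hpos
    have : (1/2 : ℝ) ^ r ≤ β + βc := by
      calc (1/2 : ℝ) ^ r ≤ 2 * (5/14 : ℝ) ^ r := hfin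
        _ ≤ 2 * ((a+b)/2) ^ r := by linarith
        _ ≤ a ^ r + b ^ r := by linarith
        _ = β + βc := by rw [haeq, hbeq]
    linarith

/-! ### combinatorial indexing -/

def gg (Q m : ℕ) : ℕ := ∑ i ∈ range m, Q ^ i

lemma gg_succ (Q m : ℕ) : gg Q (m+1) = gg Q m + Q ^ m := by
  simp [gg, Finset.sum_range_succ]

lemma gg_mono {Q : ℕ} (hQ : 1 ≤ Q) : Monotone (gg Q) := by
  intro a b hab
  exact Finset.sum_le_sum_of_subset (Finset.range_subset_range.2 hab)

lemma gg_le_pow {Q : ℕ} (hQ : 2 ≤ Q) (m : ℕ) : gg Q m ≤ Q ^ m := by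
  induction m with
  | zero => simp [gg]
  | succ n ih =>
    rw [gg_succ]
    have h1 : Q ^ (n+1) = Q * Q ^ n := by ring
    have h2 : 2 * Q ^ n ≤ Q * Q ^ n := Nat.mul_le_mul_right _ hQ
    omega

def mIdx (Q d i : ℕ) : ℕ := Nat.findGreatest (fun m => gg Q m ≤ i) (d+1)

lemma mIdx_le (Q d i : ℕ) : mIdx Q d i ≤ d + 1 := Nat.findGreatest_le _

lemma gg_mIdx_le (Q d i : ℕ) : gg Q (mIdx Q d i) ≤ i := by
  unfold mIdx
  exact Nat.findGreatest_spec (P := fun m => gg Q m ≤ i) (Nat.zero_le _) (by simp [gg])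

lemma lt_gg_mIdx_succ {Q d i : ℕ} (h : mIdx Q d i < d + 1) : i < gg Q (mIdx Q d i + 1) := by
  by_contra hc
  push_neg at hc
  have := Nat.le_findGreatest (P := fun m => gg Q m ≤ i) (Nat.succ_le_of_lt h) hc
  unfold mIdx at this
  omega

lemma mIdx_eq_iff {Q d i m : ℕ} (hQ : 1 ≤ Q) (hm : m ≤ d) :
    mIdx Q d i = m ↔ gg Q m ≤ i ∧ i < gg Q (m+1) := by
  constructor
  · intro h
    refine ⟨h ▸ gg_mIdx_le Q d i, h ▸ lt_gg_mIdx_succ (by omega)⟩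
  · rintro ⟨h1, h2⟩
    have hge : m ≤ mIdx Q d i := Nat.le_findGreatest (by omega) h1
    have hle : mIdx Q d i ≤ m := by
      by_contra hc
      push_neg at hc
      have hmono : gg Q (m+1) ≤ gg Q (mIdx Q d i) := gg_mono hQ hc
      have := gg_mIdx_le Q d i
      omega
    omega

lemma mIdx_eq_top_iff {Q d i : ℕ} : mIdx Q d i = d + 1 ↔ gg Q (d+1) ≤ i := by
  constructor
  · intro h
    have := gg_mIdx_le Q d i
    rwa [h] at this
  · intro h
    exact le_antisymm (mIdx_le Q d i) (Nat.le_findGreatest le_rfl h)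

lemma card_filter_Ico {k : ℕ} (a b : ℕ) (hb : b ≤ k) :
    (univ.filter fun i : Fin k => a ≤ i.1 ∧ i.1 < b).card = b - a := by
  rw [← Nat.card_Ico a b]
  apply Finset.card_bij (fun (i : Fin k) _ => i.1)
  · intro i hi
    simp only [mem_filter, mem_univ, true_and] at hi
    simpa [Finset.mem_Ico] using hi
  · intro i hi j hj hij
    exact Fin.ext hij
  · intro j hj
    simp only [Finset.mem_Ico] at hj
    exact ⟨⟨j, lt_of_lt_of_le hj.2 hb⟩, by simp [hj.1, hj.2], rfl⟩

lemma nat_budget {d : ℕ} (hd : 2 ≤ d) : 2 * 8 ^ (d+1) ≤ 19 ^ (2*d - 1) := by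
  induction d with
  | zero => omega
  | succ n ih =>
    rcases Nat.lt_or_ge n 2 with hn | hn
    · interval_cases n
      · omega
      · norm_num
    · have h1 := ih hn
      have h2 : 2 * (n+1) - 1 = (2*n - 1) + 2 := by omega
      have h3 : 2 * 8 ^ (n + 1 + 1) ≤ 19 ^ (2*n-1) * 8 := by
        have he : 2 * 8 ^ (n+1+1) = 2 * 8 ^ (n+1) * 8 := by ring
        rw [he]
        exact Nat.mul_le_mul_right _ h1
      have h4 : 19 ^ (2*n-1) * 8 ≤ 19 ^ ((2*n-1)+2) := by
        rw [pow_add]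
        exact Nat.mul_le_mul_left _ (by norm_num)
      rw [h2]
      omega

noncomputable def off (d m : ℕ) : ℝ := if m ≤ d then (2*((d:ℝ) + 1 - m) - 1)/d else 0

noncomputable def tgt (d m : ℕ) : ℝ := if m = d then 0 else (off d m + off d (m+1))/2

noncomputable def noff (d q m : ℕ) : ℝ :=
  if m ≤ d ∧ m % 2 = q then tgt d m
  else if 1 ≤ m ∧ m ≤ d + 1 ∧ (m - 1) % 2 = q then tgt d (m-1)
  else off d m

section OffLemmas

variable {d m q : ℕ}

lemma off_nonneg (hd : 1 ≤ d) (m : ℕ) : 0 ≤ off d m := by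
  have hdp : (0:ℝ) < d := by exact_mod_cast hd
  unfold off
  split
  · next h =>
    have h1 : (m:ℝ) ≤ d := by exact_mod_cast h
    apply div_nonneg (by linarith) (by linarith)
  · exact le_rfl

lemma off_of_le (hm : m ≤ d) : off d m = (2*((d:ℝ) + 1 - m) - 1)/d := if_pos hm

lemma off_zero : off d 0 = (2*(d:ℝ) + 1)/d := by
  rw [off_of_le (Nat.zero_le d)]
  push_cast
  ring_nf

lemma off_d : off d d = 1/d := by
  rw [off_of_le le_rfl]
  ring_nf

lemma off_top : off d (d+1) = 0 := by
  unfold off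
  rw [if_neg (by omega)]

lemma off_le_off_zero (hd : 1 ≤ d) (m : ℕ) : off d m ≤ off d 0 := by
  have hdp : (0:ℝ) < d := by exact_mod_cast hd
  rw [off_zero]
  unfold off
  split
  · next h =>
    have h1 : (0:ℝ) ≤ m := by positivity
    gcongr
    linarith
  · positivity

lemma tgt_of_lt (hm : m < d) : tgt d m = 2*((d:ℝ) - m)/d := by
  unfold tgt
  rw [if_neg (by omega), off_of_le (by omega), off_of_le (by omega)]
  have hc : ((m+1 : ℕ):ℝ) = (m:ℝ) + 1 := by push_cast; ring
  rw [hc]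
  ring

lemma tgt_d : tgt d d = 0 := if_pos rfl

lemma abs_off_sub_tgt (hd : 1 ≤ d) (hm : m ≤ d) : |off d m - tgt d m| ≤ 1/d := by
  have hdp : (0:ℝ) < d := by exact_mod_cast hd
  rcases eq_or_lt_of_le hm with rfl | hlt
  · rw [off_d, tgt_d, sub_zero, abs_of_nonneg (by positivity)]
  · rw [off_of_le hm, tgt_of_lt hlt]
    have hm1 : (m:ℝ) ≤ d := by exact_mod_cast hm
    rw [show (2*((d:ℝ) + 1 - m) - 1)/d - 2*((d:ℝ) - m)/d = 1/d by field_simp; ring]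
    rw [abs_of_nonneg (by positivity)]

lemma abs_off_succ_sub_tgt (hd : 1 ≤ d) (hm : m ≤ d) : |off d (m+1) - tgt d m| ≤ 1/d := by
  have hdp : (0:ℝ) < d := by exact_mod_cast hd
  rcases eq_or_lt_of_le hm with rfl | hlt
  · rw [off_top, tgt_d, sub_zero, abs_zero]
    positivity
  · rw [off_of_le (by omega), tgt_of_lt hlt]
    have hm1 : (m:ℝ) < d := by exact_mod_cast hlt
    have hc : ((m+1 : ℕ):ℝ) = (m:ℝ) + 1 := by push_cast; ring
    rw [hc]
    have he : (2*((d:ℝ) + 1 - ((m:ℝ)+1)) - 1)/d - 2*((d:ℝ) - m)/d = -(1/d) := by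
      field_simp
      ring
    rw [he, abs_neg, abs_of_nonneg (by positivity)]

lemma noff_pair_left (hm : m ≤ d) (hq : m % 2 = q) : noff d q m = tgt d m := by
  unfold noff
  rw [if_pos ⟨hm, hq⟩]

lemma noff_pair_right (hm : m ≤ d) (hq : m % 2 = q) : noff d q (m+1) = tgt d m := by
  unfold noff
  rw [if_neg (by omega), if_pos ⟨by omega, by omega, by omega⟩]
  norm_num

lemma noff_B (hd : 1 ≤ d) (q : ℕ) : noff d q (d+1) = 0 := by
  unfold noff
  rw [if_neg (by omega)]
  split
  · next h => rw [show d + 1 - 1 = d by omega, tgt_d]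
  · exact off_top

lemma abs_noff_sub_off (hd : 1 ≤ d) (q m : ℕ) : |noff d q m - off d m| ≤ 1/d := by
  have hdp : (0:ℝ) < d := by exact_mod_cast hd
  unfold noff
  split
  · next h =>
      rw [abs_sub_comm]
      exact abs_off_sub_tgt hd h.1
  · split
    · next h2 =>
      obtain ⟨h21, h22, h23⟩ := h2
      have hle : m - 1 ≤ d := by omega
      have := abs_off_succ_sub_tgt hd hle
      rw [show m - 1 + 1 = m by omega] at this
      rw [abs_sub_comm]
      exact this
    · rw [sub_self, abs_zero]
      positivity

end OffLemmas
lemma case_d_ge_two (d k : ℕ) (hd2 : 2 ≤ d) (r : ℝ) (hr : 1 ≤ r)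
    (hk : (⌈(19 : ℝ) ^ r⌉₊) ^ (2 * d - 1) + 1 ≤ k)
    (F : (Fin k → ℝ) → (Fin k → ℝ))
    (hFmaps : ∀ x, supNorm x = 1 → lrNorm r (F x) = 1)
    (hFcont : ContinuousOn F {x | supNorm x = 1})
    (hstep : ∀ x, supNorm x = 1 → ∀ i j, x i = x j → F x i = F x j)
    (hcon : ∀ x y : Fin k → ℝ, supNorm x = 1 → supNorm y = 1 →
      supNorm (x - y) ≤ 1 / (d : ℝ) → lrNorm r (F x - F y) < 1 / 2)
    (cP : ℝ) (hcPne : cP ≠ 0)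
    (hFone : ∀ i, F (fun _ => (1:ℝ)) i = cP)
    (hFmone : ∀ i, F (fun _ => (-1:ℝ)) i = -cP) : False := by
  have hr0 : (0:ℝ) < r := lt_of_lt_of_le one_pos hr
  have hrne : r ≠ 0 := ne_of_gt hr0
  have hd1 : 1 ≤ d := by omega
  have hdr : (0:ℝ) < d := by exact_mod_cast (by omega : 0 < d)
  -- ### the scale constant Q and the size budget
  set N := ⌈(19 : ℝ) ^ r⌉₊ with hN_def
  have hN19 : (19:ℝ) ^ r ≤ N := Nat.le_ceil _
  set Q := ⌈(7:ℝ) ^ r⌉₊ with hQ_def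
  have h7r : (7:ℝ) ^ r ≤ Q := Nat.le_ceil _
  have h7ge : (7:ℝ) ≤ (7:ℝ) ^ r := by
    calc (7:ℝ) = 7 ^ (1:ℝ) := (Real.rpow_one _).symm
      _ ≤ 7 ^ r := Real.rpow_le_rpow_of_exponent_le (by norm_num) hr
  have hQ7 : (7:ℝ) ≤ Q := le_trans h7ge h7r
  have hQ2 : 2 ≤ Q := by exact_mod_cast le_trans (by norm_num : (2:ℝ) ≤ 7) hQ7
  have hQ1 : 1 ≤ Q := by omega
  have hQle8 : (Q:ℝ) ≤ 8 ^ r := by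
    have hceil : (Q:ℝ) < 7 ^ r + 1 := Nat.ceil_lt_add_one (by positivity)
    have h8 : (7:ℝ) ^ r + 1 ≤ 8 ^ r := by
      have h87 : (8:ℝ) ^ r = (8/7) ^ r * 7 ^ r := by
        rw [← Real.mul_rpow (by norm_num) (by norm_num)]
        norm_num
      have hge : (8/7:ℝ) ≤ (8/7) ^ r := by
        calc (8/7:ℝ) = (8/7) ^ (1:ℝ) := (Real.rpow_one _).symm
          _ ≤ (8/7) ^ r := Real.rpow_le_rpow_of_exponent_le (by norm_num) hr
      have h7p : (0:ℝ) ≤ 7 ^ r := by positivity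
      calc (7:ℝ) ^ r + 1 ≤ (7:ℝ) ^ r + (1/7) * 7 ^ r := by nlinarith
        _ = (8/7) * 7 ^ r := by ring
        _ ≤ (8/7) ^ r * 7 ^ r := by nlinarith
        _ = 8 ^ r := h87.symm
    linarith
  have hQk : 2 * Q ^ (d+1) ≤ k := by
    have hcast : ((2 * Q ^ (d+1) : ℕ) : ℝ) ≤ ((N ^ (2*d - 1) : ℕ) : ℝ) := by
      push_cast
      have s1 : ((Q:ℝ)) ^ (d+1) ≤ ((8:ℝ) ^ r) ^ (d+1) :=
        pow_le_pow_left₀ (by positivity) hQle8 _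
      have s2 : ((8:ℝ) ^ r) ^ (d+1) = ((8:ℝ) ^ (d+1) : ℝ) ^ r := by
        rw [← Real.rpow_natCast ((8:ℝ) ^ r) (d+1), ← Real.rpow_natCast (8:ℝ) (d+1),
          ← Real.rpow_mul (by norm_num), ← Real.rpow_mul (by norm_num), mul_comm]
      have s3 : (2:ℝ) ≤ 2 ^ r := by
        calc (2:ℝ) = 2 ^ (1:ℝ) := (Real.rpow_one _).symm
          _ ≤ 2 ^ r := Real.rpow_le_rpow_of_exponent_le (by norm_num) hr
      have s4 : (0:ℝ) ≤ ((8:ℝ) ^ (d+1) : ℝ) ^ r := by positivity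
      have s5 : ((2:ℝ) * 8 ^ (d+1)) ^ r = (2:ℝ) ^ r * ((8:ℝ) ^ (d+1)) ^ r :=
        Real.mul_rpow (by norm_num) (by positivity)
      have s6 : ((2:ℝ) * 8 ^ (d+1)) ^ r ≤ ((19:ℝ) ^ (2*d-1)) ^ r := by
        apply Real.rpow_le_rpow (by positivity) _ (le_of_lt hr0)
        have := nat_budget hd2
        have hc : ((2 * 8 ^ (d+1) : ℕ):ℝ) ≤ ((19 ^ (2*d-1) : ℕ):ℝ) := by exact_mod_cast this
        push_cast at hc
        linarith
      have s7 : ((19:ℝ) ^ (2*d-1)) ^ r = ((19:ℝ) ^ r) ^ (2*d-1) := by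
        rw [← Real.rpow_natCast ((19:ℝ) ^ r) (2*d-1), ← Real.rpow_natCast (19:ℝ) (2*d-1),
          ← Real.rpow_mul (by norm_num), ← Real.rpow_mul (by norm_num), mul_comm]
      have s8 : ((19:ℝ) ^ r) ^ (2*d-1) ≤ ((N:ℝ)) ^ (2*d-1) :=
        pow_le_pow_left₀ (by positivity) hN19 _
      calc 2 * (Q:ℝ) ^ (d+1) ≤ 2 * ((8:ℝ) ^ r) ^ (d+1) := by linarith
        _ = 2 * ((8:ℝ) ^ (d+1)) ^ r := by rw [s2]
        _ ≤ (2:ℝ) ^ r * ((8:ℝ) ^ (d+1)) ^ r := by nlinarith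
        _ = ((2:ℝ) * 8 ^ (d+1)) ^ r := s5.symm
        _ ≤ ((19:ℝ) ^ (2*d-1)) ^ r := s6
        _ = ((19:ℝ) ^ r) ^ (2*d-1) := s7
        _ ≤ ((N:ℝ)) ^ (2*d-1) := s8
    have h2 : 2 * Q ^ (d+1) ≤ N ^ (2*d-1) := by exact_mod_cast hcast
    omega
  have hQd1pos : 0 < Q ^ (d+1) := Nat.pow_pos (by omega)
  have hggk : gg Q (d+1) + Q ^ (d+1) ≤ k := by
    have := gg_le_pow hQ2 (d+1)
    omega
  have hk0 : 0 < k := by omega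
  haveI : NeZero k := ⟨by omega⟩
  -- ### ring structure
  set mI : Fin k → ℕ := fun i => mIdx Q d i.1 with hmI_def
  set i0 : Fin k := ⟨0, hk0⟩ with hi0_def
  set iB : Fin k := ⟨k - 1, by omega⟩ with hiB_def
  have hiB : mI iB = d + 1 := by
    apply mIdx_eq_top_iff.2
    show gg Q (d+1) ≤ k - 1
    omega
  have hiT : mI i0 = 0 := by
    apply (mIdx_eq_iff hQ1 (Nat.zero_le d)).2
    constructor
    · simp [gg]
    · show (0:ℕ) < gg Q 1
      simp [gg]
  -- ### the path
  set X : ℝ → Fin k → ℝ := fun t i => cl (1 - t + off d (mI i)) with hX_def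
  have hoff0ge2 : (2:ℝ) ≤ off d 0 := by
    rw [off_zero, le_div_iff₀ hdr]
    linarith
  have hXsphere : ∀ t, supNorm (X t) = 1 := by
    intro t
    rcases le_total t 2 with ht | ht
    · apply supNorm_eq_one (fun i => abs_cl_le_one _) i0
      show |cl (1 - t + off d (mI i0))| = 1
      rw [hiT, cl_of_one_le _ (by linarith)]
      norm_num
    · apply supNorm_eq_one (fun i => abs_cl_le_one _) iB
      show |cl (1 - t + off d (mI iB))| = 1
      rw [hiB, off_top, cl_of_le_neg_one _ (by linarith)]
      norm_num
  have hclcont : Continuous cl := continuous_const.max (continuous_const.min continuous_id)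
  have hXcont : Continuous X := by
    apply continuous_pi
    intro i
    exact hclcont.comp (((continuous_const.sub continuous_id).add continuous_const))
  set c : ℝ → ℝ := fun t => F (X t) iB with hc_def
  have hccont : Continuous c := by
    have h1 : Continuous (F ∘ X) :=
      hFcont.comp_continuous hXcont (fun t => by
        show X t ∈ {x | supNorm x = 1}
        exact hXsphere t)
    exact (continuous_apply iB).comp h1
  set T : ℝ := 2 + off d 0 with hT_def
  have hX0 : X 0 = (fun _ => (1:ℝ)) := by
    funext i
    show cl (1 - 0 + off d (mI i)) = 1
    have := off_nonneg hd1 (mI i)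
    exact cl_of_one_le _ (by linarith)
  have hXT : X T = (fun _ => (-1:ℝ)) := by
    funext i
    show cl (1 - T + off d (mI i)) = -1
    have := off_le_off_zero hd1 (mI i)
    apply cl_of_le_neg_one
    rw [hT_def]
    linarith
  have hc0 : c 0 = cP := by
    show F (X 0) iB = cP
    rw [hX0]
    exact hFone iB
  have hcT : c T = -cP := by
    show F (X T) iB = -cP
    rw [hXT]
    exact hFmone iB
  have hmem : (0:ℝ) ∈ Set.uIcc (c 0) (c T) := by
    rw [hc0, hcT]
    rcases lt_or_gt_of_ne hcPne with h | h
    · exact Set.mem_uIcc.2 (Or.inl ⟨by linarith, by linarith⟩)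
    · exact Set.mem_uIcc.2 (Or.inr ⟨by linarith, by linarith⟩)
  obtain ⟨ts, _, hct⟩ := intermediate_value_uIcc hccont.continuousOn hmem
  -- ### the crossing configuration u
  set u : Fin k → ℝ := X ts with hu_def
  have hus : supNorm u = 1 := hXsphere ts
  have hFuB : ∀ i, mI i = d + 1 → F u i = 0 := by
    intro i hi
    have he : u i = u iB := by
      show cl (1 - ts + off d (mI i)) = cl (1 - ts + off d (mI iB))
      rw [hi, hiB]
    rw [hstep u hus i iB he]
    exact hct
  -- ### fibers
  set R : ℕ → Finset (Fin k) := fun m => univ.filter (fun i => mI i = m) with hR_def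
  have hRcard : ∀ m, m ≤ d → (R m).card = Q ^ m := by
    intro m hm
    have hEq : R m = univ.filter (fun i : Fin k => gg Q m ≤ i.1 ∧ i.1 < gg Q (m+1)) := by
      apply Finset.filter_congr
      intro i _
      exact mIdx_eq_iff hQ1 hm
    have hb : gg Q (m+1) ≤ k := by
      have h1 : gg Q (m+1) ≤ gg Q (d+1) := gg_mono hQ1 (by omega)
      omega
    rw [hEq, card_filter_Ico _ _ hb, gg_succ]
    omega
  have hRBcard : (R (d+1)).card = k - gg Q (d+1) := by
    have hEq : R (d+1) = univ.filter (fun i : Fin k => gg Q (d+1) ≤ i.1 ∧ i.1 < k) := by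
      apply Finset.filter_congr
      intro i _
      have hlt := i.isLt
      constructor
      · intro h
        exact ⟨mIdx_eq_top_iff.1 h, hlt⟩
      · intro h
        exact mIdx_eq_top_iff.2 h.1
    rw [hEq, card_filter_Ico _ _ le_rfl]
  have hRBge : Q ^ (d+1) ≤ (R (d+1)).card := by omega
  have hRne : ∀ m, m ≤ d → (R m).Nonempty := by
    intro m hm
    apply Finset.card_pos.mp
    rw [hRcard m hm]
    exact Nat.pow_pos (by omega)
  have hRdisj : ∀ m n : ℕ, m ≠ n → Disjoint (R m) (R n) := by
    intro m n hmn
    apply Finset.disjoint_left.2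
    intro i him hin
    simp only [hR_def, Finset.mem_filter] at him hin
    exact hmn (him.2 ▸ hin.2 ▸ rfl)
  -- ### the comparison configurations
  set Y : ℕ → Fin k → ℝ := fun q i => cl (1 - ts + noff d q (mI i)) with hY_def
  have hnoff0 : ∀ q, (2:ℝ) ≤ noff d q 0 := by
    intro q
    unfold noff
    split
    · next h =>
      rw [tgt_of_lt (by omega)]
      rw [Nat.cast_zero, sub_zero, mul_div_assoc, div_self (ne_of_gt hdr), mul_one]
    · split
      · next h2 => omega
      · rw [off_zero, le_div_iff₀ hdr]
        linarith
  have hYsphere : ∀ q, supNorm (Y q) = 1 := by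
    intro q
    rcases le_total ts 2 with ht | ht
    · apply supNorm_eq_one (fun i => abs_cl_le_one _) i0
      show |cl (1 - ts + noff d q (mI i0))| = 1
      have := hnoff0 q
      rw [hiT, cl_of_one_le _ (by linarith)]
      norm_num
    · apply supNorm_eq_one (fun i => abs_cl_le_one _) iB
      show |cl (1 - ts + noff d q (mI iB))| = 1
      rw [hiB, noff_B hd1, cl_of_le_neg_one _ (by linarith)]
      norm_num
  have hYdist : ∀ q, supNorm (u - Y q) ≤ 1 / (d:ℝ) := by
    intro q
    apply supNorm_le
    intro i
    have e : (u - Y q) i = cl (1 - ts + off d (mI i)) - cl (1 - ts + noff d q (mI i)) := rfl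
    rw [e]
    calc |cl (1 - ts + off d (mI i)) - cl (1 - ts + noff d q (mI i))|
        ≤ |(1 - ts + off d (mI i)) - (1 - ts + noff d q (mI i))| := cl_lipschitz _ _
      _ = |noff d q (mI i) - off d (mI i)| := by
          rw [show (1 - ts + off d (mI i)) - (1 - ts + noff d q (mI i))
            = -(noff d q (mI i) - off d (mI i)) by ring, abs_neg]
      _ ≤ 1 / d := abs_noff_sub_off hd1 q (mI i)
  -- ### sums
  have husum : ∑ i, |F u i| ^ r = 1 := lrNorm_eq_one_sum hr (hFmaps u hus)
  have hYsum : ∀ q, ∑ i, |F (Y q) i| ^ r = 1 :=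
    fun q => lrNorm_eq_one_sum hr (hFmaps _ (hYsphere q))
  -- squash bound
  have hsquash : ∀ q, (∑ i ∈ univ.filter (fun i => mI i ≤ d ∧ mI i % 2 = q), |F (Y q) i| ^ r)
      ≤ 1 / (1 + (Q:ℝ)) := by
    intro q
    have hQpos : (0:ℝ) < 1 + Q := by positivity
    set S : Finset ℕ := (range (d+1)).filter (fun m => m % 2 = q) with hS_def
    have hGbi : univ.filter (fun i => mI i ≤ d ∧ mI i % 2 = q) = S.biUnion R := by
      ext i
      simp only [Finset.mem_filter, Finset.mem_univ, true_and, Finset.mem_biUnion, hS_def,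
        Finset.mem_range, hR_def, Nat.lt_succ_iff]
      constructor
      · rintro ⟨h1, h2⟩
        exact ⟨mI i, ⟨h1, h2⟩, rfl⟩
      · rintro ⟨m, ⟨hm1, hm2⟩, hmi⟩
        rw [hmi]
        exact ⟨hm1, hm2⟩
    have hdisjS : (S : Set ℕ).PairwiseDisjoint R := by
      intro a _ b _ hab
      exact hRdisj a b hab
    have hper : ∀ m ∈ S, (1 + (Q:ℝ)) * ∑ i ∈ R m, |F (Y q) i| ^ r
        ≤ ∑ i ∈ R m ∪ R (m+1), |F (Y q) i| ^ r := by
      intro m hmS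
      have hmSd : m ≤ d ∧ m % 2 = q := by
        simpa [hS_def, Nat.lt_succ_iff] using hmS
      obtain ⟨hm, hq⟩ := hmSd
      obtain ⟨j0, hj0⟩ := hRne m hm
      have hmj0 : mI j0 = m := by
        simpa [hR_def] using hj0
      have hconst : ∀ i ∈ R m ∪ R (m+1), F (Y q) i = F (Y q) j0 := by
        intro i hi
        apply hstep (Y q) (hYsphere q)
        rcases Finset.mem_union.1 hi with h | h
        · have h1 : mI i = m := by simpa [hR_def] using h
          show cl (1 - ts + noff d q (mI i)) = cl (1 - ts + noff d q (mI j0))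
          rw [h1, hmj0]
        · have h1 : mI i = m + 1 := by simpa [hR_def] using h
          show cl (1 - ts + noff d q (mI i)) = cl (1 - ts + noff d q (mI j0))
          rw [h1, hmj0, noff_pair_right hm hq, noff_pair_left hm hq]
      have hdisj2 : Disjoint (R m) (R (m+1)) := hRdisj m (m+1) (by omega)
      have hcv0 : (0:ℝ) ≤ |F (Y q) j0| ^ r := Real.rpow_nonneg (abs_nonneg _) _
      have hsum_m : ∑ i ∈ R m, |F (Y q) i| ^ r = ((Q ^ m : ℕ):ℝ) * (|F (Y q) j0| ^ r) := by
        rw [Finset.sum_congr rfl (fun i hi => by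
          rw [hconst i (Finset.mem_union_left _ hi)]),
          Finset.sum_const, nsmul_eq_mul, hRcard m hm]
      have hsum_pair : ∑ i ∈ R m ∪ R (m+1), |F (Y q) i| ^ r
          = ((((R m).card + (R (m+1)).card : ℕ)):ℝ) * (|F (Y q) j0| ^ r) := by
        rw [Finset.sum_congr rfl (fun i hi => by rw [hconst i hi]), Finset.sum_const,
          nsmul_eq_mul, Finset.card_union_of_disjoint hdisj2]
      have hcard2 : (1 + Q) * Q ^ m ≤ (R m).card + (R (m+1)).card := by
        rcases eq_or_lt_of_le hm with he | hlt
        · subst he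
          have h1 : (R m).card = Q ^ m := hRcard m le_rfl
          have h2 : (1+Q) * Q ^ m = Q ^ m + Q ^ (m+1) := by ring
          omega
        · have h1 : (R m).card = Q ^ m := hRcard m hm
          have h2 : (R (m+1)).card = Q ^ (m+1) := hRcard (m+1) (by omega)
          have h3 : (1+Q) * Q ^ m = Q ^ m + Q ^ (m+1) := by ring
          omega
      rw [hsum_m, hsum_pair]
      calc (1 + (Q:ℝ)) * (((Q ^ m : ℕ):ℝ) * (|F (Y q) j0| ^ r))
          = (((1 + Q) * Q ^ m : ℕ):ℝ) * (|F (Y q) j0| ^ r) := by push_cast; ring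
        _ ≤ ((((R m).card + (R (m+1)).card : ℕ)):ℝ) * (|F (Y q) j0| ^ r) := by
            apply mul_le_mul_of_nonneg_right _ hcv0
            exact_mod_cast hcard2
    have hdisjP : (S : Set ℕ).PairwiseDisjoint (fun m => R m ∪ R (m+1)) := by
      intro a ha b hb hab
      simp only [hS_def, Finset.coe_filter, Set.mem_setOf_eq, Finset.mem_range] at ha hb
      apply Finset.disjoint_left.2
      intro i hia hib
      have hva : mI i = a ∨ mI i = a + 1 := by
        rcases Finset.mem_union.1 hia with h | h
        · exact Or.inl (by simpa [hR_def] using h)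
        · exact Or.inr (by simpa [hR_def] using h)
      have hvb : mI i = b ∨ mI i = b + 1 := by
        rcases Finset.mem_union.1 hib with h | h
        · exact Or.inl (by simpa [hR_def] using h)
        · exact Or.inr (by simpa [hR_def] using h)
      omega
    have hpairsum : ∑ m ∈ S, ∑ i ∈ R m ∪ R (m+1), |F (Y q) i| ^ r ≤ 1 := by
      rw [← hYsum q, ← Finset.sum_biUnion hdisjP]
      exact Finset.sum_le_sum_of_subset_of_nonneg (Finset.subset_univ _)
        (fun i _ _ => Real.rpow_nonneg (abs_nonneg _) _)
    rw [hGbi, Finset.sum_biUnion hdisjS, le_div_iff₀ hQpos]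
    calc (∑ m ∈ S, ∑ i ∈ R m, |F (Y q) i| ^ r) * (1 + (Q:ℝ))
        = ∑ m ∈ S, (1 + (Q:ℝ)) * ∑ i ∈ R m, |F (Y q) i| ^ r := by
          rw [Finset.sum_mul]
          exact Finset.sum_congr rfl (fun m _ => by ring)
      _ ≤ ∑ m ∈ S, ∑ i ∈ R m ∪ R (m+1), |F (Y q) i| ^ r := Finset.sum_le_sum hper
      _ ≤ 1 := hpairsum
  -- ### mass on B is 0
  have hMB : ∑ i ∈ univ.filter (fun i => ¬(mI i ≤ d)), |F u i| ^ r = 0 := by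
    apply Finset.sum_eq_zero
    intro i hi
    have h1 : ¬ (mI i ≤ d) := (Finset.mem_filter.1 hi).2
    have h3 : mI i = d + 1 := by
      have h2 := mIdx_le Q d i.1
      have h1' : ¬ mIdx Q d i.1 ≤ d := h1
      show mIdx Q d i.1 = d + 1
      omega
    rw [hFuB i h3, abs_zero, Real.zero_rpow hrne]
  -- ### split of mass
  have hsplit : (∑ i ∈ univ.filter (fun i => mI i ≤ d ∧ mI i % 2 = 0), |F u i| ^ r)
      + (∑ i ∈ univ.filter (fun i => mI i ≤ d ∧ mI i % 2 = 1), |F u i| ^ r) = 1 := by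
    have h1 : (∑ i ∈ univ.filter (fun i => mI i ≤ d), |F u i| ^ r) = 1 := by
      have h := Finset.sum_filter_add_sum_filter_not univ (fun i => mI i ≤ d)
        (fun i => |F u i| ^ r)
      rw [hMB] at h
      rw [husum] at h
      linarith
    have h2 : univ.filter (fun i => mI i ≤ d ∧ mI i % 2 = 0)
        = (univ.filter (fun i => mI i ≤ d)).filter (fun i => mI i % 2 = 0) := by
      rw [Finset.filter_filter]
    have h3 : univ.filter (fun i => mI i ≤ d ∧ mI i % 2 = 1)
        = (univ.filter (fun i => mI i ≤ d)).filter (fun i => ¬(mI i % 2 = 0)) := by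
      rw [Finset.filter_filter]
      apply Finset.filter_congr
      intro i _
      constructor
      · rintro ⟨ha, hb⟩; exact ⟨ha, by omega⟩
      · rintro ⟨ha, hb⟩; exact ⟨ha, by omega⟩
    rw [h2, h3, Finset.sum_filter_add_sum_filter_not _ _ _, h1]
  -- ### choose the heavy parity
  obtain ⟨q, hqA⟩ : ∃ q, 1/2 ≤ ∑ i ∈ univ.filter (fun i => mI i ≤ d ∧ mI i % 2 = q),
      |F u i| ^ r := by
    rcases le_total (1/2 : ℝ)
      (∑ i ∈ univ.filter (fun i => mI i ≤ d ∧ mI i % 2 = 0), |F u i| ^ r) with h | h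
    · exact ⟨0, h⟩
    · exact ⟨1, by linarith⟩
  set G : Finset (Fin k) := univ.filter (fun i => mI i ≤ d ∧ mI i % 2 = q) with hG_def
  set Gc : Finset (Fin k) := univ.filter (fun i => ¬(mI i ≤ d ∧ mI i % 2 = q)) with hGc_def
  set A : ℝ := ∑ i ∈ G, |F u i| ^ r with hA_def
  have hA0 : 0 ≤ A := Finset.sum_nonneg (fun i _ => Real.rpow_nonneg (abs_nonneg _) _)
  have hA1 : A ≤ 1 := by
    rw [hA_def, ← husum]
    exact Finset.sum_le_sum_of_subset_of_nonneg (Finset.subset_univ _)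
      (fun i _ _ => Real.rpow_nonneg (abs_nonneg _) _)
  have hGcu : ∑ i ∈ Gc, |F u i| ^ r = 1 - A := by
    have h := Finset.sum_filter_add_sum_filter_not univ (fun i => mI i ≤ d ∧ mI i % 2 = q)
      (fun i => |F u i| ^ r)
    rw [husum] at h
    rw [hGc_def]
    rw [hG_def] at hA_def
    linarith [hA_def ▸ h]
  have hGcY : 1 - 1/(1 + (Q:ℝ)) ≤ ∑ i ∈ Gc, |F (Y q) i| ^ r := by
    have h := Finset.sum_filter_add_sum_filter_not univ (fun i => mI i ≤ d ∧ mI i % 2 = q)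
      (fun i => |F (Y q) i| ^ r)
    rw [hYsum q] at h
    have hs := hsquash q
    linarith
  -- ### the ω-application
  set β : ℝ := ∑ i ∈ G, |F u i - F (Y q) i| ^ r with hβ_def
  set βc : ℝ := ∑ i ∈ Gc, |F u i - F (Y q) i| ^ r with hβc_def
  have hβ0 : 0 ≤ β := Finset.sum_nonneg (fun i _ => Real.rpow_nonneg (abs_nonneg _) _)
  have hβc0 : 0 ≤ βc := Finset.sum_nonneg (fun i _ => Real.rpow_nonneg (abs_nonneg _) _)
  have hlt : β + βc < (1/2) ^ r := by
    have h := hcon u (Y q) hus (hYsphere q) (hYdist q)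
    have h2 := lrNorm_lt_sum hr h
    have h3 : ∑ i, |(F u - F (Y q)) i| ^ r = ∑ i, |F u i - F (Y q) i| ^ r := by
      apply Finset.sum_congr rfl
      intro i _
      rw [Pi.sub_apply]
    rw [h3] at h2
    have h4 : β + βc = ∑ i, |F u i - F (Y q) i| ^ r := by
      rw [hβ_def, hβc_def]
      exact Finset.sum_filter_add_sum_filter_not _ _ _
    rw [h4]
    exact h2
  -- ### endgame
  have hQpos : (0:ℝ) < 1 + Q := by positivity
  set τ : ℝ := (1/(1 + (Q:ℝ))) ^ (1/r) with hτ_def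
  have hτ0 : 0 < τ := Real.rpow_pos_of_pos (by positivity) _
  have hτr : τ ^ r = 1/(1 + (Q:ℝ)) := by
    rw [hτ_def, ← Real.rpow_mul (by positivity), one_div r, inv_mul_cancel₀ hrne, Real.rpow_one]
  have hτ7 : τ ≤ 1/7 := by
    have h7Q : (7:ℝ) ^ r ≤ 1 + Q := by linarith
    have h1 : (1:ℝ)/(1 + Q) ≤ (1/7:ℝ) ^ r := by
      rw [Real.div_rpow (by norm_num) (by norm_num), Real.one_rpow]
      exact one_div_le_one_div_of_le (by positivity) h7Q
    calc τ = (1/(1 + (Q:ℝ))) ^ (1/r) := rfl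
      _ ≤ ((1/7:ℝ) ^ r) ^ (1/r) := Real.rpow_le_rpow (by positivity) h1 (by positivity)
      _ = 1/7 := by
          rw [← Real.rpow_mul (by norm_num), mul_one_div, div_self hrne, Real.rpow_one]
  set α : ℝ := A ^ (1/r) with hα_def
  have hα0 : 0 ≤ α := Real.rpow_nonneg hA0 _
  have hαr : α ^ r = A := by
    rw [hα_def, ← Real.rpow_mul hA0, one_div, inv_mul_cancel₀ hrne, Real.rpow_one]
  have hmh1 : α ≤ β ^ (1/r) + τ := by
    have hm := minkowski_sub hr G (F u) (F (Y q))
    have h2 : (∑ i ∈ G, |F (Y q) i| ^ r) ^ (1/r) ≤ τ := by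
      rw [hτ_def]
      apply Real.rpow_le_rpow (Finset.sum_nonneg (fun i _ => Real.rpow_nonneg (abs_nonneg _) _))
        (hsquash q) (by positivity)
    calc α = (∑ i ∈ G, |F u i| ^ r) ^ (1/r) := by rw [hα_def, hA_def]
      _ ≤ (∑ i ∈ G, |F u i - F (Y q) i| ^ r) ^ (1/r)
          + (∑ i ∈ G, |F (Y q) i| ^ r) ^ (1/r) := hm
      _ ≤ β ^ (1/r) + τ := by
          rw [hβ_def]
          linarith
  have hmh2 : (1 - τ ^ r) ^ (1/r) ≤ βc ^ (1/r) + (1 - α ^ r) ^ (1/r) := by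
    rw [hτr, hαr]
    have hm := minkowski_sub hr Gc (F (Y q)) (F u)
    have e1 : ∑ i ∈ Gc, |F (Y q) i - F u i| ^ r = βc := by
      rw [hβc_def]
      apply Finset.sum_congr rfl
      intro i _
      rw [abs_sub_comm]
    have e2 : ∑ i ∈ Gc, |F u i| ^ r = 1 - A := hGcu
    rw [e1, e2] at hm
    have hQfrac : (0:ℝ) ≤ 1 - 1/(1 + (Q:ℝ)) := by
      have : (1:ℝ)/(1 + Q) ≤ 1 := by
        rw [div_le_one hQpos]
        linarith
      linarith
    calc (1 - 1/(1 + (Q:ℝ))) ^ (1/r)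
        ≤ (∑ i ∈ Gc, |F (Y q) i| ^ r) ^ (1/r) :=
          Real.rpow_le_rpow hQfrac hGcY (by positivity)
      _ ≤ βc ^ (1/r) + (1 - A) ^ (1/r) := hm
  have hαrA : 1/2 ≤ α ^ r := by
    rw [hαr, hA_def, hG_def]
    exact hqA
  have hαrA1 : α ^ r ≤ 1 := by rw [hαr]; exact hA1
  exact numeric_endgame hr hτ0 hτ7 hα0 hαrA hαrA1 hβ0 hβc0 hmh1 hmh2 hlt
/-- Theorem 5.2 of the paper: for `d ≥ 1`, `1 ≤ r < ∞`,
`k ≥ ⌈19^r⌉^(2d-1) + 1`, and any step preserving continuous map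
`F : S_{ℓ∞^k} → S_{ℓ_r^k}` with `F(1,…,1) ≠ F(-1,…,-1)`, there are `x, y` with
`‖x - y‖_∞ ≤ 1/d` and `‖F x - F y‖_r ≥ 1/2`. -/
theorem stmt_15 (d : ℕ) (hd : 1 ≤ d) (r : ℝ) (hr : 1 ≤ r)
    (k : ℕ) (hk : (⌈(19 : ℝ) ^ r⌉₊) ^ (2 * d - 1) + 1 ≤ k)
    (F : (Fin k → ℝ) → (Fin k → ℝ))
    (hFmaps : ∀ x, supNorm x = 1 → lrNorm r (F x) = 1)
    (hFcont : ContinuousOn F {x | supNorm x = 1})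
    (hstep : ∀ x, supNorm x = 1 → ∀ i j, x i = x j → F x i = F x j)
    (hne : F (fun _ => (1 : ℝ)) ≠ F (fun _ => (-1 : ℝ))) :
    ∃ x y : Fin k → ℝ, supNorm x = 1 ∧ supNorm y = 1 ∧
      supNorm (x - y) ≤ 1 / (d : ℝ) ∧ 1 / 2 ≤ lrNorm r (F x - F y) := by
  by_contra hcon
  push_neg at hcon
  -- basic facts
  have hr0 : (0:ℝ) < r := lt_of_lt_of_le one_pos hr
  have hrne : r ≠ 0 := ne_of_gt hr0
  have hk0 : 0 < k := by
    have := Nat.one_le_iff_ne_zero.mp (le_trans (Nat.le_add_left 1 _) hk)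
    omega
  haveI : NeZero k := ⟨by omega⟩
  have hN19 : 19 ≤ ⌈(19 : ℝ) ^ r⌉₊ := by
    have h1 : (19:ℝ) ≤ (19:ℝ) ^ r := by
      calc (19:ℝ) = 19 ^ (1:ℝ) := (Real.rpow_one _).symm
        _ ≤ 19 ^ r := Real.rpow_le_rpow_of_exponent_le (by norm_num) hr
    calc (19:ℕ) = ⌈(19:ℝ)⌉₊ := by norm_num
      _ ≤ ⌈(19:ℝ) ^ r⌉₊ := Nat.ceil_le_ceil h1
  -- the constant vectors
  set one : Fin k → ℝ := (fun _ => (1:ℝ)) with hone_def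
  set mone : Fin k → ℝ := (fun _ => (-1:ℝ)) with hmone_def
  set i0 : Fin k := ⟨0, hk0⟩ with hi0_def
  have hone_s : supNorm one = 1 := supNorm_eq_one (fun i => by simp [hone_def]) i0
    (by simp [hone_def])
  have hmone_s : supNorm mone = 1 := supNorm_eq_one (fun i => by simp [hmone_def]) i0
    (by simp [hmone_def])
  set cP := F one i0 with hcP_def
  set cM := F mone i0 with hcM_def
  have hFone : ∀ i, F one i = cP := fun i => hstep one hone_s i i0 rfl
  have hFmone : ∀ i, F mone i = cM := fun i => hstep mone hmone_s i i0 rfl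
  have hsum1 : (k:ℝ) * |cP| ^ r = 1 := by
    have h := lrNorm_eq_one_sum hr (hFmaps one hone_s)
    calc (k:ℝ) * |cP| ^ r = ∑ _i : Fin k, |cP| ^ r := by
          rw [Finset.sum_const, card_univ, Fintype.card_fin, nsmul_eq_mul]
      _ = ∑ i, |F one i| ^ r := by
          exact Finset.sum_congr rfl fun i _ => by rw [hFone i]
      _ = 1 := h
  have hsum2 : (k:ℝ) * |cM| ^ r = 1 := by
    have h := lrNorm_eq_one_sum hr (hFmaps mone hmone_s)
    calc (k:ℝ) * |cM| ^ r = ∑ _i : Fin k, |cM| ^ r := by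
          rw [Finset.sum_const, card_univ, Fintype.card_fin, nsmul_eq_mul]
      _ = ∑ i, |F mone i| ^ r := by
          exact Finset.sum_congr rfl fun i _ => by rw [hFmone i]
      _ = 1 := h
  have hcPne : cP ≠ 0 := by
    intro h
    rw [h] at hsum1
    simp [Real.zero_rpow hrne] at hsum1
  have habs : |cP| = |cM| := by
    have h1 : |cP| ^ r = |cM| ^ r := by
      have hkpos : (0:ℝ) < k := by exact_mod_cast hk0
      field_simp at hsum1 hsum2
      nlinarith [hsum1, hsum2]
    by_contra hne'
    rcases lt_or_gt_of_ne hne' with hlt | hlt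
    · have := Real.rpow_lt_rpow (abs_nonneg _) hlt hr0
      linarith
    · have := Real.rpow_lt_rpow (abs_nonneg _) hlt hr0
      linarith
  have hcM : cM = -cP := by
    rcases abs_eq_abs.1 habs.symm with h | h
    · exfalso
      apply hne
      funext i
      show F one i = F mone i
      rw [hFone i, hFmone i, h]
    · exact h
  -- the gap between the images of the two corners
  have hgap : lrNorm r (F one - F mone) = 2 := by
    have hterm : ∀ i, |(F one - F mone) i| ^ r = 2 ^ r * |cP| ^ r := by
      intro i
      have : (F one - F mone) i = 2 * cP := by
        simp [Pi.sub_apply, hFone i, hFmone i, hcM]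
        ring
      rw [this, abs_mul, Real.mul_rpow (abs_nonneg _) (abs_nonneg _)]
      norm_num
    unfold lrNorm
    rw [Finset.sum_congr rfl fun i _ => hterm i, Finset.sum_const, card_univ,
      Fintype.card_fin, nsmul_eq_mul]
    rw [show (k:ℝ) * (2 ^ r * |cP| ^ r) = 2 ^ r * ((k:ℝ) * |cP| ^ r) by ring, hsum1, mul_one,
      ← Real.rpow_mul (by norm_num), mul_one_div, div_self hrne, Real.rpow_one]
  -- split on d
  rcases eq_or_lt_of_le hd with hd1 | hd2
  · -- case d = 1 : three-step chain
    have hd1' : d = 1 := hd1.symm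
    subst hd1'
    have hk2 : 2 ≤ k := by
      have : 19 + 1 ≤ k := by
        calc 19 + 1 ≤ ⌈(19 : ℝ) ^ r⌉₊ ^ (2 * 1 - 1) + 1 := by
              simpa using Nat.add_le_add_right hN19 1
          _ ≤ k := hk
      omega
    set i1 : Fin k := ⟨1, by omega⟩ with hi1_def
    have hi01 : i1 ≠ i0 := by
      simp [hi0_def, hi1_def, Fin.ext_iff]
    set p1 : Fin k → ℝ := fun i => if i = i0 then 1 else 0 with hp1_def
    set p2 : Fin k → ℝ := fun i => if i = i0 then 0 else -1 with hp2_def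
    have hp1s : supNorm p1 = 1 := by
      apply supNorm_eq_one (fun i => ?_) i0 (by simp [hp1_def])
      simp only [hp1_def]
      split <;> norm_num
    have hp2s : supNorm p2 = 1 := by
      apply supNorm_eq_one (fun i => ?_) i1 (by simp [hp2_def, hi01])
      simp only [hp2_def]
      split <;> norm_num
    have hd01 : supNorm (one - p1) ≤ 1 / ((1:ℕ):ℝ) := by
      apply supNorm_le
      intro i
      simp only [Pi.sub_apply, hone_def, hp1_def, Nat.cast_one]
      split <;> norm_num
    have hd12 : supNorm (p1 - p2) ≤ 1 / ((1:ℕ):ℝ) := by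
      apply supNorm_le
      intro i
      simp only [Pi.sub_apply, hp1_def, hp2_def, Nat.cast_one]
      split <;> norm_num
    have hd23 : supNorm (p2 - mone) ≤ 1 / ((1:ℕ):ℝ) := by
      apply supNorm_le
      intro i
      simp only [Pi.sub_apply, hp2_def, hmone_def, Nat.cast_one]
      split <;> norm_num
    have h1 := hcon one p1 hone_s hp1s hd01
    have h2 := hcon p1 p2 hp1s hp2s hd12
    have h3 := hcon p2 mone hp2s hmone_s hd23
    have htri : lrNorm r (F one - F mone) ≤
        lrNorm r (F one - F p1) + (lrNorm r (F p1 - F p2) + lrNorm r (F p2 - F mone)) := by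
      have e1 : F one - F mone = (F one - F p1) + ((F p1 - F p2) + (F p2 - F mone)) := by
        funext i; simp only [Pi.sub_apply, Pi.add_apply]; ring
      rw [e1]
      calc lrNorm r ((F one - F p1) + ((F p1 - F p2) + (F p2 - F mone)))
          ≤ lrNorm r (F one - F p1) + lrNorm r ((F p1 - F p2) + (F p2 - F mone)) :=
            lrNorm_triangle hr _ _
        _ ≤ lrNorm r (F one - F p1) + (lrNorm r (F p1 - F p2) + lrNorm r (F p2 - F mone)) := by
            have := lrNorm_triangle hr (F p1 - F p2) (F p2 - F mone)
            linarith
    rw [hgap] at htri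
    linarith
  · -- case 2 ≤ d
    exact case_d_ge_two d k hd2 r hr hk F hFmaps hFcont hstep hcon cP hcPne hFone
      (fun i => hcM ▸ hFmone i)
end
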